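/- arXiv:0804.0657 — 7 statements merged into one kernel-verified Lean document; each statement's English description precedes it below -/
import Mathlib

section
/- Let ℓ₂ and ℓ₄ be lines in ℝ² that are not perpendicular to each other. For each z₁ ∈ ℝ², let (z₂(z₁), z₄(z₁)) be the unique pair with z₂(z₁) ∈ ℓ₂, z₄(z₁) ∈ ℓ₄ and z₄(z₁) − z₁ equal to the clockwise rotation by π/2 of z₂(z₁) − z₁. Then the map F : ℝ² → ℝ² given by F(z₁) = z₂(z₁) + z₄(z₁) − z₁ (sending z₁ to the fourth vertex of the square determined by z₁, z₂(z₁), z₄(z₁)) is an affine map; in particular, the image under F of any line ℓ₁ ⊆ ℝ² is either a line or a single point. -/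
open scoped RealInnerProductSpace

noncomputable section

/-- The Euclidean plane. -/
abbrev Pt := EuclideanSpace ℝ (Fin 2)

/-- Counterclockwise rotation of a vector by `π/2`: `(x, y) ↦ (-y, x)`. -/
def rotCCW (w : Pt) : Pt := (WithLp.equiv 2 (Fin 2 → ℝ)).symm ![-w 1, w 0]

/-- Clockwise rotation of a vector by `π/2`: `(x, y) ↦ (y, -x)`. -/
def rotCW (w : Pt) : Pt := (WithLp.equiv 2 (Fin 2 → ℝ)).symm ![w 1, -w 0]

/-- The line through `a` with direction `d` (a one-dimensional affine subspace
when `d ≠ 0`). -/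
def lineThrough (a d : Pt) : Set Pt := {p | ∃ t : ℝ, p = a + t • d}

/-- An explicit linear map on the plane given by a 2×2 matrix of coefficients. -/
def mk2 (α β γ δ : ℝ) : Pt →ₗ[ℝ] Pt where
  toFun z := (WithLp.equiv 2 (Fin 2 → ℝ)).symm ![α * z 0 + β * z 1, γ * z 0 + δ * z 1]
  map_add' x y := by
    ext i
    fin_cases i <;> simp [WithLp.equiv_symm_apply, WithLp.ofLp_toLp, PiLp.toLp_apply] <;> ring
  map_smul' r x := by
    ext i
    fin_cases i <;> simp [WithLp.equiv_symm_apply, WithLp.ofLp_toLp, PiLp.toLp_apply] <;> ring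

/-- Given two non-perpendicular lines `ℓ₂`, `ℓ₄`, the map sending `z₁` to the
fourth vertex `z₂ + z₄ - z₁` of the square determined by the unique pair
`(z₂, z₄) ∈ ℓ₂ × ℓ₄` with `z₄ - z₁` the clockwise `π/2`-rotation of `z₂ - z₁`
is affine; in particular the image of any line is a line or a single point. -/
theorem fourth_vertex_map_affine (a₂ d₂ a₄ d₄ : Pt)
    (h₂ : d₂ ≠ 0) (h₄ : d₄ ≠ 0) (hnperp : ⟪d₂, d₄⟫ ≠ 0) (F : Pt → Pt)
    (hF : ∀ z₁ : Pt, ∃ z₂ ∈ lineThrough a₂ d₂, ∃ z₄ ∈ lineThrough a₄ d₄,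
      z₄ - z₁ = rotCW (z₂ - z₁) ∧ F z₁ = z₂ + z₄ - z₁) :
    (∃ (L : Pt →ₗ[ℝ] Pt) (c : Pt), ∀ x : Pt, F x = L x + c) ∧
    ∀ a₁ d₁ : Pt, d₁ ≠ 0 →
      (∃ b e : Pt, e ≠ 0 ∧ F '' lineThrough a₁ d₁ = lineThrough b e) ∨
      (∃ p : Pt, F '' lineThrough a₁ d₁ = {p}) := by
  have hc : d₂ 0 * d₄ 0 + d₂ 1 * d₄ 1 ≠ 0 := by
    simpa [PiLp.inner_apply, RCLike.inner_apply, Fin.sum_univ_two, mul_comm] using hnperp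
  set c : ℝ := d₂ 0 * d₄ 0 + d₂ 1 * d₄ 1 with hcdef
  -- explicit formula for F
  have key : ∀ z : Pt,
      F z 0 = a₂ 0 + a₂ 1 - z 1 +
        (((a₄ 0 - z 0) * d₄ 1 - (a₄ 1 - z 1) * d₄ 0 - (a₂ 1 - z 1) * d₄ 1
          - (a₂ 0 - z 0) * d₄ 0) / c) * (d₂ 0 + d₂ 1) ∧
      F z 1 = a₂ 1 - a₂ 0 + z 0 +
        (((a₄ 0 - z 0) * d₄ 1 - (a₄ 1 - z 1) * d₄ 0 - (a₂ 1 - z 1) * d₄ 1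
          - (a₂ 0 - z 0) * d₄ 0) / c) * (d₂ 1 - d₂ 0) := by
    intro z
    obtain ⟨z₂, ⟨t, ht⟩, z₄, ⟨s, hs⟩, heq, hFz⟩ := hF z
    have h20 : z₂ 0 = a₂ 0 + t * d₂ 0 := by rw [ht]; simp
    have h21 : z₂ 1 = a₂ 1 + t * d₂ 1 := by rw [ht]; simp
    have h40 : z₄ 0 = a₄ 0 + s * d₄ 0 := by rw [hs]; simp
    have h41 : z₄ 1 = a₄ 1 + s * d₄ 1 := by rw [hs]; simp
    have e0 : z₄ 0 - z 0 = z₂ 1 - z 1 := by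
      have := congrFun (congrArg WithLp.ofLp heq) 0
      simpa [rotCW] using this
    have e1 : z₄ 1 - z 1 = -(z₂ 0 - z 0) := by
      have := congrFun (congrArg WithLp.ofLp heq) 1
      simpa [rotCW] using this
    rw [h21] at e0
    rw [h20] at e1
    rw [h40] at e0
    rw [h41] at e1
    have htval : t = ((a₄ 0 - z 0) * d₄ 1 - (a₄ 1 - z 1) * d₄ 0 - (a₂ 1 - z 1) * d₄ 1
          - (a₂ 0 - z 0) * d₄ 0) / c := by
      field_simp [hcdef]
      linear_combination e1 * d₄ 0 - e0 * d₄ 1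
    have hf0 : F z 0 = z₂ 0 + z₄ 0 - z 0 := by rw [hFz]; simp
    have hf1 : F z 1 = z₂ 1 + z₄ 1 - z 1 := by rw [hFz]; simp
    constructor
    · rw [hf0, h20, h40, ← htval]
      linear_combination e0
    · rw [hf1, h21, h41, ← htval]
      linear_combination e1
  -- the affine structure
  set L : Pt →ₗ[ℝ] Pt :=
    mk2 ((d₄ 0 - d₄ 1) * (d₂ 0 + d₂ 1) / c)
        ((d₄ 0 + d₄ 1) * (d₂ 0 + d₂ 1) / c - 1)
        (1 + (d₄ 0 - d₄ 1) * (d₂ 1 - d₂ 0) / c)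
        ((d₄ 0 + d₄ 1) * (d₂ 1 - d₂ 0) / c) with hLdef
  set c₀ : Pt := (WithLp.equiv 2 (Fin 2 → ℝ)).symm
      ![a₂ 0 + a₂ 1 + ((a₄ 0 * d₄ 1 - a₄ 1 * d₄ 0 - a₂ 1 * d₄ 1 - a₂ 0 * d₄ 0) / c)
          * (d₂ 0 + d₂ 1),
        a₂ 1 - a₂ 0 + ((a₄ 0 * d₄ 1 - a₄ 1 * d₄ 0 - a₂ 1 * d₄ 1 - a₂ 0 * d₄ 0) / c)
          * (d₂ 1 - d₂ 0)] with hc₀def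
  have hAff : ∀ x : Pt, F x = L x + c₀ := by
    intro x
    ext i
    fin_cases i
    · have := (key x).1
      rw [show ((⟨0, by norm_num⟩ : Fin 2)) = (0 : Fin 2) from rfl]
      rw [this]
      simp only [hLdef, hc₀def, mk2, LinearMap.coe_mk, AddHom.coe_mk, PiLp.add_apply,
        WithLp.equiv_symm_apply, WithLp.ofLp_toLp, PiLp.toLp_apply, Matrix.cons_val_zero]
      field_simp
      ring
    · have := (key x).2
      rw [show ((⟨1, by norm_num⟩ : Fin 2)) = (1 : Fin 2) from rfl]
      rw [this]
      simp only [hLdef, hc₀def, mk2, LinearMap.coe_mk, AddHom.coe_mk, PiLp.add_apply,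
        WithLp.equiv_symm_apply, WithLp.ofLp_toLp, PiLp.toLp_apply, Matrix.cons_val_one, Matrix.head_cons, Matrix.cons_val_zero]
      field_simp
      ring
  refine ⟨⟨L, c₀, hAff⟩, ?_⟩
  intro a₁ d₁ hd₁
  by_cases hLd : L d₁ = 0
  · right
    refine ⟨F a₁, ?_⟩
    ext p
    constructor
    · rintro ⟨q, ⟨u, rfl⟩, rfl⟩
      simp only [Set.mem_singleton_iff, hAff, map_add, map_smul, hLd, smul_zero, add_zero]
    · rintro rfl
      exact ⟨a₁, ⟨0, by simp⟩, rfl⟩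
  · left
    refine ⟨F a₁, L d₁, hLd, ?_⟩
    ext p
    constructor
    · rintro ⟨q, ⟨u, rfl⟩, rfl⟩
      refine ⟨u, ?_⟩
      rw [hAff, hAff, map_add, map_smul]
      module
    · rintro ⟨u, rfl⟩
      refine ⟨a₁ + u • d₁, ⟨u, rfl⟩, ?_⟩
      rw [hAff, hAff, map_add, map_smul]
      module
end
end

section
/- Let T ⊂ ℝ² be the boundary of a triangle with vertices p, q, r such that the angle at p is a right angle (i.e., ⟪q − p, r − p⟫ = 0 and p, q, r are not collinear). Then there are exactly two four-element subsets of T that are the vertex sets of a square; that is, T has exactly two inscribed squares. -/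
open scoped RealInnerProductSpace

noncomputable section

/-- Four distinct points of `P` forming the vertices of a (nondegenerate) square:
`a₂ - a₁ = a₃ - a₄` and `a₃ - a₂` is the rotation of `a₂ - a₁` by `π/2`. -/
def InscribedSquare (P : Set Pt) (a₁ a₂ a₃ a₄ : Pt) : Prop :=
  a₁ ∈ P ∧ a₂ ∈ P ∧ a₃ ∈ P ∧ a₄ ∈ P ∧
  a₂ - a₁ = a₃ - a₄ ∧ a₃ - a₂ = rotCCW (a₂ - a₁) ∧
  a₁ ≠ a₂ ∧ a₁ ≠ a₃ ∧ a₁ ≠ a₄ ∧ a₂ ≠ a₃ ∧ a₂ ≠ a₄ ∧ a₃ ≠ a₄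

namespace RTSq

def OnT (a b x y : ℝ) : Prop :=
  (y = 0 ∧ 0 ≤ x ∧ x ≤ a) ∨ (b*x + a*y = a*b ∧ 0 ≤ x ∧ x ≤ a) ∨ (x = 0 ∧ 0 ≤ y ∧ y ≤ b)

lemma onT_bounds {a b x y : ℝ} (ha : 0 < a) (hb : 0 < b) (h : OnT a b x y) :
    0 ≤ x ∧ 0 ≤ y ∧ b*x + a*y ≤ a*b := by
  rcases h with ⟨h1,h2,h3⟩|⟨h1,h2,h3⟩|⟨h1,h2,h3⟩
  · exact ⟨h2, le_of_eq h1.symm, by nlinarith⟩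
  · exact ⟨h2, by nlinarith, le_of_eq h1⟩
  · exact ⟨le_of_eq h1.symm, h2, by nlinarith⟩

def S1 (a b : ℝ) : Set (ℝ × ℝ) :=
  {(0,0), (a*b/(a+b), 0), (a*b/(a+b), a*b/(a+b)), (0, a*b/(a+b))}

def S2 (a b : ℝ) : Set (ℝ × ℝ) :=
  {(a*b*(a+b)/(a^2+a*b+b^2), a^2*b/(a^2+a*b+b^2)),
   (a*b^2/(a^2+a*b+b^2), a*b*(a+b)/(a^2+a*b+b^2)),
   (0, a*b^2/(a^2+a*b+b^2)),
   (a^2*b/(a^2+a*b+b^2), 0)}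

def SqData (a b x1 y1 x2 y2 x3 y3 x4 y4 p s : ℝ) : Prop :=
  0 < a ∧ 0 < b ∧ x2 = x1 + p ∧ y2 = y1 + s ∧ x3 = x2 - s ∧ y3 = y2 + p ∧
  x4 = x1 - s ∧ y4 = y1 + p ∧ ¬(p = 0 ∧ s = 0) ∧
  OnT a b x1 y1 ∧ OnT a b x2 y2 ∧ OnT a b x3 y3 ∧ OnT a b x4 y4

lemma sqData_rot {a b x1 y1 x2 y2 x3 y3 x4 y4 p s : ℝ}
    (h : SqData a b x1 y1 x2 y2 x3 y3 x4 y4 p s) :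
    SqData a b x2 y2 x3 y3 x4 y4 x1 y1 (-s) p := by
  obtain ⟨ha, hb, e2x, e2y, e3x, e3y, e4x, e4y, hps, h1, h2, h3, h4⟩ := h
  refine ⟨ha, hb, by linarith, by linarith, by linarith, by linarith, by linarith,
    by linarith, ?_, h2, h3, h4, h1⟩
  rintro ⟨hs, hp⟩
  exact hps ⟨hp, by linarith⟩

lemma setrot (A B C D : ℝ × ℝ) : ({B, C, D, A} : Set (ℝ × ℝ)) = {A, B, C, D} := by
  ext z; simp only [Set.mem_insert_iff, Set.mem_singleton_iff]; tauto

/-- v1, v2 both on the x-axis: the square is the corner square. -/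
lemma base_x {a b x1 y1 x2 y2 x3 y3 x4 y4 p s : ℝ}
    (h : SqData a b x1 y1 x2 y2 x3 y3 x4 y4 p s) (l1 : y1 = 0) (l2 : y2 = 0) :
    ({(x1,y1),(x2,y2),(x3,y3),(x4,y4)} : Set (ℝ×ℝ)) = S1 a b ∨
    ({(x1,y1),(x2,y2),(x3,y3),(x4,y4)} : Set (ℝ×ℝ)) = S2 a b := by
  obtain ⟨ha, hb, e2x, e2y, e3x, e3y, e4x, e4y, hps, h1, h2, h3, h4⟩ := h
  have hs : s = 0 := by linarith
  obtain ⟨hx1, -, -⟩ := onT_bounds ha hb h1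
  obtain ⟨hx3, hy3, -⟩ := onT_bounds ha hb h3
  have hp : 0 < p := by
    rcases lt_trichotomy p 0 with hp | hp | hp
    · linarith
    · exact absurd ⟨hp, hs⟩ hps
    · exact hp
  rcases h3 with ⟨m3, -, -⟩ | ⟨m3, -, -⟩ | ⟨m3, -, -⟩ <;>
    rcases h4 with ⟨m4, -, -⟩ | ⟨m4, -, -⟩ | ⟨m4, -, -⟩
  · exfalso; nlinarith
  · exfalso; nlinarith
  · exfalso; nlinarith
  · exfalso; nlinarith  -- both on hyp
  · exfalso; nlinarith  -- y4 = 0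
  · -- v3 on hyp, v4 on y-axis : corner square
    left
    have habpos : (0:ℝ) < a + b := by linarith
    have hpm : p = a*b/(a+b) := by
      rw [eq_div_iff (ne_of_gt habpos)]; nlinarith
    have k1 : x1 = 0 := by linarith
    have k2 : x2 = a*b/(a+b) := by rw [← hpm]; linarith
    have k3 : x3 = a*b/(a+b) := by rw [← hpm]; linarith
    have k4 : y3 = a*b/(a+b) := by rw [← hpm]; linarith
    have k5 : x4 = 0 := by linarith
    have k6 : y4 = a*b/(a+b) := by rw [← hpm]; linarith
    rw [k1, l1, k2, l2, k3, k4, k5, k6]; rfl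
  · exfalso; nlinarith  -- x3 = 0, v4 hyp
  · exfalso; nlinarith
  · exfalso; nlinarith  -- x3 = x4 = 0

/-- v1, v2 both on the y-axis: the square is the corner square. -/
lemma base_y {a b x1 y1 x2 y2 x3 y3 x4 y4 p s : ℝ}
    (h : SqData a b x1 y1 x2 y2 x3 y3 x4 y4 p s) (l1 : x1 = 0) (l2 : x2 = 0) :
    ({(x1,y1),(x2,y2),(x3,y3),(x4,y4)} : Set (ℝ×ℝ)) = S1 a b ∨
    ({(x1,y1),(x2,y2),(x3,y3),(x4,y4)} : Set (ℝ×ℝ)) = S2 a b := by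
  obtain ⟨ha, hb, e2x, e2y, e3x, e3y, e4x, e4y, hps, h1, h2, h3, h4⟩ := h
  have hp : p = 0 := by linarith
  obtain ⟨-, hy1, -⟩ := onT_bounds ha hb h1
  obtain ⟨hx3, hy3, -⟩ := onT_bounds ha hb h3
  obtain ⟨hx4, hy4, -⟩ := onT_bounds ha hb h4
  have hsn : s < 0 := by
    rcases lt_trichotomy s 0 with h' | h' | h'
    · exact h'
    · exact absurd ⟨hp, h'⟩ hps
    · linarith
  rcases h3 with ⟨m3, -, -⟩ | ⟨m3, -, -⟩ | ⟨m3, -, -⟩ <;>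
    rcases h4 with ⟨m4, -, -⟩ | ⟨m4, -, -⟩ | ⟨m4, -, -⟩
  · exfalso; nlinarith
  · -- v3 on x-axis, v4 on hyp : corner square
    left
    have habpos : (0:ℝ) < a + b := by linarith
    have hms : s = -(a*b/(a+b)) := by
      rw [eq_comm, neg_eq_iff_eq_neg, div_eq_iff (ne_of_gt habpos)]; nlinarith
    have k1 : y1 = a*b/(a+b) := by rw [← neg_eq_iff_eq_neg] at hms; rw [← hms]; linarith
    have k2 : y2 = 0 := by linarith
    have k3 : x3 = a*b/(a+b) := by rw [← neg_eq_iff_eq_neg] at hms; rw [← hms]; linarith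
    have k4 : x4 = a*b/(a+b) := by rw [← neg_eq_iff_eq_neg] at hms; rw [← hms]; linarith
    have k5 : y4 = a*b/(a+b) := by rw [← neg_eq_iff_eq_neg] at hms; rw [← hms]; linarith
    rw [l1, k1, l2, k2, k3, m3, k4, k5]
    ext z
    simp only [S1, Set.mem_insert_iff, Set.mem_singleton_iff]
    tauto
  · exfalso; nlinarith
  · exfalso; nlinarith
  · exfalso; nlinarith
  · exfalso; nlinarith
  · exfalso; nlinarith
  · exfalso; nlinarith
  · exfalso; nlinarith

/-- v1, v2 both on the hypotenuse: the square is the hypotenuse square. -/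
lemma base_h {a b x1 y1 x2 y2 x3 y3 x4 y4 p s : ℝ}
    (h : SqData a b x1 y1 x2 y2 x3 y3 x4 y4 p s)
    (l1 : b*x1 + a*y1 = a*b) (l2 : b*x2 + a*y2 = a*b) :
    ({(x1,y1),(x2,y2),(x3,y3),(x4,y4)} : Set (ℝ×ℝ)) = S1 a b ∨
    ({(x1,y1),(x2,y2),(x3,y3),(x4,y4)} : Set (ℝ×ℝ)) = S2 a b := by
  obtain ⟨ha, hb, e2x, e2y, e3x, e3y, e4x, e4y, hps, h1, h2, h3, h4⟩ := h
  have hbs : b*p + a*s = 0 := by linear_combination l2 - l1 - b*e2x - a*e2y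
  obtain ⟨hx3, hy3, hf3⟩ := onT_bounds ha hb h3
  obtain ⟨hx4, hy4, hf4⟩ := onT_bounds ha hb h4
  have e3f : b*x3 + a*y3 = a*b + a*p - b*s := by
    linear_combination l2 + b*e3x + a*e3y
  have e4f : b*x4 + a*y4 = a*b + a*p - b*s := by
    linear_combination l1 + b*e4x + a*e4y
  have hap : a*p ≤ b*s := by linarith
  have hpneg : p < 0 := by
    rcases lt_trichotomy p 0 with h' | h' | h'
    · exact h'
    · exfalso; apply hps; refine ⟨h', ?_⟩
      have h0 : a*s = 0 := by rw [h'] at hbs; linarith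
      rcases mul_eq_zero.mp h0 with h'' | h''
      · linarith
      · exact h''
    · exfalso
      have hbp : 0 < b*p := mul_pos hb h'
      have hs0 : s < 0 := by
        by_contra hc; push_neg at hc
        nlinarith [mul_nonneg ha.le hc]
      have : b*s < 0 := mul_neg_of_pos_of_neg hb hs0
      nlinarith [mul_pos ha h']
  have hspos : 0 < s := by
    by_contra hc; push_neg at hc
    have : a*s ≤ 0 := mul_nonpos_of_nonneg_of_nonpos ha.le hc
    have hbp : b*p < 0 := mul_neg_of_pos_of_neg hb hpneg
    linarith
  have haps : a*p < 0 := mul_neg_of_pos_of_neg ha hpneg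
  have hbss : 0 < b*s := mul_pos hb hspos
  rcases h3 with ⟨m3, -, -⟩ | ⟨m3, -, -⟩ | ⟨m3, -, -⟩ <;>
    rcases h4 with ⟨m4, -, -⟩ | ⟨m4, -, -⟩ | ⟨m4, -, -⟩
  · exfalso; linarith   -- y3 = y4 = 0 : s = 0
  · exfalso; linarith   -- v4 on hyp
  · exfalso; linarith   -- y3 = 0, x4 = 0 : x3 = p < 0
  · exfalso; linarith   -- v3 on hyp
  · exfalso; linarith
  · exfalso; linarith
  · -- x3 = 0, y4 = 0 : hypotenuse square
    right
    have hDpos : (0:ℝ) < a^2 + a*b + b^2 := by positivity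
    have hDne : (a^2 + a*b + b^2 : ℝ) ≠ 0 := ne_of_gt hDpos
    have hx1v : x1 = s - p := by linarith
    have hy1v : y1 = -p := by linarith
    have hpD : p * (a^2+a*b+b^2) = -(a^2*b) := by
      linear_combination (-a)*l1 + b*hbs + (a*b)*hx1v + a^2*hy1v
    have hsD : s * (a^2+a*b+b^2) = a*b^2 := by
      have h' : a * (s * (a^2+a*b+b^2)) = a * (a*b^2) := by
        linear_combination (a^2+a*b+b^2)*hbs - b*hpD
      exact mul_left_cancel₀ (ne_of_gt ha) h'
    have key : ∀ u v : ℝ, v * (a^2+a*b+b^2) = u → v = u/(a^2+a*b+b^2) :=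
      fun u v h' => by rw [eq_div_iff hDne]; exact h'
    have k1x : x1 = a*b*(a+b)/(a^2+a*b+b^2) :=
      key _ _ (by linear_combination (a^2+a*b+b^2)*hx1v + hsD - hpD)
    have k1y : y1 = a^2*b/(a^2+a*b+b^2) :=
      key _ _ (by linear_combination (a^2+a*b+b^2)*hy1v - hpD)
    have k2x : x2 = a*b^2/(a^2+a*b+b^2) :=
      key _ _ (by linear_combination (a^2+a*b+b^2)*e2x + (a^2+a*b+b^2)*hx1v + hsD)
    have k2y : y2 = a*b*(a+b)/(a^2+a*b+b^2) :=
      key _ _ (by linear_combination (a^2+a*b+b^2)*e2y + (a^2+a*b+b^2)*hy1v - hpD + hsD)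
    have k3y : y3 = a*b^2/(a^2+a*b+b^2) :=
      key _ _ (by linear_combination (a^2+a*b+b^2)*e3y + (a^2+a*b+b^2)*e2y + (a^2+a*b+b^2)*hy1v + hsD)
    have k4x : x4 = a^2*b/(a^2+a*b+b^2) :=
      key _ _ (by linear_combination (a^2+a*b+b^2)*e4x + (a^2+a*b+b^2)*hx1v - hpD)
    rw [k1x, k1y, k2x, k2y, m3, k3y, k4x, m4]
    rfl
  · exfalso; linarith   -- x3 = 0, v4 on hyp
  · exfalso; linarith   -- x3 = x4 = 0 : p = 0

lemma diag13x {a b x1 y1 x2 y2 x3 y3 x4 y4 p s : ℝ}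
    (h : SqData a b x1 y1 x2 y2 x3 y3 x4 y4 p s) (l1 : y1 = 0) (l3 : y3 = 0) : False := by
  obtain ⟨ha, hb, e2x, e2y, e3x, e3y, e4x, e4y, hps, h1, h2, h3, h4⟩ := h
  obtain ⟨-, hy2, -⟩ := onT_bounds ha hb h2
  obtain ⟨-, hy4, -⟩ := onT_bounds ha hb h4
  exact hps ⟨by linarith, by linarith⟩

lemma diag13y {a b x1 y1 x2 y2 x3 y3 x4 y4 p s : ℝ}
    (h : SqData a b x1 y1 x2 y2 x3 y3 x4 y4 p s) (l1 : x1 = 0) (l3 : x3 = 0) : False := by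
  obtain ⟨ha, hb, e2x, e2y, e3x, e3y, e4x, e4y, hps, h1, h2, h3, h4⟩ := h
  obtain ⟨hx2, -, -⟩ := onT_bounds ha hb h2
  obtain ⟨hx4, -, -⟩ := onT_bounds ha hb h4
  exact hps ⟨by linarith, by linarith⟩

lemma diag13h {a b x1 y1 x2 y2 x3 y3 x4 y4 p s : ℝ}
    (h : SqData a b x1 y1 x2 y2 x3 y3 x4 y4 p s)
    (l1 : b*x1 + a*y1 = a*b) (l3 : b*x3 + a*y3 = a*b) : False := by
  obtain ⟨ha, hb, e2x, e2y, e3x, e3y, e4x, e4y, hps, h1, h2, h3, h4⟩ := h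
  obtain ⟨-, -, hf2⟩ := onT_bounds ha hb h2
  obtain ⟨-, -, hf4⟩ := onT_bounds ha hb h4
  have e2f : b*x2 + a*y2 = b*x1 + a*y1 + (b*p + a*s) := by
    linear_combination b*e2x + a*e2y
  have e4f : b*x4 + a*y4 = b*x1 + a*y1 + (a*p - b*s) := by
    linear_combination b*e4x + a*e4y
  have e3f : b*x3 + a*y3 = b*x1 + a*y1 + (b*p + a*s) + (a*p - b*s) := by
    linear_combination b*e3x + a*e3y + b*e2x + a*e2y
  have h1' : b*p + a*s = 0 := by linarith
  have h2' : a*p - b*s = 0 := by linarith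
  have hp0 : p = 0 := by
    have hD : (0:ℝ) < a^2 + b^2 := by positivity
    have : (a^2+b^2)*p = 0 := by linear_combination b*h1' + a*h2'
    rcases mul_eq_zero.mp this with h' | h'
    · exact absurd h' (ne_of_gt hD)
    · exact h'
  have hs0 : s = 0 := by
    have : a*s = 0 := by rw [hp0] at h1'; linarith
    rcases mul_eq_zero.mp this with h' | h'
    · exact absurd h' (ne_of_gt ha)
    · exact h'
  exact hps ⟨hp0, hs0⟩

lemma diag24x {a b x1 y1 x2 y2 x3 y3 x4 y4 p s : ℝ}
    (h : SqData a b x1 y1 x2 y2 x3 y3 x4 y4 p s) (l2 : y2 = 0) (l4 : y4 = 0) : False := by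
  obtain ⟨ha, hb, e2x, e2y, e3x, e3y, e4x, e4y, hps, h1, h2, h3, h4⟩ := h
  obtain ⟨-, hy1, -⟩ := onT_bounds ha hb h1
  obtain ⟨-, hy3, -⟩ := onT_bounds ha hb h3
  exact hps ⟨by linarith, by linarith⟩

lemma diag24y {a b x1 y1 x2 y2 x3 y3 x4 y4 p s : ℝ}
    (h : SqData a b x1 y1 x2 y2 x3 y3 x4 y4 p s) (l2 : x2 = 0) (l4 : x4 = 0) : False := by
  obtain ⟨ha, hb, e2x, e2y, e3x, e3y, e4x, e4y, hps, h1, h2, h3, h4⟩ := h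
  obtain ⟨hx1, -, -⟩ := onT_bounds ha hb h1
  obtain ⟨hx3, -, -⟩ := onT_bounds ha hb h3
  exact hps ⟨by linarith, by linarith⟩

lemma diag24h {a b x1 y1 x2 y2 x3 y3 x4 y4 p s : ℝ}
    (h : SqData a b x1 y1 x2 y2 x3 y3 x4 y4 p s)
    (l2 : b*x2 + a*y2 = a*b) (l4 : b*x4 + a*y4 = a*b) : False := by
  obtain ⟨ha, hb, e2x, e2y, e3x, e3y, e4x, e4y, hps, h1, h2, h3, h4⟩ := h
  obtain ⟨-, -, hf1⟩ := onT_bounds ha hb h1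
  have e2f : b*x2 + a*y2 = b*x1 + a*y1 + (b*p + a*s) := by
    linear_combination b*e2x + a*e2y
  have e4f : b*x4 + a*y4 = b*x1 + a*y1 + (a*p - b*s) := by
    linear_combination b*e4x + a*e4y
  have h12 : b*p + a*s = a*b - (b*x1 + a*y1) := by linarith
  have h14 : a*p - b*s = a*b - (b*x1 + a*y1) := by linarith
  -- both deviations equal and opposite-signed roles: v1 and v3 on the triangle force 0
  obtain ⟨-, -, hf3⟩ := onT_bounds ha hb h3
  have e3f : b*x3 + a*y3 = b*x1 + a*y1 + (b*p + a*s) + (a*p - b*s) := by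
    linear_combination b*e3x + a*e3y + b*e2x + a*e2y
  -- f3 = f1 + 2(ab - f1) = 2ab - f1 ≤ ab  ⟹ f1 ≥ ab ⟹ f1 = ab ⟹ deviations 0
  have h1' : b*p + a*s = 0 := by linarith
  have h2' : a*p - b*s = 0 := by linarith
  have hp0 : p = 0 := by
    have hD : (0:ℝ) < a^2 + b^2 := by positivity
    have : (a^2+b^2)*p = 0 := by linear_combination b*h1' + a*h2'
    rcases mul_eq_zero.mp this with h' | h'
    · exact absurd h' (ne_of_gt hD)
    · exact h'
  have hs0 : s = 0 := by
    have : a*s = 0 := by rw [hp0] at h1'; linarith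
    rcases mul_eq_zero.mp this with h' | h'
    · exact absurd h' (ne_of_gt ha)
    · exact h'
  exact hps ⟨hp0, hs0⟩

lemma classify {a b x1 y1 x2 y2 x3 y3 x4 y4 p s : ℝ}
    (h : SqData a b x1 y1 x2 y2 x3 y3 x4 y4 p s) :
    ({(x1,y1),(x2,y2),(x3,y3),(x4,y4)} : Set (ℝ×ℝ)) = S1 a b ∨
    ({(x1,y1),(x2,y2),(x3,y3),(x4,y4)} : Set (ℝ×ℝ)) = S2 a b := by
  obtain ⟨-, -, -, -, -, -, -, -, -, h1, h2, h3, h4⟩ := id h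
  have hrot1 := sqData_rot h
  have hrot2 := sqData_rot hrot1
  have hrot3 := sqData_rot hrot2
  have tr1 : ∀ S : Set (ℝ×ℝ),
      ({(x2,y2),(x3,y3),(x4,y4),(x1,y1)} : Set (ℝ×ℝ)) = S →
      ({(x1,y1),(x2,y2),(x3,y3),(x4,y4)} : Set (ℝ×ℝ)) = S :=
    fun S hS => (setrot (x1,y1) (x2,y2) (x3,y3) (x4,y4)).symm.trans hS
  have tr2 : ∀ S : Set (ℝ×ℝ),
      ({(x3,y3),(x4,y4),(x1,y1),(x2,y2)} : Set (ℝ×ℝ)) = S →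
      ({(x1,y1),(x2,y2),(x3,y3),(x4,y4)} : Set (ℝ×ℝ)) = S :=
    fun S hS => (setrot (x1,y1) (x2,y2) (x3,y3) (x4,y4)).symm.trans
      ((setrot (x2,y2) (x3,y3) (x4,y4) (x1,y1)).symm.trans hS)
  have tr3 : ∀ S : Set (ℝ×ℝ),
      ({(x4,y4),(x1,y1),(x2,y2),(x3,y3)} : Set (ℝ×ℝ)) = S →
      ({(x1,y1),(x2,y2),(x3,y3),(x4,y4)} : Set (ℝ×ℝ)) = S :=
    fun S hS => (setrot (x1,y1) (x2,y2) (x3,y3) (x4,y4)).symm.trans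
      ((setrot (x2,y2) (x3,y3) (x4,y4) (x1,y1)).symm.trans
        ((setrot (x3,y3) (x4,y4) (x1,y1) (x2,y2)).symm.trans hS))
  rcases h1 with ⟨l1,-,-⟩|⟨l1,-,-⟩|⟨l1,-,-⟩
  · -- v1 on x-axis
    rcases h2 with ⟨l2,-,-⟩|⟨l2,-,-⟩|⟨l2,-,-⟩
    · exact base_x h l1 l2
    · rcases h3 with ⟨l3,-,-⟩|⟨l3,-,-⟩|⟨l3,-,-⟩
      · exact (diag13x h l1 l3).elim
      · exact Or.imp (tr1 _) (tr1 _) (base_h hrot1 l2 l3)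
      · rcases h4 with ⟨l4,-,-⟩|⟨l4,-,-⟩|⟨l4,-,-⟩
        · exact Or.imp (tr3 _) (tr3 _) (base_x hrot3 l4 l1)
        · exact (diag24h h l2 l4).elim
        · exact Or.imp (tr2 _) (tr2 _) (base_y hrot2 l3 l4)
    · rcases h3 with ⟨l3,-,-⟩|⟨l3,-,-⟩|⟨l3,-,-⟩
      · exact (diag13x h l1 l3).elim
      · rcases h4 with ⟨l4,-,-⟩|⟨l4,-,-⟩|⟨l4,-,-⟩
        · exact Or.imp (tr3 _) (tr3 _) (base_x hrot3 l4 l1)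
        · exact Or.imp (tr2 _) (tr2 _) (base_h hrot2 l3 l4)
        · exact (diag24y h l2 l4).elim
      · exact Or.imp (tr1 _) (tr1 _) (base_y hrot1 l2 l3)
  · -- v1 on hypotenuse
    rcases h2 with ⟨l2,-,-⟩|⟨l2,-,-⟩|⟨l2,-,-⟩
    · rcases h3 with ⟨l3,-,-⟩|⟨l3,-,-⟩|⟨l3,-,-⟩
      · exact Or.imp (tr1 _) (tr1 _) (base_x hrot1 l2 l3)
      · exact (diag13h h l1 l3).elim
      · rcases h4 with ⟨l4,-,-⟩|⟨l4,-,-⟩|⟨l4,-,-⟩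
        · exact (diag24x h l2 l4).elim
        · exact Or.imp (tr3 _) (tr3 _) (base_h hrot3 l4 l1)
        · exact Or.imp (tr2 _) (tr2 _) (base_y hrot2 l3 l4)
    · exact base_h h l1 l2
    · rcases h3 with ⟨l3,-,-⟩|⟨l3,-,-⟩|⟨l3,-,-⟩
      · rcases h4 with ⟨l4,-,-⟩|⟨l4,-,-⟩|⟨l4,-,-⟩
        · exact Or.imp (tr2 _) (tr2 _) (base_x hrot2 l3 l4)
        · exact Or.imp (tr3 _) (tr3 _) (base_h hrot3 l4 l1)
        · exact (diag24y h l2 l4).elim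
      · exact (diag13h h l1 l3).elim
      · exact Or.imp (tr1 _) (tr1 _) (base_y hrot1 l2 l3)
  · -- v1 on y-axis
    rcases h2 with ⟨l2,-,-⟩|⟨l2,-,-⟩|⟨l2,-,-⟩
    · rcases h3 with ⟨l3,-,-⟩|⟨l3,-,-⟩|⟨l3,-,-⟩
      · exact Or.imp (tr1 _) (tr1 _) (base_x hrot1 l2 l3)
      · rcases h4 with ⟨l4,-,-⟩|⟨l4,-,-⟩|⟨l4,-,-⟩
        · exact (diag24x h l2 l4).elim
        · exact Or.imp (tr2 _) (tr2 _) (base_h hrot2 l3 l4)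
        · exact Or.imp (tr3 _) (tr3 _) (base_y hrot3 l4 l1)
      · exact (diag13y h l1 l3).elim
    · rcases h3 with ⟨l3,-,-⟩|⟨l3,-,-⟩|⟨l3,-,-⟩
      · rcases h4 with ⟨l4,-,-⟩|⟨l4,-,-⟩|⟨l4,-,-⟩
        · exact Or.imp (tr2 _) (tr2 _) (base_x hrot2 l3 l4)
        · exact (diag24h h l2 l4).elim
        · exact Or.imp (tr3 _) (tr3 _) (base_y hrot3 l4 l1)
      · exact Or.imp (tr1 _) (tr1 _) (base_h hrot1 l2 l3)
      · exact (diag13y h l1 l3).elim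
    · exact base_y h l1 l2

end RTSq

lemma Pt.ext' {u v : Pt} (h0 : u 0 = v 0) (h1 : u 1 = v 1) : u = v := by
  apply PiLp.ext; intro i; fin_cases i <;> assumption
lemma rotCCW_add (u v : Pt) : rotCCW (u + v) = rotCCW u + rotCCW v :=
  Pt.ext' (by show -(u 1 + v 1) = -u 1 + -v 1; ring) rfl
lemma rotCCW_smul (c : ℝ) (u : Pt) : rotCCW (c • u) = c • rotCCW u :=
  Pt.ext' (by show -(c * u 1) = c * -u 1; ring) rfl
lemma rotCCW_neg (u : Pt) : rotCCW (-u) = -rotCCW u :=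
  Pt.ext' (by show -(-u 1) = -(-u 1); ring) rfl
lemma rotCCW_rotCCW (u : Pt) : rotCCW (rotCCW u) = -u :=
  Pt.ext' (by show -(u 0) = -(u 0); ring) (by show -(u 1) = -(u 1); rfl)
lemma inner_coords (x y : Pt) : ⟪x, y⟫ = x 0 * y 0 + x 1 * y 1 := by
  simp [PiLp.inner_apply, Fin.sum_univ_two]; ring
lemma norm_one_coords {x : Pt} (h : ‖x‖ = 1) : x 0 ^ 2 + x 1 ^ 2 = 1 := by
  have h2 : ⟪x, x⟫ = 1 := by rw [real_inner_self_eq_norm_sq, h]; norm_num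
  rw [inner_coords] at h2; nlinarith

/-- Orientation dichotomy for an orthonormal pair in the plane. -/
lemma orient {e₁ e₂ : Pt} (h1 : ‖e₁‖ = 1) (h2 : ‖e₂‖ = 1) (h12 : ⟪e₁, e₂⟫ = 0) :
    rotCCW e₁ = e₂ ∨ rotCCW e₁ = -e₂ := by
  have hc := norm_one_coords h1
  have hu := norm_one_coords h2
  rw [inner_coords] at h12
  set c := e₁ 0; set d := e₁ 1; set u := e₂ 0; set v := e₂ 1
  have key : (c*v - d*u - 1) * (c*v - d*u + 1) = 0 := by nlinarith
  rcases mul_eq_zero.mp key with h' | h'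
  · left
    have hsum : (u + d)^2 + (v - c)^2 = 0 := by nlinarith
    have e0 : u + d = 0 := by nlinarith [sq_nonneg (u+d), sq_nonneg (v-c)]
    have e1 : v - c = 0 := by nlinarith [sq_nonneg (u+d), sq_nonneg (v-c)]
    exact Pt.ext' (by show -d = u; linarith) (by show c = v; linarith)
  · right
    have hsum : (u - d)^2 + (v + c)^2 = 0 := by nlinarith
    have e0 : u - d = 0 := by nlinarith [sq_nonneg (u-d), sq_nonneg (v+c)]
    have e1 : v + c = 0 := by nlinarith [sq_nonneg (u-d), sq_nonneg (v+c)]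
    exact Pt.ext' (by show -d = -u; linarith) (by show c = -v; linarith)

set_option maxHeartbeats 2000000 in
lemma aux (p q r : Pt) (hncol : ¬ Collinear ℝ ({p, q, r} : Set Pt))
    (hright : ⟪q - p, r - p⟫ = 0)
    (hor : rotCCW (‖q - p‖⁻¹ • (q - p)) = ‖r - p‖⁻¹ • (r - p)) :
    {s : Set Pt | ∃ a₁ a₂ a₃ a₄ : Pt,
      InscribedSquare (segment ℝ p q ∪ segment ℝ q r ∪ segment ℝ r p) a₁ a₂ a₃ a₄ ∧
      s = {a₁, a₂, a₃, a₄}}.encard = 2 := by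
  have hq : q ≠ p := by
    intro h'; subst h'; apply hncol
    have : ({q, q, r} : Set Pt) = {q, r} := by ext z; simp
    rw [this]; exact collinear_pair ℝ q r
  have hr : r ≠ p := by
    intro h'; subst h'; apply hncol
    have : ({r, q, r} : Set Pt) = {r, q} := by ext z; simp; tauto
    rw [this]; exact collinear_pair ℝ r q
  have hqp0 : q - p ≠ 0 := sub_ne_zero.mpr hq
  have hrp0 : r - p ≠ 0 := sub_ne_zero.mpr hr
  set a : ℝ := ‖q - p‖ with haDef
  set b : ℝ := ‖r - p‖ with hbDef
  have ha : 0 < a := norm_pos_iff.mpr hqp0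
  have hb : 0 < b := norm_pos_iff.mpr hrp0
  obtain ⟨e₁, he₁Def⟩ : ∃ e : Pt, e = a⁻¹ • (q - p) := ⟨_, rfl⟩
  obtain ⟨e₂, he₂Def⟩ : ∃ e : Pt, e = b⁻¹ • (r - p) := ⟨_, rfl⟩
  rw [← he₁Def, ← he₂Def] at hor
  have he₁ : ‖e₁‖ = 1 := by rw [he₁Def]; exact norm_smul_inv_norm hqp0
  have he₂ : ‖e₂‖ = 1 := by rw [he₂Def]; exact norm_smul_inv_norm hrp0
  have h12 : ⟪e₁, e₂⟫ = 0 := by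
    rw [he₁Def, he₂Def, real_inner_smul_left, real_inner_smul_right, hright]; ring
  have h21 : ⟪e₂, e₁⟫ = 0 := by rw [real_inner_comm]; exact h12
  have h11 : ⟪e₁, e₁⟫ = 1 := by rw [real_inner_self_eq_norm_sq, he₁]; norm_num
  have h22 : ⟪e₂, e₂⟫ = 1 := by rw [real_inner_self_eq_norm_sq, he₂]; norm_num
  have hq_eq : q = p + a • e₁ := by
    rw [he₁Def, smul_smul, mul_inv_cancel₀ ha.ne', one_smul]; abel
  have hr_eq : r = p + b • e₂ := by
    rw [he₂Def, smul_smul, mul_inv_cancel₀ hb.ne', one_smul]; abel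
  clear_value a b
  have hrot2 : rotCCW e₂ = -e₁ := by rw [← hor, rotCCW_rotCCW]
  -- the coordinate map
  set Φ : ℝ × ℝ → Pt := fun c => p + c.1 • e₁ + c.2 • e₂ with hΦDef
  have hΦdiff : ∀ c c' : ℝ × ℝ, Φ c - Φ c' = (c.1 - c'.1) • e₁ + (c.2 - c'.2) • e₂ := by
    intro c c'; show p + c.1 • e₁ + c.2 • e₂ - (p + c'.1 • e₁ + c'.2 • e₂) = _; module
  have hinner1 : ∀ x y : ℝ, ⟪x • e₁ + y • e₂, e₁⟫ = x := by
    intro x y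
    rw [inner_add_left, real_inner_smul_left, real_inner_smul_left, h11, h21]; ring
  have hinner2 : ∀ x y : ℝ, ⟪x • e₁ + y • e₂, e₂⟫ = y := by
    intro x y
    rw [inner_add_left, real_inner_smul_left, real_inner_smul_left, h12, h22]; ring
  have ψinj : ∀ x y x' y' : ℝ, x • e₁ + y • e₂ = x' • e₁ + y' • e₂ → x = x' ∧ y = y' := by
    intro x y x' y' h
    constructor
    · rw [← hinner1 x y, h, hinner1]
    · rw [← hinner2 x y, h, hinner2]
  have hΦinj : Function.Injective Φ := by
    intro c c' h
    have h0 : Φ c - Φ c' = 0 := sub_eq_zero.mpr h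
    rw [hΦdiff] at h0
    have h0' : (c.1 - c'.1) • e₁ + (c.2 - c'.2) • e₂ = (0:ℝ) • e₁ + (0:ℝ) • e₂ := by
      rw [h0]; module
    obtain ⟨h1, h2⟩ := ψinj _ _ _ _ h0'
    exact Prod.ext (by linarith) (by linarith)
  -- reconstruction
  have he2c : e₂ 0 = -(e₁ 1) := by rw [← hor]; rfl
  have he2d : e₂ 1 = e₁ 0 := by rw [← hor]; rfl
  have hcd : (e₁ 0)^2 + (e₁ 1)^2 = 1 := norm_one_coords he₁
  have recon : ∀ z : Pt, z = Φ (⟪z - p, e₁⟫, ⟪z - p, e₂⟫) := by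
    intro z
    apply Pt.ext'
    · show z 0 = p 0 + ⟪z - p, e₁⟫ * e₁ 0 + ⟪z - p, e₂⟫ * e₂ 0
      rw [inner_coords, inner_coords, he2c, he2d]
      show z 0 = p 0 + ((z 0 - p 0) * e₁ 0 + (z 1 - p 1) * e₁ 1) * e₁ 0 +
        ((z 0 - p 0) * -(e₁ 1) + (z 1 - p 1) * e₁ 0) * -(e₁ 1)
      linear_combination (p 0 - z 0) * hcd
    · show z 1 = p 1 + ⟪z - p, e₁⟫ * e₁ 1 + ⟪z - p, e₂⟫ * e₂ 1
      rw [inner_coords, inner_coords, he2c, he2d]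
      show z 1 = p 1 + ((z 0 - p 0) * e₁ 0 + (z 1 - p 1) * e₁ 1) * e₁ 1 +
        ((z 0 - p 0) * -(e₁ 1) + (z 1 - p 1) * e₁ 0) * e₁ 0
      linear_combination (p 1 - z 1) * hcd
  -- membership characterizations
  have memPQ : ∀ z : Pt, z ∈ segment ℝ p q ↔
      (⟪z - p, e₂⟫ = 0 ∧ 0 ≤ ⟪z - p, e₁⟫ ∧ ⟪z - p, e₁⟫ ≤ a) := by
    intro z
    rw [segment_eq_image]
    constructor
    · rintro ⟨t, ⟨ht0, ht1⟩, rfl⟩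
      have hz : (1 - t) • p + t • q - p = (t*a) • e₁ + (0:ℝ) • e₂ := by rw [hq_eq]; module
      rw [hz, hinner1, hinner2]
      exact ⟨rfl, mul_nonneg ht0 ha.le, by nlinarith⟩
    · intro hcond
      obtain ⟨α, hα⟩ : ∃ α, α = ⟪z - p, e₁⟫ := ⟨_, rfl⟩
      obtain ⟨β, hβ'⟩ : ∃ β, β = ⟪z - p, e₂⟫ := ⟨_, rfl⟩
      obtain ⟨hβ, h0, h1⟩ := hcond
      rw [← hα] at h0 h1; rw [← hβ'] at hβ
      have hrec : z = p + α • e₁ + β • e₂ := by rw [hα, hβ']; exact recon z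
      refine ⟨α / a, ⟨div_nonneg h0 ha.le, (div_le_one ha).mpr h1⟩, ?_⟩
      rw [hq_eq, hrec, hβ]
      match_scalars <;> field_simp <;> ring
  have memQR : ∀ z : Pt, z ∈ segment ℝ q r ↔
      (b * ⟪z - p, e₁⟫ + a * ⟪z - p, e₂⟫ = a*b ∧ 0 ≤ ⟪z - p, e₁⟫ ∧ ⟪z - p, e₁⟫ ≤ a) := by
    intro z
    rw [segment_eq_image]
    constructor
    · rintro ⟨t, ⟨ht0, ht1⟩, rfl⟩
      have hz : (1 - t) • q + t • r - p = ((1-t)*a) • e₁ + (t*b) • e₂ := by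
        rw [hq_eq, hr_eq]; module
      rw [hz, hinner1, hinner2]
      refine ⟨by ring, by nlinarith, by nlinarith⟩
    · intro hcond
      obtain ⟨α, hα⟩ : ∃ α, α = ⟪z - p, e₁⟫ := ⟨_, rfl⟩
      obtain ⟨β, hβ'⟩ : ∃ β, β = ⟪z - p, e₂⟫ := ⟨_, rfl⟩
      obtain ⟨heq, h0, h1⟩ := hcond
      rw [← hα] at h0 h1; rw [← hα, ← hβ'] at heq
      have hrec : z = p + α • e₁ + β • e₂ := by rw [hα, hβ']; exact recon z
      have hβ0 : 0 ≤ β := by nlinarith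
      have hβb : β ≤ b := by nlinarith
      refine ⟨β / b, ⟨div_nonneg hβ0 hb.le, (div_le_one hb).mpr hβb⟩, ?_⟩
      rw [hq_eq, hr_eq, hrec]
      match_scalars
      · field_simp; ring
      · field_simp
        linarith
      · field_simp
  have memRP : ∀ z : Pt, z ∈ segment ℝ r p ↔
      (⟪z - p, e₁⟫ = 0 ∧ 0 ≤ ⟪z - p, e₂⟫ ∧ ⟪z - p, e₂⟫ ≤ b) := by
    intro z
    rw [segment_eq_image]
    constructor
    · rintro ⟨t, ⟨ht0, ht1⟩, rfl⟩
      have hz : (1 - t) • r + t • p - p = (0:ℝ) • e₁ + ((1-t)*b) • e₂ := by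
        rw [hr_eq]; module
      rw [hz, hinner1, hinner2]
      refine ⟨rfl, by nlinarith, by nlinarith⟩
    · intro hcond
      obtain ⟨α, hα⟩ : ∃ α, α = ⟪z - p, e₁⟫ := ⟨_, rfl⟩
      obtain ⟨β, hβ'⟩ : ∃ β, β = ⟪z - p, e₂⟫ := ⟨_, rfl⟩
      obtain ⟨hα0, h0, h1⟩ := hcond
      rw [← hβ'] at h0 h1; rw [← hα] at hα0
      have hrec : z = p + α • e₁ + β • e₂ := by rw [hα, hβ']; exact recon z
      have ht0 : β / b ≤ 1 := (div_le_one hb).mpr h1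
      have ht1 : 0 ≤ β / b := div_nonneg h0 hb.le
      refine ⟨1 - β / b, ⟨by linarith, by linarith⟩, ?_⟩
      rw [hr_eq, hrec, hα0]
      match_scalars <;> field_simp <;> ring
  have memT : ∀ z : Pt, z ∈ (segment ℝ p q ∪ segment ℝ q r ∪ segment ℝ r p) ↔
      RTSq.OnT a b ⟪z - p, e₁⟫ ⟪z - p, e₂⟫ := by
    intro z
    rw [Set.mem_union, Set.mem_union, memPQ, memQR, memRP, RTSq.OnT]
    tauto
  have hrotψ : ∀ x y : ℝ, rotCCW (x • e₁ + y • e₂) = (-y) • e₁ + x • e₂ := by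
    intro x y
    rw [rotCCW_add, rotCCW_smul, rotCCW_smul, hor, hrot2]
    module
  have coordΦ : ∀ x y : ℝ, ⟪Φ (x,y) - p, e₁⟫ = x ∧ ⟪Φ (x,y) - p, e₂⟫ = y := by
    intro x y
    have h' : Φ (x,y) - p = x • e₁ + y • e₂ := by
      show p + x • e₁ + y • e₂ - p = _; abel
    exact ⟨by rw [h', hinner1], by rw [h', hinner2]⟩
  have memTΦ : ∀ x y : ℝ, RTSq.OnT a b x y →
      Φ (x,y) ∈ (segment ℝ p q ∪ segment ℝ q r ∪ segment ℝ r p) := by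
    intro x y h
    rw [memT, (coordΦ x y).1, (coordΦ x y).2]
    exact h
  -- the two squares, as subsets of the plane
  have hDpos : (0:ℝ) < a^2 + a*b + b^2 := by positivity
  have hDne : (a^2 + a*b + b^2 : ℝ) ≠ 0 := ne_of_gt hDpos
  have habne : (a + b : ℝ) ≠ 0 := by positivity
  -- main classification of the set of inscribed squares
  have hset : {s : Set Pt | ∃ a₁ a₂ a₃ a₄ : Pt,
      InscribedSquare (segment ℝ p q ∪ segment ℝ q r ∪ segment ℝ r p) a₁ a₂ a₃ a₄ ∧
      s = {a₁, a₂, a₃, a₄}} = {Φ '' (RTSq.S1 a b), Φ '' (RTSq.S2 a b)} := by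
    ext s
    simp only [Set.mem_setOf_eq, Set.mem_insert_iff, Set.mem_singleton_iff]
    constructor
    · rintro ⟨a₁, a₂, a₃, a₄, ⟨m1, m2, m3, m4, hsq1, hsq2,
        hne12, hne13, hne14, hne23, hne24, hne34⟩, rfl⟩
      obtain ⟨x1, hx1⟩ : ∃ v, v = ⟪a₁ - p, e₁⟫ := ⟨_, rfl⟩
      obtain ⟨y1, hy1⟩ : ∃ v, v = ⟪a₁ - p, e₂⟫ := ⟨_, rfl⟩
      obtain ⟨x2, hx2⟩ : ∃ v, v = ⟪a₂ - p, e₁⟫ := ⟨_, rfl⟩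
      obtain ⟨y2, hy2⟩ : ∃ v, v = ⟪a₂ - p, e₂⟫ := ⟨_, rfl⟩
      obtain ⟨x3, hx3⟩ : ∃ v, v = ⟪a₃ - p, e₁⟫ := ⟨_, rfl⟩
      obtain ⟨y3, hy3⟩ : ∃ v, v = ⟪a₃ - p, e₂⟫ := ⟨_, rfl⟩
      obtain ⟨x4, hx4⟩ : ∃ v, v = ⟪a₄ - p, e₁⟫ := ⟨_, rfl⟩
      obtain ⟨y4, hy4⟩ : ∃ v, v = ⟪a₄ - p, e₂⟫ := ⟨_, rfl⟩
      have r1 : a₁ = Φ (x1, y1) := by rw [hx1, hy1]; exact recon a₁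
      have r2 : a₂ = Φ (x2, y2) := by rw [hx2, hy2]; exact recon a₂
      have r3 : a₃ = Φ (x3, y3) := by rw [hx3, hy3]; exact recon a₃
      have r4 : a₄ = Φ (x4, y4) := by rw [hx4, hy4]; exact recon a₄
      have d21 : a₂ - a₁ = (x2 - x1) • e₁ + (y2 - y1) • e₂ := by
        rw [r1, r2]; exact hΦdiff _ _
      have d32 : a₃ - a₂ = (x3 - x2) • e₁ + (y3 - y2) • e₂ := by
        rw [r2, r3]; exact hΦdiff _ _
      have d34 : a₃ - a₄ = (x3 - x4) • e₁ + (y3 - y4) • e₂ := by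
        rw [r3, r4]; exact hΦdiff _ _
      have hrot' : a₃ - a₂ = (-(y2 - y1)) • e₁ + (x2 - x1) • e₂ := by
        rw [hsq2, d21, hrotψ]
      obtain ⟨E1, E2⟩ := ψinj _ _ _ _ (d32.symm.trans hrot')
      obtain ⟨F1, F2⟩ := ψinj _ _ _ _ (d21.symm.trans (hsq1.trans d34))
      have o1 : RTSq.OnT a b x1 y1 := by rw [hx1, hy1]; exact (memT a₁).mp m1
      have o2 : RTSq.OnT a b x2 y2 := by rw [hx2, hy2]; exact (memT a₂).mp m2
      have o3 : RTSq.OnT a b x3 y3 := by rw [hx3, hy3]; exact (memT a₃).mp m3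
      have o4 : RTSq.OnT a b x4 y4 := by rw [hx4, hy4]; exact (memT a₄).mp m4
      have hdata : RTSq.SqData a b x1 y1 x2 y2 x3 y3 x4 y4 (x2 - x1) (y2 - y1) := by
        refine ⟨ha, hb, by ring, by ring, by linarith, by linarith,
          by linarith, by linarith, ?_, o1, o2, o3, o4⟩
        rintro ⟨hP, hS⟩
        exact hne12 (by rw [r1, r2]; exact congrArg Φ (Prod.ext (by linarith) (by linarith)))
      have himg : ({a₁, a₂, a₃, a₄} : Set Pt) =
          Φ '' {(x1,y1),(x2,y2),(x3,y3),(x4,y4)} := by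
        rw [Set.image_insert_eq, Set.image_insert_eq, Set.image_insert_eq,
          Set.image_singleton, ← r1, ← r2, ← r3, ← r4]
      rcases RTSq.classify hdata with h' | h'
      · left; rw [himg, h']
      · right; rw [himg, h']
    · have hS1img : Φ '' (RTSq.S1 a b) =
          {Φ (0,0), Φ (a*b/(a+b), 0), Φ (a*b/(a+b), a*b/(a+b)), Φ (0, a*b/(a+b))} := by
        rw [RTSq.S1, Set.image_insert_eq, Set.image_insert_eq, Set.image_insert_eq,
          Set.image_singleton]
      have hS2img : Φ '' (RTSq.S2 a b) =
          {Φ (a*b*(a+b)/(a^2+a*b+b^2), a^2*b/(a^2+a*b+b^2)),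
           Φ (a*b^2/(a^2+a*b+b^2), a*b*(a+b)/(a^2+a*b+b^2)),
           Φ (0, a*b^2/(a^2+a*b+b^2)),
           Φ (a^2*b/(a^2+a*b+b^2), 0)} := by
        rw [RTSq.S2, Set.image_insert_eq, Set.image_insert_eq, Set.image_insert_eq,
          Set.image_singleton]
      have hΦne : ∀ c c' : ℝ × ℝ, c ≠ c' → Φ c ≠ Φ c' := fun c c' hne h => hne (hΦinj h)
      rintro (rfl | rfl)
      · -- corner square
        have hm0 : (0:ℝ) < a*b/(a+b) := by positivity
        have hma : a*b/(a+b) ≤ a := by rw [div_le_iff₀ (by positivity)]; nlinarith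
        have hmb : a*b/(a+b) ≤ b := by rw [div_le_iff₀ (by positivity)]; nlinarith
        refine ⟨Φ (0,0), Φ (a*b/(a+b), 0), Φ (a*b/(a+b), a*b/(a+b)), Φ (0, a*b/(a+b)),
          ⟨?_, ?_, ?_, ?_, ?_, ?_, ?_, ?_, ?_, ?_, ?_, ?_⟩, hS1img⟩
        · exact memTΦ _ _ (Or.inl ⟨rfl, le_refl 0, ha.le⟩)
        · exact memTΦ _ _ (Or.inl ⟨rfl, hm0.le, hma⟩)
        · refine memTΦ _ _ (Or.inr (Or.inl ⟨?_, hm0.le, hma⟩))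
          field_simp; ring
        · exact memTΦ _ _ (Or.inr (Or.inr ⟨rfl, hm0.le, hmb⟩))
        · rw [hΦdiff, hΦdiff]; module
        · rw [hΦdiff, hΦdiff, hrotψ]; module
        · exact hΦne _ _ (fun h => by
            rw [Prod.mk.injEq] at h; obtain ⟨h1, -⟩ := h; rw [← h1] at hm0; exact lt_irrefl 0 hm0)
        · exact hΦne _ _ (fun h => by
            rw [Prod.mk.injEq] at h; obtain ⟨h1, -⟩ := h; rw [← h1] at hm0; exact lt_irrefl 0 hm0)
        · exact hΦne _ _ (fun h => by
            rw [Prod.mk.injEq] at h; obtain ⟨-, h2⟩ := h; rw [← h2] at hm0; exact lt_irrefl 0 hm0)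
        · exact hΦne _ _ (fun h => by
            rw [Prod.mk.injEq] at h; obtain ⟨-, h2⟩ := h; rw [← h2] at hm0; exact lt_irrefl 0 hm0)
        · exact hΦne _ _ (fun h => by
            rw [Prod.mk.injEq] at h; obtain ⟨h1, -⟩ := h; rw [h1] at hm0; exact lt_irrefl 0 hm0)
        · exact hΦne _ _ (fun h => by
            rw [Prod.mk.injEq] at h; obtain ⟨h1, -⟩ := h; rw [h1] at hm0; exact lt_irrefl 0 hm0)
      · -- hypotenuse square
        have k1 : (0:ℝ) < a*b*(a+b)/(a^2+a*b+b^2) := by positivity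
        have k2 : (0:ℝ) < a*b^2/(a^2+a*b+b^2) := by positivity
        have k3 : (0:ℝ) < a^2*b/(a^2+a*b+b^2) := by positivity
        have k1a : a*b*(a+b)/(a^2+a*b+b^2) ≤ a := by
          rw [div_le_iff₀ hDpos]; nlinarith
        have k2a : a*b^2/(a^2+a*b+b^2) ≤ a := by
          rw [div_le_iff₀ hDpos]; nlinarith
        have k2b : a*b^2/(a^2+a*b+b^2) ≤ b := by
          rw [div_le_iff₀ hDpos]; nlinarith
        have k3a : a^2*b/(a^2+a*b+b^2) ≤ a := by
          rw [div_le_iff₀ hDpos]; nlinarith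
        refine ⟨Φ (a*b*(a+b)/(a^2+a*b+b^2), a^2*b/(a^2+a*b+b^2)),
          Φ (a*b^2/(a^2+a*b+b^2), a*b*(a+b)/(a^2+a*b+b^2)),
          Φ (0, a*b^2/(a^2+a*b+b^2)),
          Φ (a^2*b/(a^2+a*b+b^2), 0),
          ⟨?_, ?_, ?_, ?_, ?_, ?_, ?_, ?_, ?_, ?_, ?_, ?_⟩, hS2img⟩
        · refine memTΦ _ _ (Or.inr (Or.inl ⟨?_, k1.le, k1a⟩))
          field_simp; ring
        · refine memTΦ _ _ (Or.inr (Or.inl ⟨?_, k2.le, k2a⟩))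
          field_simp; ring
        · exact memTΦ _ _ (Or.inr (Or.inr ⟨rfl, k2.le, k2b⟩))
        · exact memTΦ _ _ (Or.inl ⟨rfl, k3.le, k3a⟩)
        · rw [hΦdiff, hΦdiff]; module
        · rw [hΦdiff, hΦdiff, hrotψ]; module
        · exact hΦne _ _ (fun h => by
            rw [Prod.mk.injEq] at h; obtain ⟨h1, -⟩ := h
            rw [div_eq_div_iff hDne hDne] at h1
            nlinarith [mul_pos (mul_pos (mul_pos ha ha) hb) hDpos])
        · exact hΦne _ _ (fun h => by
            rw [Prod.mk.injEq] at h; obtain ⟨h1, -⟩ := h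
            rw [← h1] at k1; field_simp at k1; linarith)
        · exact hΦne _ _ (fun h => by
            rw [Prod.mk.injEq] at h; obtain ⟨-, h2⟩ := h
            rw [h2] at k3; field_simp at k3; linarith)
        · exact hΦne _ _ (fun h => by
            rw [Prod.mk.injEq] at h; obtain ⟨h1, -⟩ := h
            rw [← h1] at k2; field_simp at k2; linarith)
        · exact hΦne _ _ (fun h => by
            rw [Prod.mk.injEq] at h; obtain ⟨-, h2⟩ := h
            rw [← h2] at k1; field_simp at k1; linarith)
        · exact hΦne _ _ (fun h => by
            rw [Prod.mk.injEq] at h; obtain ⟨h1, -⟩ := h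
            rw [h1] at k3; field_simp at k3; linarith)
  rw [hset]
  refine Set.encard_pair ?_
  intro h
  have hp1 : Φ (0,0) ∈ Φ '' (RTSq.S1 a b) := ⟨(0,0), by rw [RTSq.S1]; left; rfl, rfl⟩
  rw [h] at hp1
  obtain ⟨c, hc, hceq⟩ := hp1
  have hc0 : c = (0,0) := hΦinj hceq
  subst hc0
  rw [RTSq.S2] at hc
  simp only [Set.mem_insert_iff, Set.mem_singleton_iff] at hc
  rcases hc with h' | h' | h' | h'
  · rw [Prod.mk.injEq] at h'
    obtain ⟨h1, -⟩ := h'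
    have : (0:ℝ) < a*b*(a+b)/(a^2+a*b+b^2) := by positivity
    rw [← h1] at this; exact lt_irrefl 0 this
  · rw [Prod.mk.injEq] at h'
    obtain ⟨h1, -⟩ := h'
    have : (0:ℝ) < a*b^2/(a^2+a*b+b^2) := by positivity
    rw [← h1] at this; exact lt_irrefl 0 this
  · rw [Prod.mk.injEq] at h'
    obtain ⟨-, h2⟩ := h'
    have : (0:ℝ) < a*b^2/(a^2+a*b+b^2) := by positivity
    rw [← h2] at this; exact lt_irrefl 0 this
  · rw [Prod.mk.injEq] at h'
    obtain ⟨h1, -⟩ := h'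
    have : (0:ℝ) < a^2*b/(a^2+a*b+b^2) := by positivity
    rw [← h1] at this; exact lt_irrefl 0 this

/-- The boundary of a right triangle has exactly two inscribed squares, counted
as unordered four-element vertex sets. -/
theorem right_triangle_two_inscribed_squares (p q r : Pt)
    (hncol : ¬ Collinear ℝ ({p, q, r} : Set Pt)) (hright : ⟪q - p, r - p⟫ = 0) :
    {s : Set Pt | ∃ a₁ a₂ a₃ a₄ : Pt,
      InscribedSquare (segment ℝ p q ∪ segment ℝ q r ∪ segment ℝ r p) a₁ a₂ a₃ a₄ ∧
      s = {a₁, a₂, a₃, a₄}}.encard = 2 := by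
  have hq : q ≠ p := by
    intro h'; subst h'; apply hncol
    have : ({q, q, r} : Set Pt) = {q, r} := by ext z; simp
    rw [this]; exact collinear_pair ℝ q r
  have hr : r ≠ p := by
    intro h'; subst h'; apply hncol
    have : ({r, q, r} : Set Pt) = {r, q} := by ext z; simp; tauto
    rw [this]; exact collinear_pair ℝ r q
  have hqp0 : q - p ≠ 0 := sub_ne_zero.mpr hq
  have hrp0 : r - p ≠ 0 := sub_ne_zero.mpr hr
  have he₁ : ‖‖q - p‖⁻¹ • (q - p)‖ = 1 := norm_smul_inv_norm hqp0
  have he₂ : ‖‖r - p‖⁻¹ • (r - p)‖ = 1 := norm_smul_inv_norm hrp0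
  have h12 : ⟪‖q - p‖⁻¹ • (q - p), ‖r - p‖⁻¹ • (r - p)⟫ = 0 := by
    rw [real_inner_smul_left, real_inner_smul_right, hright]; ring
  rcases orient he₁ he₂ h12 with h | h
  · exact aux p q r hncol hright h
  · have h' : rotCCW (‖r - p‖⁻¹ • (r - p)) = ‖q - p‖⁻¹ • (q - p) := by
      have h2 := congrArg rotCCW h
      rw [rotCCW_rotCCW, rotCCW_neg] at h2
      exact (neg_injective h2).symm
    have hncol' : ¬ Collinear ℝ ({p, r, q} : Set Pt) := by
      intro hcol; apply hncol
      have : ({p, q, r} : Set Pt) = {p, r, q} := by ext z; simp; tauto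
      rw [this]; exact hcol
    have hright' : ⟪r - p, q - p⟫ = 0 := by rw [real_inner_comm]; exact hright
    have hres := aux p r q hncol' hright' h'
    have hU : segment ℝ p r ∪ segment ℝ r q ∪ segment ℝ q p =
        segment ℝ p q ∪ segment ℝ q r ∪ segment ℝ r p := by
      rw [segment_symm ℝ p r, segment_symm ℝ r q, segment_symm ℝ q p]
      ext z; simp only [Set.mem_union]; tauto
    rw [hU] at hres
    exact hres
end
end

section
/- Let P be a simple polygon in ℝ² all of whose interior angles lie strictly between π/2 and 3π/2. Then there exists ε > 0 such that there is no triple of distinct points y, z, u ∈ P with |z − y| < ε, |u − y| < ε, |z − y| = |u − y|, and ⟪z − y, u − y⟫ = 0. In other words, P has no inscribed right isosceles triangles of arbitrarily small size. -/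
open scoped RealInnerProductSpace

noncomputable section

/-- `v : ZMod n → Pt` (with `3 ≤ n`) is a simple polygon: consecutive vertices are
distinct, consecutive edges meet exactly in their common vertex, and
non-consecutive edges are disjoint. -/
def IsSimplePolygon {n : ℕ} (v : ZMod n → Pt) : Prop :=
  3 ≤ n ∧
  (∀ i, v i ≠ v (i + 1)) ∧
  (∀ i : ZMod n,
    segment ℝ (v i) (v (i + 1)) ∩ segment ℝ (v (i + 1)) (v (i + 2)) = {v (i + 1)}) ∧
  (∀ i j : ZMod n, i ≠ j → i ≠ j + 1 → j ≠ i + 1 →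
    segment ℝ (v i) (v (i + 1)) ∩ segment ℝ (v j) (v (j + 1)) = ∅)

/-- The polygon itself: the union of its edges. -/
def polygonSet {n : ℕ} (v : ZMod n → Pt) : Set Pt :=
  ⋃ i : ZMod n, segment ℝ (v i) (v (i + 1))

/-- All interior angles of the polygon lie strictly between `π/2` and `3π/2`:
at every vertex `vᵢ` the inner product `⟪vᵢ₋₁ - vᵢ, vᵢ₊₁ - vᵢ⟫` is negative. -/
def ObtuseAngles {n : ℕ} (v : ZMod n → Pt) : Prop :=
  ∀ i : ZMod n, ⟪v (i - 1) - v i, v (i + 1) - v i⟫ < 0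

/-! ### Auxiliary material -/

lemma inner_self_pos' {a : Pt} (ha : a ≠ 0) : (0:ℝ) < ⟪a, a⟫ :=
  lt_of_le_of_ne real_inner_self_nonneg (fun h => ha (inner_self_eq_zero.mp h.symm))

/-- Union of two rays emanating from `q`. -/
def Rays (q a b : Pt) : Set Pt := {x | ∃ t : ℝ, 0 ≤ t ∧ (x = q + t • a ∨ x = q + t • b)}

lemma key4 (q a : Pt) (ha : a ≠ 0) (α β γ : ℝ)
    (hyz : q + α • a ≠ q + β • a) (hyu : q + α • a ≠ q + γ • a) :
    ⟪(q + β • a) - (q + α • a), (q + γ • a) - (q + α • a)⟫ ≠ 0 := by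
  have hA : (0:ℝ) < ⟪a, a⟫ := inner_self_pos' ha
  have h1 : (q + β • a) - (q + α • a) = (β - α) • a := by module
  have h2 : (q + γ • a) - (q + α • a) = (γ - α) • a := by module
  rw [h1, h2, real_inner_smul_left, real_inner_smul_right]
  intro h
  rcases mul_eq_zero.mp h with h' | h'
  · exact hyz (by rw [sub_eq_zero] at h'; rw [h'])
  · rcases mul_eq_zero.mp h' with h'' | h''
    · exact hyu (by rw [sub_eq_zero] at h''; rw [h''])
    · linarith

lemma key2 (q a b : Pt) (hab : ⟪a, b⟫ < 0) (α β γ : ℝ) (hα : 0 ≤ α) (hγ : 0 ≤ γ)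
    (hyz : q + α • a ≠ q + β • a) (hyu : q + α • a ≠ q + γ • b) :
    ⟪(q + β • a) - (q + α • a), (q + γ • b) - (q + α • a)⟫ ≠ 0 := by
  have ha : a ≠ 0 := fun h => by simp [h] at hab
  have hA : (0:ℝ) < ⟪a, a⟫ := inner_self_pos' ha
  have h1 : (q + β • a) - (q + α • a) = (β - α) • a := by module
  have h2 : (q + γ • b) - (q + α • a) = γ • b - α • a := by module
  have h3 : ⟪(β - α) • a, γ • b - α • a⟫ = (β - α) * (γ * ⟪a,b⟫ - α * ⟪a,a⟫) := by
    rw [inner_sub_right, real_inner_smul_left, real_inner_smul_left,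
      real_inner_smul_right, real_inner_smul_right]; ring
  rw [h1, h2, h3]
  intro h
  rcases mul_eq_zero.mp h with h' | h'
  · exact hyz (by rw [sub_eq_zero] at h'; rw [h'])
  · have hγC : γ * ⟪a,b⟫ ≤ 0 := mul_nonpos_of_nonneg_of_nonpos hγ hab.le
    have hαA : 0 ≤ α * ⟪a,a⟫ := mul_nonneg hα hA.le
    have hγ0 : γ * ⟪a,b⟫ = 0 := by linarith
    have hα0 : α * ⟪a,a⟫ = 0 := by linarith
    have : γ = 0 := by rcases mul_eq_zero.mp hγ0 with h|h; exact h; linarith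
    have hα' : α = 0 := by rcases mul_eq_zero.mp hα0 with h|h; exact h; linarith
    exact hyu (by rw [this, hα']; simp)

lemma key3 (q a b : Pt) (hab : ⟪a, b⟫ < 0) (α β γ : ℝ) (hα : 0 ≤ α) (hβ : 0 ≤ β) (hγ : 0 ≤ γ)
    (hyz : q + α • a ≠ q + β • b) (hyu : q + α • a ≠ q + γ • b) :
    ⟪(q + β • b) - (q + α • a), (q + γ • b) - (q + α • a)⟫ ≠ 0 := by
  have ha : a ≠ 0 := fun h => by simp [h] at hab
  have hb : b ≠ 0 := fun h => by simp [h] at hab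
  have hA : (0:ℝ) < ⟪a, a⟫ := inner_self_pos' ha
  have hB : (0:ℝ) < ⟪b, b⟫ := inner_self_pos' hb
  have h1 : (q + β • b) - (q + α • a) = β • b - α • a := by module
  have h2 : (q + γ • b) - (q + α • a) = γ • b - α • a := by module
  have h3 : ⟪β • b - α • a, γ • b - α • a⟫
      = β * γ * ⟪b,b⟫ - (β + γ) * α * ⟪a,b⟫ + α * α * ⟪a,a⟫ := by
    simp only [inner_sub_left, inner_sub_right, real_inner_smul_left,
      real_inner_smul_right, real_inner_comm b a]; ring
  rw [h1, h2, h3]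
  intro h
  have t1 : 0 ≤ β * γ * ⟪b,b⟫ := by positivity
  have t2 : 0 ≤ -((β + γ) * α * ⟪a,b⟫) := by
    have : (β + γ) * α * ⟪a,b⟫ ≤ 0 :=
      mul_nonpos_of_nonneg_of_nonpos (by positivity) hab.le
    linarith
  have t3 : 0 ≤ α * α * ⟪a,a⟫ := by positivity
  have hαA : α * α * ⟪a,a⟫ = 0 := by linarith
  have hα0 : α = 0 := by
    rcases mul_eq_zero.mp hαA with h'|h'
    · exact mul_self_eq_zero.mp h'
    · linarith
  have hβγ : β * γ * ⟪b,b⟫ = 0 := by nlinarith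
  have : β * γ = 0 := by
    rcases mul_eq_zero.mp hβγ with h'|h'; exact h'; linarith
  rcases mul_eq_zero.mp this with h'|h'
  · exact hyz (by rw [hα0, h']; simp)
  · exact hyu (by rw [hα0, h']; simp)

lemma key1 (q a b : Pt) (hab : ⟪a, b⟫ < 0) (y z u : Pt)
    (hy : ∃ α : ℝ, 0 ≤ α ∧ y = q + α • a)
    (hz : ∃ β : ℝ, 0 ≤ β ∧ (z = q + β • a ∨ z = q + β • b))
    (hu : ∃ γ : ℝ, 0 ≤ γ ∧ (u = q + γ • a ∨ u = q + γ • b))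
    (hyz : y ≠ z) (hyu : y ≠ u) :
    ⟪z - y, u - y⟫ ≠ 0 := by
  have ha : a ≠ 0 := fun h => by simp [h] at hab
  obtain ⟨α, hα, rfl⟩ := hy
  obtain ⟨β, hβ, hz⟩ := hz
  obtain ⟨γ, hγ, hu⟩ := hu
  rcases hz with rfl | rfl <;> rcases hu with rfl | rfl
  · exact key4 q a ha α β γ hyz hyu
  · exact key2 q a b hab α β γ hα hγ hyz hyu
  · rw [real_inner_comm]
    exact key2 q a b hab α γ β hα hβ hyu hyz
  · exact key3 q a b hab α β γ hα hβ hγ hyz hyu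

lemma key (q a b : Pt) (hab : ⟪a, b⟫ < 0) (y z u : Pt)
    (hy : y ∈ Rays q a b) (hz : z ∈ Rays q a b) (hu : u ∈ Rays q a b)
    (hyz : y ≠ z) (hyu : y ≠ u) :
    ⟪z - y, u - y⟫ ≠ 0 := by
  obtain ⟨α, hα, hy⟩ := hy
  have hab' : ⟪b, a⟫ < 0 := by rwa [real_inner_comm]
  obtain ⟨β, hβ, hz⟩ := hz
  obtain ⟨γ, hγ, hu⟩ := hu
  rcases hy with rfl | rfl
  · exact key1 q a b hab _ z u ⟨α, hα, rfl⟩ ⟨β, hβ, hz⟩ ⟨γ, hγ, hu⟩ hyz hyu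
  · exact key1 q b a hab' _ z u ⟨α, hα, rfl⟩ ⟨β, hβ, hz.symm⟩ ⟨γ, hγ, hu.symm⟩ hyz hyu

lemma isCompact_seg (A B : Pt) : IsCompact (segment ℝ A B) := by
  rw [segment_eq_image']
  exact isCompact_Icc.image (by continuity)

lemma mem_seg_iff {A B x : Pt} :
    x ∈ segment ℝ A B ↔ ∃ t : ℝ, 0 ≤ t ∧ t ≤ 1 ∧ x = A + t • (B - A) := by
  rw [segment_eq_image']
  constructor
  · rintro ⟨t, ⟨ht0, ht1⟩, rfl⟩; exact ⟨t, ht0, ht1, rfl⟩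
  · rintro ⟨t, ht0, ht1, rfl⟩; exact ⟨t, ⟨ht0, ht1⟩, rfl⟩

/-- Local structure of the polygon: near any point, the polygon is contained in a
union of two rays making an obtuse angle. -/
lemma local_struct {n : ℕ} (v : ZMod n → Pt) (hP : IsSimplePolygon v) (hA : ObtuseAngles v)
    (p : Pt) (hp : p ∈ polygonSet v) :
    ∃ ε > (0:ℝ), ∃ q a b : Pt, ⟪a, b⟫ < 0 ∧
      Metric.ball p ε ∩ polygonSet v ⊆ Rays q a b := by
  obtain ⟨hn3, hne, hcons, hdisj⟩ := hP
  haveI : NeZero n := ⟨by omega⟩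
  obtain ⟨i, hpi⟩ : ∃ i : ZMod n, p ∈ segment ℝ (v i) (v (i + 1)) := Set.mem_iUnion.mp hp
  by_cases hv : ∃ j : ZMod n, p = v j
  · -- vertex case
    obtain ⟨j, rfl⟩ := hv
    set K : Set Pt :=
      ⋃ k ∈ {k : ZMod n | k ≠ j ∧ k ≠ j - 1}, segment ℝ (v k) (v (k + 1)) with hKdef
    have hKclosed : IsClosed K :=
      Set.Finite.isClosed_biUnion (Set.toFinite _) (fun k _ => (isCompact_seg _ _).isClosed)
    have hpK : v j ∉ K := by
      intro h
      obtain ⟨k, hk, hmem⟩ := Set.mem_iUnion₂.mp h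
      obtain ⟨hk1, hk2⟩ := hk
      have hj : v j ∈ segment ℝ (v j) (v (j + 1)) := left_mem_segment ℝ _ _
      by_cases hk3 : k = j + 1
      · subst hk3
        have e : j + 1 + 1 = j + 2 := by ring
        rw [e] at hmem
        have h2 : v j ∈ ({v (j + 1)} : Set Pt) := (hcons j) ▸ ⟨hj, hmem⟩
        exact hne j (Set.mem_singleton_iff.mp h2)
      · have hd := hdisj j k (Ne.symm hk1) (fun h => hk2 (by rw [h]; ring)) hk3
        exact Set.eq_empty_iff_forall_notMem.mp hd _ ⟨hj, hmem⟩
    obtain ⟨ε, hε, hball⟩ :=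
      Metric.isOpen_iff.mp hKclosed.isOpen_compl _ hpK
    refine ⟨ε, hε, v j, v (j - 1) - v j, v (j + 1) - v j, hA j, ?_⟩
    rintro x ⟨hxball, hxpoly⟩
    obtain ⟨k, hxk⟩ := Set.mem_iUnion.mp hxpoly
    by_cases h1 : k = j
    · subst h1
      obtain ⟨t, ht0, _, rfl⟩ := mem_seg_iff.mp hxk
      exact ⟨t, ht0, Or.inr rfl⟩
    · by_cases h2 : k = j - 1
      · subst h2
        have hj1 : (j - 1) + 1 = j := by ring
        rw [hj1, segment_symm] at hxk
        obtain ⟨t, ht0, _, rfl⟩ := mem_seg_iff.mp hxk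
        exact ⟨t, ht0, Or.inl rfl⟩
      · exact absurd (Set.mem_biUnion (show k ∈ {k : ZMod n | k ≠ j ∧ k ≠ j - 1} from ⟨h1, h2⟩) hxk)
          (hball hxball)
  · -- non-vertex case
    push_neg at hv
    set K : Set Pt := ⋃ k ∈ {k : ZMod n | k ≠ i}, segment ℝ (v k) (v (k + 1)) with hKdef
    have hKclosed : IsClosed K :=
      Set.Finite.isClosed_biUnion (Set.toFinite _) (fun k _ => (isCompact_seg _ _).isClosed)
    have hpK : p ∉ K := by
      intro h
      obtain ⟨k, hk1, hmem⟩ := Set.mem_iUnion₂.mp h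
      by_cases hk3 : k = i + 1
      · subst hk3
        have e : i + 1 + 1 = i + 2 := by ring
        rw [e] at hmem
        have h2 : p ∈ ({v (i + 1)} : Set Pt) := (hcons i) ▸ ⟨hpi, hmem⟩
        exact hv _ (Set.mem_singleton_iff.mp h2)
      · by_cases hk4 : i = k + 1
        · subst hk4
          have e : k + 1 + 1 = k + 2 := by ring
          rw [e] at hpi
          have h2 : p ∈ ({v (k + 1)} : Set Pt) := (hcons k) ▸ ⟨hmem, hpi⟩
          exact hv _ (Set.mem_singleton_iff.mp h2)
        · have hd := hdisj i k (Ne.symm hk1) hk4 hk3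
          exact Set.eq_empty_iff_forall_notMem.mp hd _ ⟨hpi, hmem⟩
    obtain ⟨ε, hε, hball⟩ := Metric.isOpen_iff.mp hKclosed.isOpen_compl _ hpK
    obtain ⟨s, hs0, hs1, rfl⟩ := mem_seg_iff.mp hpi
    set d : Pt := v (i + 1) - v i with hd
    have hdne : d ≠ 0 := sub_ne_zero.mpr (hne i).symm
    refine ⟨ε, hε, v i + s • d, d, -d, ?_, ?_⟩
    · rw [inner_neg_right]
      have := inner_self_pos' hdne
      linarith
    rintro x ⟨hxball, hxpoly⟩
    obtain ⟨k, hxk⟩ := Set.mem_iUnion.mp hxpoly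
    by_cases h1 : k = i
    · subst h1
      obtain ⟨t, ht0, _, rfl⟩ := mem_seg_iff.mp hxk
      rcases le_or_gt s t with h | h
      · exact ⟨t - s, by linarith, Or.inl (by module)⟩
      · exact ⟨s - t, by linarith, Or.inr (by module)⟩
    · exact absurd (Set.mem_biUnion (show k ∈ {k : ZMod n | k ≠ i} from h1) hxk)
        (hball hxball)

/-- A simple polygon all of whose interior angles lie strictly between `π/2` and
`3π/2` has no inscribed right isosceles triangles of arbitrarily small size. -/
theorem no_small_inscribed_right_isosceles {n : ℕ} (v : ZMod n → Pt)
    (hP : IsSimplePolygon v) (hA : ObtuseAngles v) :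
    ∃ ε > (0 : ℝ), ¬ ∃ y z u : Pt,
      y ∈ polygonSet v ∧ z ∈ polygonSet v ∧ u ∈ polygonSet v ∧
      y ≠ z ∧ y ≠ u ∧ z ≠ u ∧ ‖z - y‖ < ε ∧ ‖u - y‖ < ε ∧
      ‖z - y‖ = ‖u - y‖ ∧ ⟪z - y, u - y⟫ = 0 := by
  haveI : NeZero n := ⟨by have := hP.1; omega⟩
  have hcompact : IsCompact (polygonSet v) :=
    isCompact_iUnion (fun i => isCompact_seg _ _)
  have H : ∀ p : polygonSet v, ∃ ε > (0:ℝ), ∃ q a b : Pt, ⟪a, b⟫ < 0 ∧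
      Metric.ball (p : Pt) ε ∩ polygonSet v ⊆ Rays q a b :=
    fun p => local_struct v hP hA p p.2
  choose ε hε q a b hab hsub using H
  have hcover : polygonSet v ⊆ ⋃ p : polygonSet v, Metric.ball (p : Pt) (ε p) :=
    fun x hx => Set.mem_iUnion.mpr ⟨⟨x, hx⟩, Metric.mem_ball_self (hε _)⟩
  obtain ⟨δ, hδ, hcov⟩ :=
    lebesgue_number_lemma_of_metric hcompact (fun _ => Metric.isOpen_ball) hcover
  refine ⟨δ, hδ, ?_⟩
  rintro ⟨y, z, u, hy, hz, hu, hyz, hyu, hzu, hzn, hun, _, hinner⟩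
  obtain ⟨p, hball⟩ := hcov y hy
  have hyb : y ∈ Metric.ball y δ := Metric.mem_ball_self hδ
  have hzb : z ∈ Metric.ball y δ := by rw [Metric.mem_ball, dist_eq_norm]; exact hzn
  have hub : u ∈ Metric.ball y δ := by rw [Metric.mem_ball, dist_eq_norm]; exact hun
  exact key (q p) (a p) (b p) (hab p) y z u
    (hsub p ⟨hball hyb, hy⟩) (hsub p ⟨hball hzb, hz⟩) (hsub p ⟨hball hub, hu⟩)
    hyz hyu hinner
end
end

section
/- Every simple polygon P in ℝ² has an inscribed right isosceles triangle: there exist three distinct points y, z, u ∈ P with |z − y| = |u − y| and ⟪z − y, u − y⟫ = 0. -/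
open scoped RealInnerProductSpace

noncomputable section

namespace IRT
open Filter Set

/-- generic abscissa functional -/
def xi (t : ℝ) (x : Pt) : ℝ := x 0 + t * x 1

lemma continuous_coord (i : Fin 2) : Continuous (fun x : Pt => x i) :=
  (EuclideanSpace.proj i : Pt →L[ℝ] ℝ).continuous

lemma continuous_xi (t : ℝ) : Continuous (xi t) :=
  (continuous_coord 0).add (continuous_const.mul (continuous_coord 1))

def Dd (t : ℝ) (p q x : Pt) : ℝ :=
  (xi t q - xi t p) * (x 1 - p 1) - (q 1 - p 1) * (xi t x - xi t p)

lemma continuous_Dd (t : ℝ) (p q : Pt) : Continuous (Dd t p q) := by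
  unfold Dd
  exact (continuous_const.mul ((continuous_coord 1).sub continuous_const)).sub
    (continuous_const.mul ((continuous_xi t).sub continuous_const))

def Cc (t : ℝ) (p q x : Pt) : Prop :=
  (xi t p ≤ xi t x ∧ xi t x < xi t q ∧ Dd t p q x < 0) ∨
  (xi t q ≤ xi t x ∧ xi t x < xi t p ∧ 0 < Dd t p q x)

open Classical in
def ind (t : ℝ) (p q x : Pt) : ZMod 2 := if Cc t p q x then 1 else 0

lemma mem_segment_iff' {x y z : Pt} :
    z ∈ segment ℝ x y ↔ ∃ s : ℝ, 0 ≤ s ∧ s ≤ 1 ∧ z = x + s • (y - x) := by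
  rw [segment_eq_image' ℝ x y]
  constructor
  · rintro ⟨s, ⟨h0, h1⟩, rfl⟩; exact ⟨s, h0, h1, rfl⟩
  · rintro ⟨s, h0, h1, rfl⟩; exact ⟨s, ⟨h0, h1⟩, rfl⟩

lemma coord_add_smul (i : Fin 2) (x y : Pt) (s : ℝ) : (x + s • y) i = x i + s * y i := by
  simp

lemma xi_add_smul (t s : ℝ) (x y : Pt) : xi t (x + s • y) = xi t x + s * xi t y := by
  simp [xi]; ring

/-- a point on the line with abscissa in range is on the segment -/
lemma mem_segment_of_Dd {t : ℝ} {p q x : Pt} (hpq : xi t p ≠ xi t q) (hD : Dd t p q x = 0)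
    (hb : (xi t p ≤ xi t x ∧ xi t x ≤ xi t q) ∨ (xi t q ≤ xi t x ∧ xi t x ≤ xi t p)) :
    x ∈ segment ℝ p q := by
  set s : ℝ := (xi t x - xi t p) / (xi t q - xi t p) with hs
  have hne : xi t q - xi t p ≠ 0 := sub_ne_zero.mpr (Ne.symm hpq)
  have hs0 : 0 ≤ s ∧ s ≤ 1 := by
    rcases hb with ⟨h1, h2⟩ | ⟨h1, h2⟩
    · have hlt : 0 < xi t q - xi t p := by
        rcases lt_or_eq_of_le (h1.trans h2) with h | h
        · linarith [h]
        · exact absurd h hpq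
      constructor
      · exact div_nonneg (by linarith) hlt.le
      · rw [div_le_one hlt]; linarith
    · have hlt : xi t q - xi t p < 0 := by
        rcases lt_or_eq_of_le (h1.trans h2) with h | h
        · linarith
        · exact absurd h.symm hpq
      constructor
      · rw [div_nonneg_iff]; right; exact ⟨by linarith, hlt.le⟩
      · rw [div_le_one_iff]; right; right; exact ⟨hlt, by linarith⟩
  have hx1 : x 1 = p 1 + s * (q 1 - p 1) := by
    have : (xi t q - xi t p) * (x 1 - p 1) = (q 1 - p 1) * (xi t x - xi t p) := by
      unfold Dd at hD; linarith
    rw [hs, ← sub_eq_iff_eq_add', div_mul_eq_mul_div, eq_div_iff hne]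
    linear_combination this
  have hxi : xi t x = xi t p + s * (xi t q - xi t p) := by
    rw [hs, div_mul_cancel₀ _ hne]; ring
  have hx0 : x 0 = p 0 + s * (q 0 - p 0) := by
    have e1 : x 0 = xi t x - t * x 1 := by simp [xi]
    have e2 : xi t q - xi t p = (q 0 - p 0) + t * (q 1 - p 1) := by simp [xi]; ring
    rw [e1, hxi, hx1, e2]; simp [xi]; ring
  rw [mem_segment_iff']
  refine ⟨s, hs0.1, hs0.2, ?_⟩
  ext i
  fin_cases i
  · rw [coord_add_smul]; simpa using hx0
  · rw [coord_add_smul]; simpa using hx1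

lemma coords_inj {t : ℝ} {x y : Pt} (h1 : xi t x = xi t y) (h2 : x 1 = y 1) : x = y := by
  have h0 : x 0 = y 0 := by unfold xi at h1; rw [h2] at h1; linarith
  ext i; fin_cases i <;> assumption

lemma eventually_lt_xi {t r : ℝ} {x0 : Pt} (h : xi t x0 < r) : ∀ᶠ y in nhds x0, xi t y < r :=
  (continuous_xi t).continuousAt.eventually_lt continuousAt_const h

lemma eventually_gt_xi {t r : ℝ} {x0 : Pt} (h : r < xi t x0) : ∀ᶠ y in nhds x0, r < xi t y :=
  continuousAt_const.eventually_lt (continuous_xi t).continuousAt h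

lemma eventually_Dd_neg {t : ℝ} {p q : Pt} {x0 : Pt} (h : Dd t p q x0 < 0) :
    ∀ᶠ y in nhds x0, Dd t p q y < 0 :=
  (continuous_Dd t p q).continuousAt.eventually_lt continuousAt_const h

lemma eventually_Dd_pos {t : ℝ} {p q : Pt} {x0 : Pt} (h : 0 < Dd t p q x0) :
    ∀ᶠ y in nhds x0, 0 < Dd t p q y :=
  continuousAt_const.eventually_lt (continuous_Dd t p q).continuousAt h

lemma DdA {t : ℝ} {p q x0 : Pt} (h1 : xi t p = xi t x0) :
    Dd t p q x0 = (xi t q - xi t x0) * (x0 1 - p 1) := by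
  unfold Dd; rw [h1]; ring

lemma DdB {t : ℝ} {p q x0 : Pt} (h1 : xi t q = xi t x0) :
    Dd t p q x0 = (xi t x0 - xi t p) * (x0 1 - q 1) := by
  unfold Dd; rw [h1]; ring

lemma caseA {t : ℝ} {p q x0 : Pt} (hpq : xi t p ≠ xi t q)
    (h1 : xi t p = xi t x0) (h2 : x0 1 < p 1) :
    ∀ᶠ y in nhds x0, ind t p q y =
      (if xi t x0 ≤ xi t y then 1 else 0) + (if xi t x0 < xi t q then 0 else 1) := by
  have hD0 : Dd t p q x0 = (xi t q - xi t x0) * (x0 1 - p 1) := DdA h1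
  have hqc : xi t q ≠ xi t x0 := fun h => hpq (h1.trans h.symm)
  rcases hqc.lt_or_gt with hlt | hgt
  · have hDpos : 0 < Dd t p q x0 := by rw [hD0]; nlinarith
    filter_upwards [eventually_gt_xi hlt, eventually_Dd_pos hDpos] with y hy1 hy2
    rw [if_neg (by linarith : ¬ xi t x0 < xi t q)]
    by_cases hc : xi t y < xi t x0
    · have hCc : Cc t p q y := Or.inr ⟨hy1.le, by rw [h1]; exact hc, hy2⟩
      rw [ind, if_pos hCc, if_neg (not_le.mpr hc)]; decide
    · have hCc : ¬ Cc t p q y := by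
        rintro (⟨_, hlt2, _⟩ | ⟨_, hlt2, _⟩)
        · exact absurd hlt2 (not_lt.mpr hy1.le)
        · rw [h1] at hlt2; exact hc hlt2
      rw [ind, if_neg hCc, if_pos (not_lt.mp hc)]; decide
  · have hDneg : Dd t p q x0 < 0 := by rw [hD0]; nlinarith
    filter_upwards [eventually_lt_xi hgt, eventually_Dd_neg hDneg] with y hy1 hy2
    rw [if_pos hgt]
    by_cases hc : xi t x0 ≤ xi t y
    · have hCc : Cc t p q y := Or.inl ⟨h1 ▸ hc, hy1, hy2⟩
      rw [ind, if_pos hCc, if_pos hc]; decide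
    · have hCc : ¬ Cc t p q y := by
        rintro (⟨hle2, _, _⟩ | ⟨hle2, _, _⟩)
        · rw [h1] at hle2; exact hc hle2
        · exact hc (le_trans hgt.le hle2)
      rw [ind, if_neg hCc, if_neg hc]; decide

lemma caseB {t : ℝ} {p q x0 : Pt} (hpq : xi t p ≠ xi t q)
    (h1 : xi t q = xi t x0) (h2 : x0 1 < q 1) :
    ∀ᶠ y in nhds x0, ind t p q y =
      (if xi t x0 ≤ xi t y then 1 else 0) + (if xi t x0 < xi t p then 0 else 1) := by
  have hD0 : Dd t p q x0 = (xi t x0 - xi t p) * (x0 1 - q 1) := DdB h1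
  have hpc : xi t p ≠ xi t x0 := fun h => hpq (h.trans h1.symm)
  rcases hpc.lt_or_gt with hlt | hgt
  · -- ξ p < c : D x0 < 0, Cc ↔ ξ y < c
    have hDneg : Dd t p q x0 < 0 := by rw [hD0]; nlinarith
    filter_upwards [eventually_gt_xi hlt, eventually_Dd_neg hDneg] with y hy1 hy2
    rw [if_neg (by linarith : ¬ xi t x0 < xi t p)]
    by_cases hc : xi t y < xi t x0
    · have hCc : Cc t p q y := Or.inl ⟨hy1.le, by rw [h1]; exact hc, hy2⟩
      rw [ind, if_pos hCc, if_neg (not_le.mpr hc)]; decide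
    · have hCc : ¬ Cc t p q y := by
        rintro (⟨_, hlt2, _⟩ | ⟨_, hlt2, _⟩)
        · rw [h1] at hlt2; exact hc hlt2
        · exact absurd hlt2 (not_lt.mpr hy1.le)
      rw [ind, if_neg hCc, if_pos (not_lt.mp hc)]; decide
  · -- ξ p > c : D x0 > 0, Cc ↔ c ≤ ξ y
    have hDpos : 0 < Dd t p q x0 := by rw [hD0]; nlinarith
    filter_upwards [eventually_lt_xi hgt, eventually_Dd_pos hDpos] with y hy1 hy2
    rw [if_pos hgt]
    by_cases hc : xi t x0 ≤ xi t y
    · have hCc : Cc t p q y := Or.inr ⟨h1 ▸ hc, hy1, hy2⟩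
      rw [ind, if_pos hCc, if_pos hc]; decide
    · have hCc : ¬ Cc t p q y := by
        rintro (⟨hle2, _, _⟩ | ⟨hle2, _, _⟩)
        · exact hc (le_trans hgt.le hle2)
        · rw [h1] at hle2; exact hc hle2
      rw [ind, if_neg hCc, if_neg hc]; decide

lemma caseN {t : ℝ} {p q x0 : Pt} (hpq : xi t p ≠ xi t q) (hx : x0 ∉ segment ℝ p q)
    (hA : ¬(xi t p = xi t x0 ∧ x0 1 < p 1)) (hB : ¬(xi t q = xi t x0 ∧ x0 1 < q 1)) :
    ∀ᶠ y in nhds x0, ind t p q y = ind t p q x0 := by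
  by_cases hp : xi t p = xi t x0
  · have hqc : xi t q ≠ xi t x0 := fun h => hpq (hp.trans h.symm)
    -- from hA : p 1 ≤ x0 1, and p ≠ x0 so p 1 < x0 1
    have hple : ¬ x0 1 < p 1 := fun h => hA ⟨hp, h⟩
    have hpne : p ≠ x0 := fun h => hx (h ▸ left_mem_segment ℝ p q)
    have hp1 : p 1 < x0 1 := by
      rcases lt_or_eq_of_le (not_lt.mp hple) with h | h
      · exact h
      · exact absurd (coords_inj hp h) hpne
    have hD0 : Dd t p q x0 = (xi t q - xi t x0) * (x0 1 - p 1) := DdA hp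
    rcases hqc.lt_or_gt with hlt | hgt
    · have hDneg : Dd t p q x0 < 0 := by rw [hD0]; nlinarith
      filter_upwards [eventually_gt_xi hlt, eventually_Dd_neg hDneg] with y hy1 hy2
      have hCy : ¬ Cc t p q y := by
        rintro (⟨_, h2, _⟩ | ⟨_, _, h3⟩)
        · linarith
        · linarith
      have hCx : ¬ Cc t p q x0 := by
        rintro (⟨_, h2, _⟩ | ⟨_, _, h3⟩)
        · linarith
        · linarith
      simp only [ind]; rw [if_neg hCy, if_neg hCx]
    · have hDpos : 0 < Dd t p q x0 := by rw [hD0]; nlinarith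
      filter_upwards [eventually_lt_xi hgt, eventually_Dd_pos hDpos] with y hy1 hy2
      have hCy : ¬ Cc t p q y := by
        rintro (⟨_, _, h3⟩ | ⟨h2, _, _⟩)
        · linarith
        · linarith
      have hCx : ¬ Cc t p q x0 := by
        rintro (⟨_, _, h3⟩ | ⟨h2, _, _⟩)
        · linarith
        · linarith
      simp only [ind]; rw [if_neg hCy, if_neg hCx]
  · by_cases hq : xi t q = xi t x0
    · have hqle : ¬ x0 1 < q 1 := fun h => hB ⟨hq, h⟩
      have hqne : q ≠ x0 := fun h => hx (h ▸ right_mem_segment ℝ p q)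
      have hq1 : q 1 < x0 1 := by
        rcases lt_or_eq_of_le (not_lt.mp hqle) with h | h
        · exact h
        · exact absurd (coords_inj hq h) hqne
      have hD0 : Dd t p q x0 = (xi t x0 - xi t p) * (x0 1 - q 1) := DdB hq
      rcases (Ne.lt_or_gt hp) with hlt | hgt
      · -- ξ p < c : D x0 > 0
        have hDpos : 0 < Dd t p q x0 := by rw [hD0]; nlinarith
        filter_upwards [eventually_gt_xi hlt, eventually_Dd_pos hDpos] with y hy1 hy2
        have hCy : ¬ Cc t p q y := by
          rintro (⟨_, _, h3⟩ | ⟨_, h2, _⟩)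
          · linarith
          · linarith
        have hCx : ¬ Cc t p q x0 := by
          rintro (⟨_, _, h3⟩ | ⟨_, h2, _⟩)
          · linarith
          · linarith
        simp only [ind]; rw [if_neg hCy, if_neg hCx]
      · have hDneg : Dd t p q x0 < 0 := by rw [hD0]; nlinarith
        filter_upwards [eventually_lt_xi hgt, eventually_Dd_neg hDneg] with y hy1 hy2
        have hCy : ¬ Cc t p q y := by
          rintro (⟨h2, _, _⟩ | ⟨_, _, h3⟩)
          · linarith
          · linarith
        have hCx : ¬ Cc t p q x0 := by
          rintro (⟨h2, _, _⟩ | ⟨_, _, h3⟩)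
          · linarith
          · linarith
        simp only [ind]; rw [if_neg hCy, if_neg hCx]
    · -- both abscissas differ from c
      rcases (Ne.lt_or_gt hp) with hplt | hpgt <;> rcases (Ne.lt_or_gt hq) with hqlt | hqgt
      · -- ξp < c, ξq < c
        filter_upwards [eventually_gt_xi hplt, eventually_gt_xi hqlt] with y hy1 hy2
        have hCy : ¬ Cc t p q y := by
          rintro (⟨_, h2, _⟩ | ⟨_, h2, _⟩) <;> linarith
        have hCx : ¬ Cc t p q x0 := by
          rintro (⟨_, h2, _⟩ | ⟨_, h2, _⟩) <;> linarith
        simp only [ind]; rw [if_neg hCy, if_neg hCx]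
      · -- ξp < c < ξq : strictly between
        have hDne : Dd t p q x0 ≠ 0 := by
          intro h
          exact hx (mem_segment_of_Dd hpq h (Or.inl ⟨hplt.le, hqgt.le⟩))
        rcases hDne.lt_or_gt with hDneg | hDpos
        · filter_upwards [eventually_gt_xi hplt, eventually_lt_xi hqgt,
            eventually_Dd_neg hDneg] with y hy1 hy2 hy3
          have hCy : Cc t p q y := Or.inl ⟨hy1.le, hy2, hy3⟩
          have hCx : Cc t p q x0 := Or.inl ⟨hplt.le, hqgt, hDneg⟩
          simp only [ind]; rw [if_pos hCy, if_pos hCx]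
        · filter_upwards [eventually_gt_xi hplt, eventually_lt_xi hqgt,
            eventually_Dd_pos hDpos] with y hy1 hy2 hy3
          have hCy : ¬ Cc t p q y := by
            rintro (⟨_, _, h3⟩ | ⟨h2, _, _⟩) <;> linarith
          have hCx : ¬ Cc t p q x0 := by
            rintro (⟨_, _, h3⟩ | ⟨h2, _, _⟩) <;> linarith
          simp only [ind]; rw [if_neg hCy, if_neg hCx]
      · -- ξq < c < ξp
        have hDne : Dd t p q x0 ≠ 0 := by
          intro h
          exact hx (mem_segment_of_Dd hpq h (Or.inr ⟨hqlt.le, hpgt.le⟩))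
        rcases hDne.lt_or_gt with hDneg | hDpos
        · filter_upwards [eventually_gt_xi hqlt, eventually_lt_xi hpgt,
            eventually_Dd_neg hDneg] with y hy1 hy2 hy3
          have hCy : ¬ Cc t p q y := by
            rintro (⟨h2, _, _⟩ | ⟨_, _, h3⟩) <;> linarith
          have hCx : ¬ Cc t p q x0 := by
            rintro (⟨h2, _, _⟩ | ⟨_, _, h3⟩) <;> linarith
          simp only [ind]; rw [if_neg hCy, if_neg hCx]
        · filter_upwards [eventually_gt_xi hqlt, eventually_lt_xi hpgt,
            eventually_Dd_pos hDpos] with y hy1 hy2 hy3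
          have hCy : Cc t p q y := Or.inr ⟨hy1.le, hy2, hy3⟩
          have hCx : Cc t p q x0 := Or.inr ⟨hqlt.le, hpgt, hDpos⟩
          simp only [ind]; rw [if_pos hCy, if_pos hCx]
      · -- c < ξp, c < ξq
        filter_upwards [eventually_lt_xi hpgt, eventually_lt_xi hqgt] with y hy1 hy2
        have hCy : ¬ Cc t p q y := by
          rintro (⟨h2, _, _⟩ | ⟨h2, _, _⟩) <;> linarith
        have hCx : ¬ Cc t p q x0 := by
          rintro (⟨h2, _, _⟩ | ⟨h2, _, _⟩) <;> linarith
        simp only [ind]; rw [if_neg hCy, if_neg hCx]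

open Classical in
def Wf {n : ℕ} [NeZero n] (v : ZMod n → Pt) (S : Finset (ZMod n)) (t : ℝ) (x : Pt) : ZMod 2 :=
  ∑ i ∈ S, ind t (v i) (v (i + 1)) x

lemma zmod2_cancel : ∀ a b k : ZMod 2, (a + k) + (b + k) = a + b := by decide

lemma zmod2_eq_of_add_eq_zero : ∀ {a b : ZMod 2}, a + b = 0 → a = b := by decide

lemma sum_lc {n : ℕ} [NeZero n] (v : ZMod n → Pt) (S : Finset (ZMod n)) (t : ℝ) (x0 : Pt)
    (hgen : ∀ i, xi t (v i) ≠ xi t (v (i + 1)))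
    (hS : ∀ i ∈ S, x0 ∉ segment ℝ (v i) (v (i + 1)))
    (hcl : ∀ k : ZMod n, xi t (v k) = xi t x0 → x0 1 < (v k) 1 → ((k - 1) ∈ S ↔ k ∈ S)) :
    ∀ᶠ y in nhds x0, Wf v S t y = Wf v S t x0 := by
  classical
  set c := xi t x0 with hc
  set crit : ZMod n → Prop := fun k => xi t (v k) = c ∧ x0 1 < v k 1 with hcrit
  set m : ZMod n → Pt → ZMod 2 := fun i y =>
    if crit i then (if c ≤ xi t y then 1 else 0) + (if c < xi t (v (i+1)) then 0 else 1)
    else if crit (i+1) then (if c ≤ xi t y then 1 else 0) + (if c < xi t (v i) then 0 else 1)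
    else ind t (v i) (v (i+1)) x0 with hm
  have hev : ∀ᶠ y in nhds x0, ∀ i : ZMod n, i ∈ S → ind t (v i) (v (i+1)) y = m i y := by
    rw [Filter.eventually_all]
    intro i
    by_cases hiS : i ∈ S
    · by_cases h1 : crit i
      · filter_upwards [caseA (hgen i) h1.1 h1.2] with y hy _
        rw [hy]; simp only [hm, if_pos h1]; rfl
      · by_cases h2 : crit (i+1)
        · filter_upwards [caseB (hgen i) h2.1 h2.2] with y hy _
          rw [hy]; simp only [hm, if_neg h1, if_pos h2]; rfl
        · filter_upwards [caseN (hgen i) (hS i hiS) h1 h2] with y hy _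
          rw [hy]; simp only [hm, if_neg h1, if_neg h2]
    · filter_upwards with y h
      exact absurd h hiS
  have hx0 : ∀ i ∈ S, ind t (v i) (v (i+1)) x0 = m i x0 := hev.self_of_nhds
  filter_upwards [hev] with y hy
  unfold Wf
  rw [Finset.sum_congr rfl (fun i hi => hy i hi), Finset.sum_congr rfl hx0]
  -- pure algebra now
  have hexcl : ∀ i : ZMod n, ¬ (crit i ∧ crit (i + 1)) := by
    rintro i ⟨h1, h2⟩
    exact hgen i (h1.1.trans h2.1.symm)
  set w : ZMod 2 := (if c ≤ xi t y then 1 else 0) + 1 with hw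
  have hux0 : (if c ≤ xi t x0 then (1 : ZMod 2) else 0) = 1 := if_pos le_rfl
  have step1 : ∀ i : ZMod n, m i y + m i x0 = if crit i ∨ crit (i+1) then w else 0 := by
    intro i
    by_cases h1 : crit i
    · simp only [hm, if_pos h1, if_pos (Or.inl h1)]
      rw [zmod2_cancel _ _ _, ← hc, hux0]
    · by_cases h2 : crit (i+1)
      · simp only [hm, if_neg h1, if_pos h2, if_pos (Or.inr h2)]
        rw [zmod2_cancel _ _ _, ← hc, hux0]
      · have hno : ¬ (crit i ∨ crit (i+1)) := fun h => Or.elim h h1 h2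
        simp only [hm, if_neg h1, if_neg h2, if_neg hno]
        exact CharTwo.add_self_eq_zero _
  suffices hsum : (∑ i ∈ S, m i y) + (∑ i ∈ S, m i x0) = 0 by
    exact zmod2_eq_of_add_eq_zero hsum
  rw [← Finset.sum_add_distrib]
  rw [Finset.sum_congr rfl (fun i _ => step1 i)]
  have split : ∀ i : ZMod n, (if crit i ∨ crit (i+1) then w else 0)
      = (if crit i then w else 0) + (if crit (i+1) then w else 0) := by
    intro i
    by_cases h1 : crit i
    · rw [if_pos (Or.inl h1), if_pos h1, if_neg (fun h2 => hexcl i ⟨h1, h2⟩), add_zero]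
    · by_cases h2 : crit (i+1)
      · rw [if_pos (Or.inr h2), if_neg h1, if_pos h2, zero_add]
      · rw [if_neg (fun h => h.elim h1 h2), if_neg h1, if_neg h2, add_zero]
  rw [Finset.sum_congr rfl (fun i _ => split i), Finset.sum_add_distrib]
  have ext1 : ∀ f : ZMod n → ZMod 2, (∑ i ∈ S, f i) = ∑ i : ZMod n, (if i ∈ S then f i else 0) := by
    intro f
    rw [Finset.sum_ite_mem, Finset.univ_inter]
  rw [ext1 (fun i => if crit i then w else 0), ext1 (fun i => if crit (i+1) then w else 0)]
  have reidx : (∑ i : ZMod n, (if i ∈ S then (if crit (i+1) then w else 0) else 0))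
      = ∑ j : ZMod n, (if j ∈ S then (if crit j then w else 0) else 0) := by
    rw [Fintype.sum_equiv (Equiv.addRight (1 : ZMod n))
      (fun i => if i ∈ S then (if crit (i+1) then w else 0) else 0)
      (fun j => if (j - 1) ∈ S then (if crit j then w else 0) else 0)
      (fun i => by simp; congr)]
    apply Finset.sum_congr rfl
    intro j _
    by_cases hcj : crit j
    · rw [if_pos hcj, if_congr (hcl j hcj.1 hcj.2) rfl rfl]
    · rw [if_neg hcj, ite_self, ite_self]
  rw [reidx]
  exact CharTwo.add_self_eq_zero _

/-- a locally constant function is constant on segments -/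
lemma const_on_segment {f : Pt → ZMod 2} {x y : Pt}
    (hloc : ∀ z ∈ segment ℝ x y, ∀ᶠ w in nhds z, f w = f z) : f x = f y := by
  set γ : ℝ → Pt := fun s => x + s • (y - x) with hγ
  have hcont : Continuous γ := by
    apply continuous_const.add
    exact continuous_id.smul continuous_const
  haveI : PreconnectedSpace (Icc (0:ℝ) 1) := Subtype.preconnectedSpace isPreconnected_Icc
  set g : Icc (0:ℝ) 1 → ZMod 2 := fun s => f (γ s.val) with hg
  have hlc : IsLocallyConstant g := by
    rw [IsLocallyConstant.iff_eventually_eq]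
    rintro ⟨s, hs⟩
    have hmem : γ s ∈ segment ℝ x y := by
      rw [mem_segment_iff']
      exact ⟨s, hs.1, hs.2, rfl⟩
    have hev := hloc (γ s) hmem
    have htd : Filter.Tendsto (fun u : Icc (0:ℝ) 1 => γ u.val) (nhds ⟨s, hs⟩) (nhds (γ s)) :=
      (hcont.comp continuous_subtype_val).continuousAt
    exact htd.eventually hev
  have h01 := hlc.apply_eq_of_preconnectedSpace ⟨0, by norm_num⟩ ⟨1, by norm_num⟩
  simp only [hg, hγ] at h01
  simpa using h01

lemma rot_apply0 (w : Pt) : rotCCW w 0 = - w 1 := by simp [rotCCW]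
lemma rot_apply1 (w : Pt) : rotCCW w 1 = w 0 := by simp [rotCCW]
lemma sub_apply (x y : Pt) (i : Fin 2) : (x - y) i = x i - y i := by simp

lemma xi_sub (t : ℝ) (x y : Pt) : xi t (x - y) = xi t x - xi t y := by
  simp [xi]; ring

set_option maxHeartbeats 1000000 in
lemma flip {n : ℕ} [NeZero n] (v : ZMod n → Pt) (t : ℝ)
    (hgen : ∀ i, xi t (v i) ≠ xi t (v (i + 1)))
    (a : Pt) (ha : a = v 0 + (2⁻¹ : ℝ) • (v (0+1) - v 0))
    (haP : ∀ k : ZMod n, k ≠ 0 → a ∉ segment ℝ (v k) (v (k + 1))) :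
    ∃ μ0 > 0, ∀ μ : ℝ, 0 < μ → μ < μ0 →
      Wf v Finset.univ t (a + μ • rotCCW (v (0+1) - v 0)) ≠
      Wf v Finset.univ t (a - μ • rotCCW (v (0+1) - v 0)) := by
  classical
  set p := v 0 with hp
  set q := v (0+1) with hq
  set ρ := rotCCW (q - p) with hρ
  set P := xi t p with hP
  set Q := xi t q with hQ
  set R := xi t ρ with hR
  have hPQ : P ≠ Q := hgen 0
  have hA : xi t a = P + 2⁻¹ * (Q - P) := by
    rw [ha, xi_add_smul, xi_sub]
  have ha1 : a 1 = p 1 + 2⁻¹ * (q 1 - p 1) := by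
    rw [ha, coord_add_smul, sub_apply]
  set K : ℝ := (q 0 - p 0)^2 + (q 1 - p 1)^2 with hK
  have hKpos : 0 < K := by
    have hne : p ≠ q := fun h => hPQ (by rw [hP, hQ, h])
    have : q 0 - p 0 ≠ 0 ∨ q 1 - p 1 ≠ 0 := by
      by_contra hcon
      push_neg at hcon
      apply hne
      ext i
      fin_cases i <;> [skip; skip] <;>
        · have h1 := hcon.1; have h2 := hcon.2; simp; linarith
    rcases this with h | h <;> nlinarith [mul_self_pos.mpr h, sq_nonneg (q 0 - p 0), sq_nonneg (q 1 - p 1)]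
  have hDd : ∀ s : ℝ, Dd t p q (a + s • ρ) = s * K := by
    intro s
    have e1 : (a + s • ρ) 1 = a 1 + s * ρ 1 := coord_add_smul 1 a ρ s
    have e2 : xi t (a + s • ρ) = xi t a + s * R := xi_add_smul _ _ _ _
    have eρ1 : ρ 1 = q 0 - p 0 := by rw [hρ, rot_apply1, sub_apply]
    have eρ0 : ρ 0 = -(q 1 - p 1) := by rw [hρ, rot_apply0, sub_apply]
    have eR : R = -(q 1 - p 1) + t * (q 0 - p 0) := by
      rw [hR, xi, eρ0, eρ1]
    have eQP : Q - P = (q 0 - p 0) + t * (q 1 - p 1) := by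
      rw [hQ, hP, xi, xi]; ring
    unfold Dd
    rw [e1, e2, eρ1, hA, ha1, eR, ← hP, ← hQ, hK]
    have : Q - P = (q 0 - p 0) + t * (q 1 - p 1) := eQP
    rw [this]; ring
  -- the sum over the other edges is locally constant at a
  have hS' : ∀ i ∈ Finset.univ.erase (0 : ZMod n), a ∉ segment ℝ (v i) (v (i + 1)) := by
    intro i hi
    exact haP i (Finset.ne_of_mem_erase hi)
  have hAa : xi t a ≠ P := by
    rw [hA]; intro h; apply hPQ; linarith [h]
  have hAb : xi t a ≠ Q := by
    rw [hA]; intro h; apply hPQ; linarith [h]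
  have hcl' : ∀ k : ZMod n, xi t (v k) = xi t a → a 1 < (v k) 1 →
      ((k - 1) ∈ Finset.univ.erase (0 : ZMod n) ↔ k ∈ Finset.univ.erase (0 : ZMod n)) := by
    intro k hk _
    have hk0 : k ≠ 0 := by rintro rfl; exact hAa (by rw [← hk, hP])
    have hk1 : k ≠ 0 + 1 := by rintro rfl; exact hAb (by rw [← hk, hQ])
    have hk1' : k - 1 ≠ 0 := fun h => hk1 (by rw [zero_add]; exact sub_eq_zero.mp h)
    simp [Finset.mem_erase, hk0, hk1']
  have hloc := sum_lc v (Finset.univ.erase 0) t a hgen hS' hcl'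
  rw [Metric.eventually_nhds_iff] at hloc
  obtain ⟨ε, hε, hball⟩ := hloc
  set μ0 : ℝ := min (|Q - P| / (2 * (|R| + 1))) (ε / (‖ρ‖ + 1)) with hμ0
  have hμ0pos : 0 < μ0 := by
    apply lt_min
    · apply div_pos (abs_pos.mpr (sub_ne_zero.mpr (Ne.symm hPQ)))
      positivity
    · positivity
  refine ⟨μ0, hμ0pos, ?_⟩
  intro μ hμpos hμlt
  -- distance bounds
  have hρnorm : ‖μ • ρ‖ < ε := by
    rw [norm_smul, Real.norm_eq_abs, abs_of_pos hμpos]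
    have h1 : μ < ε / (‖ρ‖ + 1) := lt_of_lt_of_le hμlt (min_le_right _ _)
    have h2 : μ * ‖ρ‖ ≤ μ * (‖ρ‖ + 1) := by nlinarith [norm_nonneg ρ]
    have h3 : μ * (‖ρ‖ + 1) < ε := by
      rw [lt_div_iff₀ (by positivity : (0:ℝ) < ‖ρ‖ + 1)] at h1
      linarith
    linarith
  have hWa : Wf v (Finset.univ.erase 0) t (a + μ • ρ) = Wf v (Finset.univ.erase 0) t a := by
    apply hball
    rw [dist_eq_norm, add_sub_cancel_left]
    exact hρnorm
  have hWb : Wf v (Finset.univ.erase 0) t (a - μ • ρ) = Wf v (Finset.univ.erase 0) t a := by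
    apply hball
    rw [dist_eq_norm, sub_sub_cancel_left, norm_neg]
    exact hρnorm
  have h1 : μ < |Q - P| / (2 * (|R| + 1)) := lt_of_lt_of_le hμlt (min_le_left _ _)
  have hμR : μ * |R| < |Q - P| / 2 := by
    rw [lt_div_iff₀ (by positivity : (0:ℝ) < 2 * (|R| + 1))] at h1
    nlinarith [abs_nonneg R]
  have hxplus : xi t (a + μ • ρ) = xi t a + μ * R := xi_add_smul t μ a ρ
  have hxminus : xi t (a - μ • ρ) = xi t a - μ * R := by
    rw [sub_eq_add_neg, ← neg_smul, xi_add_smul]; ring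
  have hRb1 : μ * R ≤ μ * |R| := by nlinarith [le_abs_self R]
  have hRb2 : -(μ * |R|) ≤ μ * R := by nlinarith [neg_abs_le R]
  have hDplus : 0 < Dd t p q (a + μ • ρ) := by
    rw [hDd μ]; exact mul_pos hμpos hKpos
  have hDminus : Dd t p q (a - μ • ρ) < 0 := by
    have e : a - μ • ρ = a + (-μ) • ρ := by rw [neg_smul, ← sub_eq_add_neg]
    rw [e, hDd]; nlinarith
  have hqz : v (0+1) = q := rfl
  have hpz : v 0 = p := rfl
  have hsplit : ∀ z : Pt, Wf v Finset.univ t z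
      = ind t p q z + Wf v (Finset.univ.erase 0) t z := by
    intro z
    unfold Wf
    rw [← Finset.add_sum_erase _ _ (Finset.mem_univ (0 : ZMod n))]
  intro hcon
  rw [hsplit, hsplit, hWa, hWb] at hcon
  have hind := add_right_cancel hcon
  rcases hPQ.lt_or_gt with hlt | hgt
  · -- P < Q
    have habs : |Q - P| = Q - P := abs_of_pos (by linarith)
    rw [habs] at hμR
    have hb1 : P < xi t (a + μ • ρ) := by rw [hxplus, hA]; linarith
    have hb2 : xi t (a + μ • ρ) < Q := by rw [hxplus, hA]; linarith
    have hb3 : P < xi t (a - μ • ρ) := by rw [hxminus, hA]; linarith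
    have hb4 : xi t (a - μ • ρ) < Q := by rw [hxminus, hA]; linarith
    have hCplus : ¬ Cc t p q (a + μ • ρ) := by
      rintro (⟨_, _, h3⟩ | ⟨h1', _, _⟩) <;> [linarith; linarith [hP, hQ]]
    have hCminus : Cc t p q (a - μ • ρ) := Or.inl ⟨by linarith, by linarith [hQ], hDminus⟩
    simp only [ind] at hind
    rw [if_neg hCplus, if_pos hCminus] at hind
    exact absurd hind (by decide)
  · -- Q < P
    have habs : |Q - P| = -(Q - P) := abs_of_neg (by linarith)
    rw [habs] at hμR
    have hb1 : Q < xi t (a + μ • ρ) := by rw [hxplus, hA]; linarith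
    have hb2 : xi t (a + μ • ρ) < P := by rw [hxplus, hA]; linarith
    have hb3 : Q < xi t (a - μ • ρ) := by rw [hxminus, hA]; linarith
    have hb4 : xi t (a - μ • ρ) < P := by rw [hxminus, hA]; linarith
    have hCplus : Cc t p q (a + μ • ρ) := Or.inr ⟨by linarith, by linarith, hDplus⟩
    have hCminus : ¬ Cc t p q (a - μ • ρ) := by
      rintro (⟨h1', _, _⟩ | ⟨_, _, h3⟩) <;> linarith
    simp only [ind] at hind
    rw [if_pos hCplus, if_neg hCminus] at hind
    exact absurd hind (by decide)

lemma exists_generic {n : ℕ} [NeZero n] (v : ZMod n → Pt) (hv : ∀ i, v i ≠ v (i + 1)) :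
    ∃ t : ℝ, ∀ i, xi t (v i) ≠ xi t (v (i + 1)) := by
  have hbad : ∀ i : ZMod n, {t : ℝ | xi t (v i) = xi t (v (i+1))}.Subsingleton := by
    intro i t1 ht1 t2 ht2
    simp only [Set.mem_setOf_eq, xi] at ht1 ht2
    by_contra hne
    have h1 : v i 1 = v (i + 1) 1 := by
      by_contra h1
      have hz : (t1 - t2) * (v i 1 - v (i + 1) 1) = 0 := by linarith
      rcases mul_eq_zero.mp hz with h | h
      · exact hne (by linarith)
      · exact h1 (by linarith)
    have h0 : v i 0 = v (i + 1) 0 := by rw [h1] at ht1; linarith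
    exact hv i (by ext j; fin_cases j <;> assumption)
  have hfin : (⋃ i : ZMod n, {t : ℝ | xi t (v i) = xi t (v (i+1))}).Finite :=
    Set.finite_iUnion (fun i => (hbad i).finite)
  obtain ⟨t, ht⟩ := hfin.infinite_compl.nonempty
  refine ⟨t, fun i => ?_⟩
  intro h
  exact ht (Set.mem_iUnion.mpr ⟨i, h⟩)

lemma rot_smul (r : ℝ) (w : Pt) : rotCCW (r • w) = r • rotCCW w := by
  ext i
  fin_cases i <;> simp [rotCCW]

lemma rot_combo (a z1 z2 : Pt) (b c : ℝ) (h : b + c = 1) :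
    a + rotCCW (b • z1 + c • z2 - a) = b • (a + rotCCW (z1 - a)) + c • (a + rotCCW (z2 - a)) := by
  ext i
  fin_cases i
  · simp [rotCCW]
    linear_combination (-(a 0) - a 1) * h
  · simp [rotCCW]
    linear_combination (a 0 - a 1) * h

lemma rot_norm (w : Pt) : ‖rotCCW w‖ = ‖w‖ := by
  rw [EuclideanSpace.norm_eq, EuclideanSpace.norm_eq]
  congr 1
  rw [Fin.sum_univ_two, Fin.sum_univ_two, rot_apply0, rot_apply1, norm_neg]
  ring

lemma rot_inner (w : Pt) : ⟪w, rotCCW w⟫ = 0 := by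
  rw [PiLp.inner_apply, Fin.sum_univ_two, rot_apply0, rot_apply1]
  simp [RCLike.inner_apply]
  ring

lemma rot_eq_self {w : Pt} (h : rotCCW w = w) : w = 0 := by
  have h0 := congrFun (congrArg WithLp.ofLp h) 0
  have h1 := congrFun (congrArg WithLp.ofLp h) 1
  rw [rot_apply0] at h0
  rw [rot_apply1] at h1
  have hw0 : w 0 = 0 := by linarith
  have hw1 : w 1 = 0 := by linarith
  ext i
  fin_cases i <;> simp [hw0, hw1]

lemma rot_eq_zero {w : Pt} (h : rotCCW w = 0) : w = 0 := by
  have h0 := congrFun (congrArg WithLp.ofLp h) 0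
  have h1 := congrFun (congrArg WithLp.ofLp h) 1
  rw [rot_apply0] at h0
  rw [rot_apply1] at h1
  simp at h0 h1
  ext i
  fin_cases i <;> simp [h0, h1]

def IsSimplePolygon {n : ℕ} (v : ZMod n → Pt) : Prop :=
  3 ≤ n ∧
  (∀ i, v i ≠ v (i + 1)) ∧
  (∀ i : ZMod n,
    segment ℝ (v i) (v (i + 1)) ∩ segment ℝ (v (i + 1)) (v (i + 2)) = {v (i + 1)}) ∧
  (∀ i j : ZMod n, i ≠ j → i ≠ j + 1 → j ≠ i + 1 →
    segment ℝ (v i) (v (i + 1)) ∩ segment ℝ (v j) (v (j + 1)) = ∅)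

def polygonSet {n : ℕ} (v : ZMod n → Pt) : Set Pt :=
  ⋃ i : ZMod n, segment ℝ (v i) (v (i + 1))

set_option maxHeartbeats 2000000 in
theorem main {n : ℕ} (v : ZMod n → Pt)
    (hP : IsSimplePolygon v) :
    ∃ y z u : Pt, y ∈ polygonSet v ∧ z ∈ polygonSet v ∧ u ∈ polygonSet v ∧
      y ≠ z ∧ y ≠ u ∧ z ≠ u ∧ ‖z - y‖ = ‖u - y‖ ∧ ⟪z - y, u - y⟫ = 0 := by
  obtain ⟨hn3, hnev, hadj, hdisj⟩ := hP
  haveI : NeZero n := ⟨by omega⟩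
  obtain ⟨t, hgen⟩ := exists_generic v hnev
  set p : Pt := v 0 with hp
  set q : Pt := v (0+1) with hq
  set d : Pt := q - p with hd
  set a : Pt := p + (2⁻¹ : ℝ) • d with ha
  set ρ : Pt := rotCCW d with hρ
  have hpq : p ≠ q := hnev 0
  have hdne : d ≠ 0 := sub_ne_zero.mpr (Ne.symm hpq)
  have hedge : ∀ c : ℝ, -(2⁻¹:ℝ) ≤ c → c ≤ 2⁻¹ → a + c • d ∈ segment ℝ p q := by
    intro c hc1 hc2
    rw [mem_segment_iff']
    refine ⟨2⁻¹ + c, by linarith, by linarith, ?_⟩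
    rw [ha, hd]
    module
  have haseg : a ∈ segment ℝ p q := by
    have h := hedge 0 (by norm_num) (by norm_num)
    simpa using h
  have haP : a ∈ polygonSet v := Set.mem_iUnion.mpr ⟨0, haseg⟩
  have hane : ∀ c : ℝ, c ≠ 0 → a + c • d ≠ a := by
    intro c hc h
    rcases smul_eq_zero.mp (add_eq_left.mp h) with h' | h'
    · exact hc h'
    · exact hdne h'
  have hap : a ≠ p := by
    rw [ha]
    intro h
    rcases smul_eq_zero.mp (add_eq_left.mp h) with h' | h'
    · norm_num at h'
    · exact hdne h'
  have haq : a ≠ q := by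
    intro h
    have hqa : q = p + (1:ℝ) • d := by rw [hd, one_smul, add_sub_cancel]
    rw [ha, hqa] at h
    have h2 : ((2⁻¹:ℝ) - 1) • d = 0 := by
      rw [sub_smul]
      rw [add_left_cancel h]
      abel
    rcases smul_eq_zero.mp h2 with h' | h'
    · norm_num at h'
    · exact hdne h'
  have haPk : ∀ k : ZMod n, k ≠ 0 → a ∉ segment ℝ (v k) (v (k + 1)) := by
    intro k hk hmem
    by_cases hk1 : k = 0 + 1
    · have h2 : (0:ZMod n) + 1 + 1 = 0 + 2 := by ring
      have hin : a ∈ segment ℝ (v 0) (v (0+1)) ∩ segment ℝ (v (0+1)) (v (0+2)) := by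
        refine ⟨haseg, ?_⟩
        rw [← h2]
        rw [hk1] at hmem
        exact hmem
      rw [hadj 0] at hin
      exact haq hin
    · by_cases hk2 : (0:ZMod n) = k + 1
      · have h2 : k + 2 = k + 1 + 1 := by ring
        have hin : a ∈ segment ℝ (v k) (v (k+1)) ∩ segment ℝ (v (k+1)) (v (k+2)) := by
          refine ⟨hmem, ?_⟩
          rw [h2, ← hk2]
          exact haseg
        rw [hadj k] at hin
        rw [Set.mem_singleton_iff] at hin
        rw [← hk2] at hin
        exact hap hin
      · have hdis := hdisj k 0 hk hk1 hk2
        have : a ∈ segment ℝ (v k) (v (k + 1)) ∩ segment ℝ (v 0) (v (0 + 1)) :=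
          ⟨hmem, haseg⟩
        rw [hdis] at this
        exact Set.notMem_empty a this
  -- reduce to finding an intersection point of the rotated polygon with the polygon
  suffices hS : ∃ z : Pt, z ∈ polygonSet v ∧ z ≠ a ∧ a + rotCCW (z - a) ∈ polygonSet v by
    obtain ⟨z, hzP, hza, huP⟩ := hS
    have hwne : z - a ≠ 0 := sub_ne_zero.mpr hza
    have hsub : (a + rotCCW (z - a)) - a = rotCCW (z - a) := add_sub_cancel_left a _
    refine ⟨a, z, a + rotCCW (z - a), haP, hzP, huP, Ne.symm hza, ?_, ?_, ?_, ?_⟩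
    · intro h
      exact hwne (rot_eq_zero (add_eq_left.mp h.symm))
    · intro h
      apply hwne
      apply rot_eq_self
      rw [← hsub, ← h]
    · rw [hsub, rot_norm]
    · rw [hsub]
      exact rot_inner (z - a)
  by_contra hNo
  push_neg at hNo
  -- local constancy of the parity function off the polygon
  have hWloc : ∀ x' : Pt, x' ∉ polygonSet v →
      ∀ᶠ y' in nhds x', Wf v Finset.univ t y' = Wf v Finset.univ t x' := by
    intro x' hx'
    apply sum_lc v Finset.univ t x' hgen
    · intro i _ hm
      exact hx' (Set.mem_iUnion.mpr ⟨i, hm⟩)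
    · intro k _ _
      simp
  -- parity is constant on the rotated image of each edge not containing a
  have hstep : ∀ k : ZMod n, k ≠ 0 →
      Wf v Finset.univ t (a + rotCCW (v k - a)) = Wf v Finset.univ t (a + rotCCW (v (k+1) - a)) := by
    intro k hk
    apply const_on_segment
    intro z' hz'
    obtain ⟨b, c, hb, hc, hbc, heq⟩ := hz'
    have hz'' : z' = a + rotCCW ((b • v k + c • v (k+1)) - a) := by
      have hcombo := rot_combo a (v k) (v (k+1)) b c hbc
      rw [heq] at hcombo
      exact hcombo.symm
    have hzzseg : (b • v k + c • v (k+1)) ∈ segment ℝ (v k) (v (k+1)) :=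
      ⟨b, c, hb, hc, hbc, rfl⟩
    have hzzP : (b • v k + c • v (k+1)) ∈ polygonSet v := Set.mem_iUnion.mpr ⟨k, hzzseg⟩
    have hzza : (b • v k + c • v (k+1)) ≠ a := fun h => haPk k hk (h ▸ hzzseg)
    have hout : z' ∉ polygonSet v := by
      rw [hz'']
      exact hNo _ hzzP hzza
    exact hWloc z' hout
  -- chain the equality all the way around the polygon
  have hchain : Wf v Finset.univ t (a + rotCCW (v (0+1) - a)) =
      Wf v Finset.univ t (a + rotCCW (v 0 - a)) := by
    have key : ∀ m : ℕ, m + 1 ≤ n →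
        Wf v Finset.univ t (a + rotCCW (v (0+1) - a)) =
        Wf v Finset.univ t (a + rotCCW (v (0 + 1 + (m : ZMod n)) - a)) := by
      intro m
      induction m with
      | zero => intro _; norm_num
      | succ m ih =>
        intro hm
        have hmn : m + 1 ≤ n := by omega
        have e1 : (0:ZMod n) + 1 + ((m:ℕ)+1 : ℕ) = (0 + 1 + (m : ZMod n)) + 1 := by
          push_cast
          ring
        have hne0 : (0:ZMod n) + 1 + (m : ZMod n) ≠ 0 := by
          have e2 : (0:ZMod n) + 1 + (m : ZMod n) = ((m+1 : ℕ) : ZMod n) := by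
            push_cast
            ring
          rw [e2]
          intro h0
          have hdvd := (ZMod.natCast_eq_zero_iff (m+1) n).mp h0
          have := Nat.le_of_dvd (by omega) hdvd
          omega
        rw [ih hmn, e1]
        exact hstep _ hne0
    have hfin := key (n - 1) (by omega)
    have e3 : (0:ZMod n) + 1 + ((n-1 : ℕ) : ZMod n) = 0 := by
      have : ((1 + (n-1) : ℕ) : ZMod n) = ((n : ℕ) : ZMod n) := by
        congr 1
        omega
      rw [ZMod.natCast_self] at this
      rw [zero_add]
      exact_mod_cast this
    rw [e3] at hfin
    exact hfin
  -- identify the rotated endpoints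
  have hpa : v 0 - a = (-(2⁻¹:ℝ)) • d := by
    rw [← hp, ha]
    module
  have hqa : v (0+1) - a = ((2⁻¹:ℝ)) • d := by
    rw [← hq, ha, hd]
    module
  have hRmp : a + rotCCW (v 0 - a) = a + (-(2⁻¹:ℝ)) • ρ := by
    rw [hpa, rot_smul, hρ]
  have hRmq : a + rotCCW (v (0+1) - a) = a + ((2⁻¹:ℝ)) • ρ := by
    rw [hqa, rot_smul, hρ]
  -- parity constant along rotation of half-edges
  have hseg_const : ∀ c1 c2 : ℝ, -(2⁻¹:ℝ) ≤ c1 → c1 ≤ 2⁻¹ → -(2⁻¹:ℝ) ≤ c2 → c2 ≤ 2⁻¹ →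
      ((0 < c1 ∧ 0 < c2) ∨ (c1 < 0 ∧ c2 < 0)) →
      Wf v Finset.univ t (a + c1 • ρ) = Wf v Finset.univ t (a + c2 • ρ) := by
    intro c1 c2 h11 h12 h21 h22 hsign
    apply const_on_segment
    intro z' hz'
    rw [mem_segment_iff'] at hz'
    obtain ⟨θ, hθ0, hθ1, rfl⟩ := hz'
    set cθ : ℝ := c1 + θ * (c2 - c1) with hcθ
    have hz'' : (a + c1 • ρ) + θ • ((a + c2 • ρ) - (a + c1 • ρ)) = a + cθ • ρ := by
      rw [hcθ]
      module
    have hb1 : -(2⁻¹:ℝ) ≤ cθ := by rw [hcθ]; nlinarith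
    have hb2 : cθ ≤ 2⁻¹ := by rw [hcθ]; nlinarith
    have hbne : cθ ≠ 0 := by
      rcases hsign with ⟨hs1, hs2⟩ | ⟨hs1, hs2⟩
      · have : 0 < cθ := by
          rw [hcθ]
          rcases le_total c1 c2 with hcc | hcc
          · nlinarith [mul_nonneg hθ0 (by linarith : (0:ℝ) ≤ c2 - c1)]
          · nlinarith [mul_nonneg (by linarith : (0:ℝ) ≤ 1 - θ) (by linarith : (0:ℝ) ≤ c1 - c2)]
        linarith
      · have : cθ < 0 := by
          rw [hcθ]
          rcases le_total c1 c2 with hcc | hcc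
          · nlinarith [mul_nonneg (by linarith : (0:ℝ) ≤ 1 - θ) (by linarith : (0:ℝ) ≤ c2 - c1)]
          · nlinarith [mul_nonneg hθ0 (by linarith : (0:ℝ) ≤ c1 - c2)]
        linarith
    have hzz : a + cθ • ρ = a + rotCCW ((a + cθ • d) - a) := by
      rw [add_sub_cancel_left, rot_smul, hρ]
    have hzzP : a + cθ • d ∈ polygonSet v := Set.mem_iUnion.mpr ⟨0, hedge cθ hb1 hb2⟩
    have hout : (a + c1 • ρ) + θ • ((a + c2 • ρ) - (a + c1 • ρ)) ∉ polygonSet v := by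
      rw [hz'', hzz]
      exact hNo _ hzzP (hane cθ hbne)
    exact hWloc _ hout
  -- the flip across a
  obtain ⟨μ0, hμ0, hflip⟩ := flip v t hgen a (by rw [ha, hd, hq, hp]) haPk
  set μ : ℝ := min (μ0/2) 4⁻¹ with hμ
  have hμpos : 0 < μ := lt_min (by linarith) (by norm_num)
  have hμlt : μ < μ0 := lt_of_le_of_lt (min_le_left _ _) (by linarith)
  have hμhalf : μ ≤ 4⁻¹ := min_le_right _ _
  have hflipμ := hflip μ hμpos hμlt
  apply hflipμ
  have eρ : rotCCW (v (0+1) - v 0) = ρ := by rw [hρ, hd, hq, hp]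
  rw [eρ]
  have hminus : a - μ • ρ = a + (-μ) • ρ := by rw [neg_smul, ← sub_eq_add_neg]
  rw [hminus]
  calc Wf v Finset.univ t (a + μ • ρ)
      = Wf v Finset.univ t (a + (2⁻¹:ℝ) • ρ) := by
        apply hseg_const μ 2⁻¹ (by linarith) (by linarith) (by norm_num) (by norm_num)
        exact Or.inl ⟨hμpos, by norm_num⟩
    _ = Wf v Finset.univ t (a + rotCCW (v (0+1) - a)) := by rw [hRmq]
    _ = Wf v Finset.univ t (a + rotCCW (v 0 - a)) := hchain
    _ = Wf v Finset.univ t (a + (-(2⁻¹:ℝ)) • ρ) := by rw [hRmp]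
    _ = Wf v Finset.univ t (a + (-μ) • ρ) := by
        apply hseg_const (-(2⁻¹:ℝ)) (-μ) (by norm_num) (by norm_num) (by linarith) (by linarith)
        exact Or.inr ⟨by norm_num, by linarith⟩

end IRT

/-- Every simple polygon has an inscribed right isosceles triangle. -/
theorem inscribed_right_isosceles_triangle {n : ℕ} (v : ZMod n → Pt)
    (hP : IsSimplePolygon v) :
    ∃ y z u : Pt, y ∈ polygonSet v ∧ z ∈ polygonSet v ∧ u ∈ polygonSet v ∧
      y ≠ z ∧ y ≠ u ∧ z ≠ u ∧ ‖z - y‖ = ‖u - y‖ ∧ ⟪z - y, u - y⟫ = 0 := by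
  exact IRT.main v hP
end
end

section
/- Let P be a simple polygon in ℝ² all of whose interior angles lie strictly between π/2 and 3π/2, and suppose P has at least one inscribed right isosceles triangle. Then among all inscribed right isosceles triangles of P there is one of minimal leg length: the infimum over all triples of distinct points (y, z, u) ∈ P³ with |z − y| = |u − y| and ⟪z − y, u − y⟫ = 0 of the leg length |z − y| is positive and is attained by some such triple. -/
open scoped RealInnerProductSpace

set_option maxHeartbeats 400000

noncomputable section

/-- The set of leg lengths of right isosceles triangles inscribed in the polygon. -/
def legLengths {n : ℕ} (v : ZMod n → Pt) : Set ℝ :=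
  {l : ℝ | ∃ y z u : Pt, y ∈ polygonSet v ∧ z ∈ polygonSet v ∧ u ∈ polygonSet v ∧
    y ≠ z ∧ y ≠ u ∧ z ≠ u ∧ ‖z - y‖ = ‖u - y‖ ∧ ⟪z - y, u - y⟫ = 0 ∧ l = ‖z - y‖}

open Metric Set

/-- Segments in the plane are compact. -/
private lemma seg_compact (x y : Pt) : IsCompact (segment ℝ x y) := by
  rw [segment_eq_image']
  exact isCompact_Icc.image (by continuity)

/-- Parametrize a point of a segment from its left endpoint. -/
private lemma seg_param {x y w : Pt} (h : w ∈ segment ℝ x y) :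
    ∃ s : ℝ, 0 ≤ s ∧ w = x + s • (y - x) := by
  rw [segment_eq_image'] at h
  obtain ⟨s, hs, rfl⟩ := h
  exact ⟨s, hs.1, rfl⟩

/-- Key algebraic fact: if `A` and `C` are nonzero directions with `⟪A, C⟫ < 0`,
then no two nonzero legs emanating from a point of `ℝ≥0 • A ∪ ℝ≥0 • C` to two other
points of that set can be perpendicular. -/
private lemma alg_aux {A C : Pt} (hAC : ⟪A, C⟫ < 0) (hA : A ≠ 0) (hC : C ≠ 0)
    {s₁ s₂ s₃ : ℝ} {D₂ D₃ : Pt}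
    (h₂ : D₂ = A ∨ D₂ = C) (h₃ : D₃ = A ∨ D₃ = C)
    (hs₁ : 0 ≤ s₁) (hs₂ : 0 ≤ s₂) (hs₃ : 0 ≤ s₃)
    (hyz : s₂ • D₂ ≠ s₁ • A) (hyu : s₃ • D₃ ≠ s₁ • A) :
    ⟪s₂ • D₂ - s₁ • A, s₃ • D₃ - s₁ • A⟫ ≠ 0 := by
  have hp : (0:ℝ) < ⟪A, A⟫ := by
    rw [real_inner_self_eq_norm_sq]; exact pow_pos (norm_pos_iff.mpr hA) 2
  have hq : (0:ℝ) < ⟪C, C⟫ := by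
    rw [real_inner_self_eq_norm_sq]; exact pow_pos (norm_pos_iff.mpr hC) 2
  rcases h₂ with h2 | h2 <;> rcases h₃ with h3 | h3 <;>
      rw [h2] at hyz ⊢ <;> rw [h3] at hyu ⊢ <;> intro h <;>
      simp only [inner_sub_left, inner_sub_right, real_inner_smul_left, real_inner_smul_right,
        real_inner_comm A C] at h
  · -- D₂ = A, D₃ = A
    have h2 : s₂ ≠ s₁ := fun e => hyz (by rw [e])
    have h3 : s₃ ≠ s₁ := fun e => hyu (by rw [e])
    exact (mul_ne_zero (mul_ne_zero (sub_ne_zero.mpr h2) (sub_ne_zero.mpr h3)) hp.ne')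
      (by linear_combination h)
  · -- D₂ = A, D₃ = C
    have h2 : s₂ ≠ s₁ := fun e => hyz (by rw [e])
    have hf : s₃ * ⟪A, C⟫ - s₁ * ⟪A, A⟫ = 0 := by
      rcases mul_eq_zero.mp (show (s₂ - s₁) * (s₃ * ⟪A, C⟫ - s₁ * ⟪A, A⟫) = 0 from by
        linear_combination h) with h' | h'
      · exact absurd (sub_eq_zero.mp h') h2
      · exact h'
    have e1 : s₃ * ⟪A, C⟫ ≤ 0 := mul_nonpos_of_nonneg_of_nonpos hs₃ hAC.le
    have h1p : s₁ * ⟪A, A⟫ = 0 := le_antisymm (by linarith) (mul_nonneg hs₁ hp.le)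
    have h1 : s₁ = 0 := (mul_eq_zero.mp h1p).resolve_right hp.ne'
    have h3 : s₃ = 0 := by
      have h3p : s₃ * ⟪A, C⟫ = 0 := by rw [h1] at hf; linarith
      exact (mul_eq_zero.mp h3p).resolve_right hAC.ne
    exact hyu (by rw [h1, h3]; simp)
  · -- D₂ = C, D₃ = A
    have h3 : s₃ ≠ s₁ := fun e => hyu (by rw [e])
    have hf : s₂ * ⟪A, C⟫ - s₁ * ⟪A, A⟫ = 0 := by
      rcases mul_eq_zero.mp (show (s₃ - s₁) * (s₂ * ⟪A, C⟫ - s₁ * ⟪A, A⟫) = 0 from by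
        linear_combination h) with h' | h'
      · exact absurd (sub_eq_zero.mp h') h3
      · exact h'
    have e1 : s₂ * ⟪A, C⟫ ≤ 0 := mul_nonpos_of_nonneg_of_nonpos hs₂ hAC.le
    have h1p : s₁ * ⟪A, A⟫ = 0 := le_antisymm (by linarith) (mul_nonneg hs₁ hp.le)
    have h1 : s₁ = 0 := (mul_eq_zero.mp h1p).resolve_right hp.ne'
    have h2 : s₂ = 0 := by
      have h2p : s₂ * ⟪A, C⟫ = 0 := by rw [h1] at hf; linarith
      exact (mul_eq_zero.mp h2p).resolve_right hAC.ne
    exact hyz (by rw [h1, h2]; simp)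
  · -- D₂ = C, D₃ = C
    have key : s₂ * s₃ * ⟪C, C⟫ - s₁ * s₂ * ⟪A, C⟫ - s₁ * s₃ * ⟪A, C⟫ + s₁ * s₁ * ⟪A, A⟫ = 0 := by
      linear_combination h
    have t1 : 0 ≤ s₂ * s₃ * ⟪C, C⟫ := mul_nonneg (mul_nonneg hs₂ hs₃) hq.le
    have t2 : s₁ * s₂ * ⟪A, C⟫ ≤ 0 := mul_nonpos_of_nonneg_of_nonpos (mul_nonneg hs₁ hs₂) hAC.le
    have t3 : s₁ * s₃ * ⟪A, C⟫ ≤ 0 := mul_nonpos_of_nonneg_of_nonpos (mul_nonneg hs₁ hs₃) hAC.le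
    have t4 : 0 ≤ s₁ * s₁ * ⟪A, A⟫ := mul_nonneg (mul_nonneg hs₁ hs₁) hp.le
    have h1p : s₁ * s₁ * ⟪A, A⟫ = 0 := le_antisymm (by linarith) t4
    have h1 : s₁ = 0 := mul_self_eq_zero.mp ((mul_eq_zero.mp h1p).resolve_right hp.ne')
    have h23 : s₂ * s₃ = 0 := by
      have : s₂ * s₃ * ⟪C, C⟫ = 0 := by rw [h1] at key; linarith
      exact (mul_eq_zero.mp this).resolve_right hq.ne'
    rcases mul_eq_zero.mp h23 with h' | h'
    · exact hyz (by rw [h1, h']; simp)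
    · exact hyu (by rw [h1, h']; simp)

/-- On two adjacent edges of the polygon (interior angle strictly obtuse at the common
vertex), three points with the first distinct from the other two never give a right angle
at the first point. -/
private lemma two_edge {n : ℕ} {v : ZMod n → Pt} (hne : ∀ i, v i ≠ v (i + 1))
    (hA : ObtuseAngles v) (i : ZMod n) {y z u : Pt}
    (hy : y ∈ segment ℝ (v i) (v (i + 1)) ∪ segment ℝ (v (i + 1)) (v (i + 1 + 1)))
    (hz : z ∈ segment ℝ (v i) (v (i + 1)) ∪ segment ℝ (v (i + 1)) (v (i + 1 + 1)))
    (hu : u ∈ segment ℝ (v i) (v (i + 1)) ∪ segment ℝ (v (i + 1)) (v (i + 1 + 1)))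
    (hyz : y ≠ z) (hyu : y ≠ u) :
    ⟪z - y, u - y⟫ ≠ 0 := by
  set b := v (i + 1) with hb
  set A := v i - b with hAdef
  set C := v (i + 1 + 1) - b with hCdef
  have hAC : ⟪A, C⟫ < 0 := by
    have := hA (i + 1)
    rwa [add_sub_cancel_right] at this
  have hA0 : A ≠ 0 := sub_ne_zero.mpr (hne i)
  have hC0 : C ≠ 0 := sub_ne_zero.mpr (hne (i + 1)).symm
  have decomp : ∀ w, w ∈ segment ℝ (v i) (v (i + 1)) ∪ segment ℝ (v (i + 1)) (v (i + 1 + 1)) →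
      ∃ (s : ℝ) (D : Pt), 0 ≤ s ∧ (D = A ∨ D = C) ∧ w = b + s • D := by
    rintro w (hw | hw)
    · rw [segment_symm] at hw
      obtain ⟨s, hs, rfl⟩ := seg_param hw
      exact ⟨s, A, hs, Or.inl rfl, rfl⟩
    · obtain ⟨s, hs, rfl⟩ := seg_param hw
      exact ⟨s, C, hs, Or.inr rfl, rfl⟩
  obtain ⟨s₁, D₁, hs₁, hD₁, hy'⟩ := decomp y hy
  obtain ⟨s₂, D₂, hs₂, hD₂, hz'⟩ := decomp z hz
  obtain ⟨s₃, D₃, hs₃, hD₃, hu'⟩ := decomp u hu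
  subst hy' hz' hu'
  have hz' : s₂ • D₂ ≠ s₁ • D₁ := fun e => hyz (by rw [e])
  have hu' : s₃ • D₃ ≠ s₁ • D₁ := fun e => hyu (by rw [e])
  have hsub : ∀ (s t : ℝ) (D E : Pt), (b + s • D) - (b + t • E) = s • D - t • E := by
    intros; abel
  rw [hsub, hsub]
  rcases hD₁ with h1 | h1 <;> rw [h1] at hz' hu' ⊢
  · exact alg_aux hAC hA0 hC0 hD₂ hD₃ hs₁ hs₂ hs₃ hz' hu'
  · have hCA : ⟪C, A⟫ < 0 := by rwa [real_inner_comm]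
    exact alg_aux hCA hC0 hA0 hD₂.symm hD₃.symm hs₁ hs₂ hs₃ hz' hu'

/-- Local structure of a simple polygon: there is a uniform `δ > 0` such that every
`δ`-ball centered on the polygon meets the polygon inside a union of two adjacent edges. -/
private lemma polygon_local {n : ℕ} {v : ZMod n → Pt} (hP : IsSimplePolygon v) :
    ∃ δ > 0, ∀ y ∈ polygonSet v, ∃ i : ZMod n,
      polygonSet v ∩ ball y δ ⊆
        segment ℝ (v i) (v (i + 1)) ∪ segment ℝ (v (i + 1)) (v (i + 1 + 1)) := by
  obtain ⟨hn, hne, hadj, hdisj⟩ := hP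
  have : NeZero n := ⟨by omega⟩
  set e : ZMod n → Set Pt := fun i => segment ℝ (v i) (v (i + 1)) with he
  set c : ZMod n → Set Pt := fun i => (⋃ k ∈ {k : ZMod n | k ≠ i ∧ k ≠ i + 1}, e k)ᶜ with hc
  have hopen : ∀ i, IsOpen (c i) := by
    intro i
    rw [hc]
    exact isOpen_compl_iff.mpr ((Set.toFinite _).isClosed_biUnion
      (fun k _ => (seg_compact _ _).isClosed))
  have hmemc : ∀ p ∈ polygonSet v, ∃ i, p ∈ c i := by
    intro p hp
    obtain ⟨i₀, hpi₀⟩ : ∃ i, p ∈ e i := mem_iUnion.mp hp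
    have hadj' : ∀ k, p ∈ e k → k = i₀ ∨ k = i₀ + 1 ∨ i₀ = k + 1 := by
      intro k hk
      by_contra hcon
      push_neg at hcon
      have hemp := hdisj k i₀ hcon.1 hcon.2.1 hcon.2.2
      have : p ∈ segment ℝ (v k) (v (k + 1)) ∩ segment ℝ (v i₀) (v (i₀ + 1)) := ⟨hk, hpi₀⟩
      rw [hemp] at this
      exact this
    have hnotboth : ¬(p ∈ e (i₀ - 1) ∧ p ∈ e (i₀ + 1)) := by
      rintro ⟨h1, h2⟩
      have e1 : p = v i₀ := by
        have hm : p ∈ segment ℝ (v (i₀ - 1)) (v (i₀ - 1 + 1)) ∩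
            segment ℝ (v (i₀ - 1 + 1)) (v (i₀ - 1 + 2)) := by
          refine ⟨h1, ?_⟩
          have h1' : i₀ - 1 + 1 = i₀ := by ring
          have h2' : i₀ - 1 + 2 = i₀ + 1 := by ring
          rw [h1', h2']
          exact hpi₀
        rw [hadj (i₀ - 1)] at hm
        have h1' : i₀ - 1 + 1 = i₀ := by ring
        rw [h1'] at hm
        exact hm
      have e2 : p = v (i₀ + 1) := by
        have hm : p ∈ segment ℝ (v i₀) (v (i₀ + 1)) ∩
            segment ℝ (v (i₀ + 1)) (v (i₀ + 2)) := by
          refine ⟨hpi₀, ?_⟩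
          have h2' : i₀ + 1 + 1 = i₀ + 2 := by ring
          have := h2
          rw [he] at this
          simpa [h2'] using this
        rw [hadj i₀] at hm
        exact hm
      exact hne i₀ (e1 ▸ e2)
    by_cases hcase : p ∈ e (i₀ - 1)
    · refine ⟨i₀ - 1, ?_⟩
      rw [hc]
      simp only [Set.mem_compl_iff, Set.mem_iUnion, not_exists]
      rintro k ⟨hk1, hk2⟩ hpk
      obtain h | h | h := hadj' k hpk
      · exact hk2 (by rw [h]; ring)
      · exact hnotboth ⟨hcase, h ▸ hpk⟩
      · exact hk1 (by rw [eq_sub_of_add_eq h.symm])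
    · refine ⟨i₀, ?_⟩
      rw [hc]
      simp only [Set.mem_compl_iff, Set.mem_iUnion, not_exists]
      rintro k ⟨hk1, hk2⟩ hpk
      obtain h | h | h := hadj' k hpk
      · exact hk1 h
      · exact hk2 h
      · exact hcase (by rw [eq_sub_of_add_eq h.symm] at hpk; exact hpk)
  have hcomp : IsCompact (polygonSet v) := isCompact_iUnion (fun i => seg_compact _ _)
  have hcover : polygonSet v ⊆ ⋃ i, c i := fun p hp => mem_iUnion.mpr (hmemc p hp)
  obtain ⟨δ, hδ, hball⟩ := lebesgue_number_lemma_of_metric hcomp hopen hcover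
  refine ⟨δ, hδ, ?_⟩
  intro y hy
  obtain ⟨i, hi⟩ := hball y hy
  refine ⟨i, ?_⟩
  rintro q ⟨hqP, hqb⟩
  have hqc : q ∈ c i := hi hqb
  obtain ⟨k, hk⟩ : ∃ k, q ∈ e k := mem_iUnion.mp hqP
  rw [hc] at hqc
  simp only [Set.mem_compl_iff, Set.mem_iUnion, not_exists] at hqc
  by_cases h1 : k = i
  · exact Or.inl (h1 ▸ hk)
  by_cases h2 : k = i + 1
  · exact Or.inr (h2 ▸ hk)
  exact absurd hk (hqc k ⟨h1, h2⟩)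

/-- For a simple polygon with all interior angles strictly between `π/2` and `3π/2`
that has at least one inscribed right isosceles triangle, the infimum of the leg
lengths of inscribed right isosceles triangles is positive and attained. -/
theorem minimal_inscribed_right_isosceles {n : ℕ} (v : ZMod n → Pt)
    (hP : IsSimplePolygon v) (hA : ObtuseAngles v)
    (hex : (legLengths v).Nonempty) :
    0 < sInf (legLengths v) ∧ sInf (legLengths v) ∈ legLengths v := by
  obtain ⟨hn, hne, hadj, hdisj⟩ := id hP
  have : NeZero n := ⟨by omega⟩
  obtain ⟨δ, hδ, hloc⟩ := polygon_local hP
  -- every leg length is at least δ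
  have hlow : ∀ l ∈ legLengths v, δ ≤ l := by
    rintro l ⟨y, z, u, hy, hz, hu, hyz, hyu, hzu, hlen, hperp, rfl⟩
    by_contra hlt
    push_neg at hlt
    obtain ⟨i, hi⟩ := hloc y hy
    have hyi := hi ⟨hy, mem_ball_self hδ⟩
    have hzi := hi ⟨hz, by rw [mem_ball, dist_eq_norm]; exact hlt⟩
    have hui := hi ⟨hu, by rw [mem_ball, dist_eq_norm, ← hlen]; exact hlt⟩
    exact two_edge hne hA i hyi hzi hui hyz hyu hperp
  have hbdd : BddBelow (legLengths v) := ⟨δ, hlow⟩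
  -- the compact set of admissible triples
  have hPc : IsCompact (polygonSet v) := isCompact_iUnion (fun i => seg_compact _ _)
  set T : Set (Pt × Pt × Pt) := (polygonSet v ×ˢ polygonSet v ×ˢ polygonSet v) ∩
      {w : Pt × Pt × Pt | ‖w.2.1 - w.1‖ = ‖w.2.2 - w.1‖ ∧
        ⟪w.2.1 - w.1, w.2.2 - w.1⟫ = 0 ∧ δ ≤ ‖w.2.1 - w.1‖} with hT
  have hf1 : Continuous fun w : Pt × Pt × Pt => w.2.1 - w.1 := by fun_prop
  have hf2 : Continuous fun w : Pt × Pt × Pt => w.2.2 - w.1 := by fun_prop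
  have hclosed : IsClosed {w : Pt × Pt × Pt | ‖w.2.1 - w.1‖ = ‖w.2.2 - w.1‖ ∧
      ⟪w.2.1 - w.1, w.2.2 - w.1⟫ = 0 ∧ δ ≤ ‖w.2.1 - w.1‖} := by
    refine IsClosed.inter (isClosed_eq hf1.norm hf2.norm) ?_
    exact IsClosed.inter (isClosed_eq (hf1.inner hf2) continuous_const)
      (isClosed_le continuous_const hf1.norm)
  have hTc : IsCompact T := (hPc.prod (hPc.prod hPc)).inter_right hclosed
  have hTne : T.Nonempty := by
    obtain ⟨l, y, z, u, hy, hz, hu, hyz, hyu, hzu, hlen, hperp, rfl⟩ := hex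
    exact ⟨(y, z, u), ⟨⟨hy, hz, hu⟩, hlen, hperp,
      hlow _ ⟨y, z, u, hy, hz, hu, hyz, hyu, hzu, hlen, hperp, rfl⟩⟩⟩
  obtain ⟨w₀, hw₀T, hmin⟩ := hTc.exists_isMinOn hTne hf1.norm.continuousOn
  obtain ⟨⟨hy₀, hz₀, hu₀⟩, hlen₀, hperp₀, hδ₀⟩ := hw₀T
  have hpos : 0 < ‖w₀.2.1 - w₀.1‖ := lt_of_lt_of_le hδ hδ₀
  have hw0mem : ‖w₀.2.1 - w₀.1‖ ∈ legLengths v := by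
    refine ⟨w₀.1, w₀.2.1, w₀.2.2, hy₀, hz₀, hu₀, ?_, ?_, ?_, hlen₀, hperp₀, rfl⟩
    · intro h
      rw [← h, sub_self, norm_zero] at hpos
      exact lt_irrefl _ hpos
    · intro h
      rw [← h, sub_self, norm_zero] at hlen₀
      rw [hlen₀] at hpos
      exact lt_irrefl _ hpos
    · intro h
      rw [← h, real_inner_self_eq_norm_sq] at hperp₀
      have := pow_eq_zero_iff (n := 2) (by norm_num) |>.mp hperp₀
      rw [this] at hpos
      exact lt_irrefl _ hpos
  have hmin' : ∀ l ∈ legLengths v, ‖w₀.2.1 - w₀.1‖ ≤ l := by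
    rintro l ⟨y, z, u, hy, hz, hu, hyz, hyu, hzu, hlen, hperp, rfl⟩
    have hmem : (y, z, u) ∈ T := ⟨⟨hy, hz, hu⟩, hlen, hperp,
      hlow _ ⟨y, z, u, hy, hz, hu, hyz, hyu, hzu, hlen, hperp, rfl⟩⟩
    have h := isMinOn_iff.mp hmin (y, z, u) hmem
    simpa using h
  have heq : sInf (legLengths v) = ‖w₀.2.1 - w₀.1‖ :=
    le_antisymm (csInf_le hbdd hw0mem) (le_csInf hex hmin')
  rw [heq]
  exact ⟨hpos, hw0mem⟩

end
end

section
/- Let P and P₁, P₂, P₃, … be nonempty compact subsets of ℝ² such that the Hausdorff distance d_H(P_k, P) tends to 0 as k → ∞, and let δ > 0. Suppose that for every k the set P_k has an inscribed square of side length at least δ. Then P has an inscribed square (of side length at least δ). -/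
open scoped RealInnerProductSpace

noncomputable section

lemma rotCCW_apply0 (w : Pt) : rotCCW w 0 = -w 1 := rfl
lemma rotCCW_apply1 (w : Pt) : rotCCW w 1 = w 0 := rfl

lemma continuous_rotCCW : Continuous rotCCW := by
  have : Continuous fun w : Pt => ((WithLp.equiv 2 (Fin 2 → ℝ)).symm ![-w 1, w 0] : Pt) := by
    apply Continuous.comp
    · exact (PiLp.continuousLinearEquiv 2 ℝ (fun _ : Fin 2 => ℝ)).symm.continuous
    · apply continuous_pi
      intro i
      fin_cases i
      · fun_prop
      · fun_prop
  exact this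

lemma rotCCW_eq_zero {w : Pt} (h : rotCCW w = 0) : w = 0 := by
  ext i
  have h0 : rotCCW w 0 = (0 : Pt) 0 := by rw [h]
  have h1 : rotCCW w 1 = (0 : Pt) 1 := by rw [h]
  rw [rotCCW_apply0] at h0
  rw [rotCCW_apply1] at h1
  fin_cases i <;> simp_all

lemma rotCCW_ne_self {w : Pt} (hw : w ≠ 0) : rotCCW w ≠ w := by
  intro h
  apply hw
  have h0 : rotCCW w 0 = w 0 := by rw [h]
  have h1 : rotCCW w 1 = w 1 := by rw [h]
  rw [rotCCW_apply0] at h0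
  rw [rotCCW_apply1] at h1
  ext i
  fin_cases i <;> simp <;> linarith

lemma rotCCW_ne_neg_self {w : Pt} (hw : w ≠ 0) : rotCCW w ≠ -w := by
  intro h
  apply hw
  have h0 : rotCCW w 0 = (-w) 0 := by rw [h]
  have h1 : rotCCW w 1 = (-w) 1 := by rw [h]
  rw [rotCCW_apply0] at h0
  rw [rotCCW_apply1] at h1
  simp only [PiLp.neg_apply] at h0 h1
  ext i
  fin_cases i <;> simp <;> linarith

/-- If nonempty compact sets `Pₖ` converge to `P` in Hausdorff distance and each
`Pₖ` has an inscribed square of side length at least `δ > 0`, then `P` has an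
inscribed square of side length at least `δ`. -/
theorem inscribed_square_hausdorff_limit (P : Set Pt) (Pk : ℕ → Set Pt)
    (hPc : IsCompact P) (hPne : P.Nonempty)
    (hkc : ∀ k, IsCompact (Pk k)) (hkne : ∀ k, (Pk k).Nonempty)
    (hconv : Filter.Tendsto (fun k => Metric.hausdorffDist (Pk k) P)
      Filter.atTop (nhds 0))
    (δ : ℝ) (hδ : 0 < δ)
    (hsq : ∀ k, ∃ a₁ a₂ a₃ a₄ : Pt,
      InscribedSquare (Pk k) a₁ a₂ a₃ a₄ ∧ δ ≤ ‖a₂ - a₁‖) :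
    ∃ a₁ a₂ a₃ a₄ : Pt, InscribedSquare P a₁ a₂ a₃ a₄ ∧ δ ≤ ‖a₂ - a₁‖ := by
  classical
  choose a1 a2 a3 a4 hk using hsq
  have hne : ∀ k, EMetric.hausdorffEdist (Pk k) P ≠ ⊤ := fun k =>
    Metric.hausdorffEdist_ne_top_of_nonempty_of_bounded (hkne k) hPne
      (hkc k).isBounded hPc.isBounded
  have hinf : ∀ k, ∀ x ∈ Pk k, Metric.infDist x P ≤ Metric.hausdorffDist (Pk k) P :=
    fun k x hx => Metric.infDist_le_hausdorffDist_of_mem hx (hne k)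
  obtain ⟨N, hN⟩ : ∃ N, ∀ k ≥ N, Metric.hausdorffDist (Pk k) P ≤ 1 :=
    Filter.eventually_atTop.1 (hconv.eventually (eventually_le_nhds (by norm_num)))
  -- the compact container
  set K : Set Pt := Metric.cthickening 1 P with hK
  have hKc : IsCompact K := hPc.cthickening
  have hmemK : ∀ x k, k ≥ N → x ∈ Pk k → x ∈ K := by
    intro x k hkN hx
    rw [hK, Metric.mem_cthickening_iff]
    have h1 : Metric.infDist x P ≤ 1 := (hinf k x hx).trans (hN k hkN)
    have h2 : EMetric.infEdist x P ≠ ⊤ := Metric.infEdist_ne_top hPne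
    calc EMetric.infEdist x P = ENNReal.ofReal (Metric.infDist x P) :=
          (ENNReal.ofReal_toReal h2).symm
      _ ≤ ENNReal.ofReal 1 := ENNReal.ofReal_le_ofReal h1
  -- the shifted sequence of quadruples
  set b : ℕ → Pt × Pt × Pt × Pt :=
    fun n => (a1 (n + N), a2 (n + N), a3 (n + N), a4 (n + N)) with hb
  have hbK : ∀ n, b n ∈ K ×ˢ K ×ˢ K ×ˢ K := by
    intro n
    have h := hk (n + N)
    obtain ⟨⟨m1, m2, m3, m4, _⟩, _⟩ := h
    have hge : n + N ≥ N := Nat.le_add_left N n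
    exact ⟨hmemK _ _ hge m1, hmemK _ _ hge m2, hmemK _ _ hge m3, hmemK _ _ hge m4⟩
  obtain ⟨⟨l1, l2, l3, l4⟩, _, φ, hφ, hlim⟩ :=
    ((hKc.prod (hKc.prod (hKc.prod hKc)))).tendsto_subseq hbK
  -- component limits
  set ψ : ℕ → ℕ := fun n => φ n + N with hψ
  have hψtop : Filter.Tendsto ψ Filter.atTop Filter.atTop :=
    (Filter.tendsto_atTop_mono (fun n => Nat.le_add_right (φ n) N) hφ.tendsto_atTop)
  have t1 : Filter.Tendsto (fun n => a1 (ψ n)) Filter.atTop (nhds l1) :=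
    (continuous_fst.tendsto _).comp hlim
  have t2 : Filter.Tendsto (fun n => a2 (ψ n)) Filter.atTop (nhds l2) :=
    ((continuous_fst.comp continuous_snd).tendsto _).comp hlim
  have t3 : Filter.Tendsto (fun n => a3 (ψ n)) Filter.atTop (nhds l3) :=
    ((continuous_fst.comp (continuous_snd.comp continuous_snd)).tendsto _).comp hlim
  have t4 : Filter.Tendsto (fun n => a4 (ψ n)) Filter.atTop (nhds l4) :=
    ((continuous_snd.comp (continuous_snd.comp continuous_snd)).tendsto _).comp hlim
  -- memberships in P
  have hmemP : ∀ (a : ℕ → Pt) (l : Pt), (∀ k, a k ∈ Pk k) →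
      Filter.Tendsto (fun n => a (ψ n)) Filter.atTop (nhds l) → l ∈ P := by
    intro a l hmem htend
    have hd : Filter.Tendsto (fun n => Metric.infDist (a (ψ n)) P) Filter.atTop (nhds 0) := by
      have hub : Filter.Tendsto (fun n => Metric.hausdorffDist (Pk (ψ n)) P)
          Filter.atTop (nhds 0) := hconv.comp hψtop
      have h0 : ∀ n, (0 : ℝ) ≤ Metric.infDist (a (ψ n)) P := fun n => Metric.infDist_nonneg
      have h1 : ∀ n, Metric.infDist (a (ψ n)) P ≤ Metric.hausdorffDist (Pk (ψ n)) P :=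
        fun n => hinf (ψ n) _ (hmem (ψ n))
      exact squeeze_zero h0 h1 hub
    have hcont : Filter.Tendsto (fun n => Metric.infDist (a (ψ n)) P) Filter.atTop
        (nhds (Metric.infDist l P)) :=
      ((Metric.continuous_infDist_pt P).tendsto l).comp htend
    have : Metric.infDist l P = 0 := tendsto_nhds_unique hcont hd
    exact (hPc.isClosed.mem_iff_infDist_zero hPne).2 this
  have hm : ∀ k, a1 k ∈ Pk k ∧ a2 k ∈ Pk k ∧ a3 k ∈ Pk k ∧ a4 k ∈ Pk k := by
    intro k; obtain ⟨⟨m1, m2, m3, m4, _⟩, _⟩ := hk k; exact ⟨m1, m2, m3, m4⟩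
  have hl1 : l1 ∈ P := hmemP a1 l1 (fun k => (hm k).1) t1
  have hl2 : l2 ∈ P := hmemP a2 l2 (fun k => (hm k).2.1) t2
  have hl3 : l3 ∈ P := hmemP a3 l3 (fun k => (hm k).2.2.1) t3
  have hl4 : l4 ∈ P := hmemP a4 l4 (fun k => (hm k).2.2.2) t4
  -- algebraic identities pass to the limit
  have e1 : l2 - l1 = l3 - l4 := by
    have ha : Filter.Tendsto (fun n => a2 (ψ n) - a1 (ψ n)) Filter.atTop (nhds (l2 - l1)) :=
      t2.sub t1
    have hb' : Filter.Tendsto (fun n => a2 (ψ n) - a1 (ψ n)) Filter.atTop (nhds (l3 - l4)) := by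
      have : (fun n => a2 (ψ n) - a1 (ψ n)) = fun n => a3 (ψ n) - a4 (ψ n) := by
        funext n
        exact (hk (ψ n)).1.2.2.2.2.1
      rw [this]
      exact t3.sub t4
    exact tendsto_nhds_unique ha hb'
  have e2 : l3 - l2 = rotCCW (l2 - l1) := by
    have ha : Filter.Tendsto (fun n => a3 (ψ n) - a2 (ψ n)) Filter.atTop (nhds (l3 - l2)) :=
      t3.sub t2
    have hb' : Filter.Tendsto (fun n => a3 (ψ n) - a2 (ψ n)) Filter.atTop
        (nhds (rotCCW (l2 - l1))) := by
      have : (fun n => a3 (ψ n) - a2 (ψ n)) =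
          fun n => rotCCW (a2 (ψ n) - a1 (ψ n)) := by
        funext n
        exact (hk (ψ n)).1.2.2.2.2.2.1
      rw [this]
      exact (continuous_rotCCW.tendsto _).comp (t2.sub t1)
    exact tendsto_nhds_unique ha hb'
  -- side length bound
  have hlen : δ ≤ ‖l2 - l1‖ := by
    have hnorm : Filter.Tendsto (fun n => ‖a2 (ψ n) - a1 (ψ n)‖) Filter.atTop
        (nhds ‖l2 - l1‖) := (t2.sub t1).norm
    exact ge_of_tendsto' hnorm (fun n => (hk (ψ n)).2)
  -- nondegeneracy
  have hv : l2 - l1 ≠ 0 := by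
    intro h; rw [h, norm_zero] at hlen; linarith
  have hd12 : l1 ≠ l2 := fun h => hv (by rw [h, sub_self])
  have hd23 : l2 ≠ l3 := by
    intro h
    rw [← h, sub_self] at e2
    exact hv (rotCCW_eq_zero e2.symm)
  have hd34 : l3 ≠ l4 := by
    intro h
    rw [h, sub_self] at e1
    exact hv e1
  have hd14 : l1 ≠ l4 := by
    intro h
    apply hv
    rw [h] at e1
    have h23 : l2 = l3 := sub_left_injective e1
    rw [← h23, sub_self] at e2
    exact rotCCW_eq_zero e2.symm
  have hd13 : l1 ≠ l3 := by
    intro h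
    refine rotCCW_ne_neg_self hv ?_
    rw [← e2, ← h]
    abel
  have hd24 : l2 ≠ l4 := by
    intro h
    refine rotCCW_ne_self hv ?_
    rw [← e2, e1, h]
  exact ⟨l1, l2, l3, l4, ⟨hl1, hl2, hl3, hl4, e1, e2, hd12, hd13, hd14, hd23, hd24, hd34⟩, hlen⟩
end
end

section
/- For every simple polygon P in ℝ² and every ε > 0, there exists a simple polygon Q in ℝ² all of whose interior angles lie strictly between π/2 and 3π/2 such that the Hausdorff distance between P and Q is less than ε. -/
open scoped RealInnerProductSpace

noncomputable section

private lemma isCompact_seg_s12 (a b : Pt) : IsCompact (segment ℝ a b) := by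
  rw [segment_eq_image]
  exact isCompact_Icc.image (by fun_prop)

private lemma seg_param_mem (x u : Pt) {α β s : ℝ} (h1 : α ≤ s) (h2 : s ≤ β) :
    x + s • u ∈ segment ℝ (x + α • u) (x + β • u) := by
  rcases lt_or_eq_of_le (h1.trans h2) with h | h
  · have hβα : β - α ≠ 0 := ne_of_gt (by linarith)
    set θ := (s - α) / (β - α) with hθ
    have h0 : 0 ≤ θ := div_nonneg (by linarith) (by linarith)
    have h1' : θ ≤ 1 := (div_le_one (by linarith)).2 (by linarith)
    refine ⟨1 - θ, θ, by linarith, h0, by ring, ?_⟩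
    have hs : α + θ * (β - α) = s := by rw [hθ]; field_simp; ring
    calc (1 - θ) • (x + α • u) + θ • (x + β • u) = x + (α + θ * (β - α)) • u := by module
    _ = x + s • u := by rw [hs]
  · have hs : s = α := le_antisymm (h ▸ h2) h1
    rw [hs]; exact left_mem_segment ℝ _ _

private lemma seg_param_of_mem {x u : Pt} {α β : ℝ} (hαβ : α ≤ β) {z : Pt}
    (hz : z ∈ segment ℝ (x + α • u) (x + β • u)) :
    ∃ s, α ≤ s ∧ s ≤ β ∧ z = x + s • u := by
  obtain ⟨c, d, hc, hd, hcd, hz⟩ := hz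
  have hc' : c = 1 - d := by linarith
  subst hc'
  refine ⟨(1 - d) * α + d * β, by nlinarith, by nlinarith, ?_⟩
  rw [← hz]; module

private lemma dist_param (x u : Pt) (s t : ℝ) (hu : ‖u‖ = 1) :
    dist (x + s • u) (x + t • u) = |s - t| := by
  rw [dist_eq_norm]
  have h : (x + s • u) - (x + t • u) = (s - t) • u := by module
  rw [h, norm_smul, hu, mul_one, Real.norm_eq_abs]

private lemma neg_one_lt_inner_of_unit {x y : Pt} (hx : ‖x‖ = 1) (hy : ‖y‖ = 1)
    (hxy : y ≠ -x) : -1 < ⟪x, y⟫ := by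
  have h1 : |⟪x, y⟫| ≤ 1 := by simpa [hx, hy] using abs_real_inner_le_norm x y
  have h2 : ⟪x, y⟫ ≠ -1 := by
    intro h
    have hny : ‖-y‖ = 1 := by simpa using hy
    have h3 : ⟪x, -y⟫ = 1 := by rw [inner_neg_right, h]; norm_num
    have := (inner_eq_one_iff_of_norm_eq_one hx hny).1 h3
    exact hxy (by rw [this]; simp)
  rcases abs_le.1 h1 with ⟨hl, _⟩
  exact lt_of_le_of_ne hl (fun h => h2 h.symm)

private lemma inter_AB {A B u₁ u₂ : Pt} {L δ : ℝ} (hu₁ : ‖u₁‖ = 1)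
    (hB : B = A + L • u₁) (hδ : 0 < δ) (hL : 2 * δ < L) (hK : -1 < ⟪u₁, u₂⟫) :
    segment ℝ (A + δ • u₁) (B - δ • u₁) ∩ segment ℝ (B - δ • u₁) (B + δ • u₂)
      = {B - δ • u₁} := by
  apply Set.Subset.antisymm
  · rintro x ⟨hx1, hx2⟩
    have hQ : B - δ • u₁ = A + (L - δ) • u₁ := by rw [hB]; module
    rw [hQ] at hx1
    obtain ⟨s, hs1, hs2, hxz⟩ := seg_param_of_mem (by linarith) hx1
    obtain ⟨c, d, hc, hd, hcd, hxe⟩ := hx2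
    have hc' : c = 1 - d := by linarith
    subst hc'
    have h1 : A + s • u₁ = (1 - d) • (B - δ • u₁) + d • (B + δ • u₂) := by
      rw [← hxz, hxe]
    rw [hB] at h1
    have key : (s - L + δ - d * δ) • u₁ = (d * δ) • u₂ := by
      linear_combination (norm := module) h1
    have hinner := congrArg (fun z : Pt => ⟪z, u₁⟫) key
    simp only [real_inner_smul_left] at hinner
    rw [real_inner_self_eq_norm_sq, hu₁] at hinner
    have hcomm : ⟪u₂, u₁⟫ = ⟪u₁, u₂⟫ := real_inner_comm _ _
    rw [hcomm] at hinner
    simp only [one_pow, mul_one] at hinner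
    have hd1 : d = 0 := by
      by_contra hd0
      have hdpos : 0 < d := lt_of_le_of_ne hd (Ne.symm hd0)
      have hh := mul_lt_mul_of_pos_left hK (mul_pos hdpos hδ)
      nlinarith
    subst hd1
    simp only [sub_zero, one_smul, zero_smul, add_zero] at hxe
    rw [← hxe]
    exact Set.mem_singleton _
  · rw [Set.singleton_subset_iff]
    exact ⟨right_mem_segment ℝ _ _, left_mem_segment ℝ _ _⟩

private lemma inter_BA {B C u₁ u₂ : Pt} {M δ : ℝ} (hu₂ : ‖u₂‖ = 1)
    (hC : C = B + M • u₂) (hδ : 0 < δ) (hM : 2 * δ < M) (hK : -1 < ⟪u₁, u₂⟫) :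
    segment ℝ (B - δ • u₁) (B + δ • u₂) ∩ segment ℝ (B + δ • u₂) (C - δ • u₂)
      = {B + δ • u₂} := by
  apply Set.Subset.antisymm
  · rintro x ⟨hx1, hx2⟩
    have hR : C - δ • u₂ = B + (M - δ) • u₂ := by rw [hC]; module
    rw [hR] at hx2
    obtain ⟨s, hs1, hs2, hxz⟩ := seg_param_of_mem (x := B) (u := u₂) (by linarith) hx2
    obtain ⟨c, d, hc, hd, hcd, hxe⟩ := hx1
    have hc' : c = 1 - d := by linarith
    subst hc'
    have h1 : B + s • u₂ = (1 - d) • (B - δ • u₁) + d • (B + δ • u₂) := by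
      rw [← hxz, hxe]
    have key : (s - d * δ) • u₂ = ((d - 1) * δ) • u₁ := by
      linear_combination (norm := module) h1
    have hinner := congrArg (fun z : Pt => ⟪z, u₂⟫) key
    simp only [real_inner_smul_left] at hinner
    rw [real_inner_self_eq_norm_sq, hu₂] at hinner
    simp only [one_pow, mul_one] at hinner
    have hd1 : d = 1 := by
      by_contra hd0
      have hdpos : 0 < 1 - d := lt_of_le_of_ne (by linarith) (fun h => hd0 (by linarith))
      have hh := mul_lt_mul_of_pos_left hK (mul_pos hdpos hδ)
      nlinarith
    subst hd1
    simp only [sub_self, zero_smul, one_smul, zero_add] at hxe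
    rw [← hxe]
    exact Set.mem_singleton _
  · rw [Set.singleton_subset_iff]
    exact ⟨right_mem_segment ℝ _ _, left_mem_segment ℝ _ _⟩

private lemma ang_neg {u₁ u₂ : Pt} {c δ : ℝ} (hu₁ : ‖u₁‖ = 1) (hc : 0 < c) (hδ : 0 < δ)
    (hK : -1 < ⟪u₁, u₂⟫) : ⟪-(c • u₁), δ • (u₁ + u₂)⟫ < 0 := by
  rw [inner_neg_left, real_inner_smul_left, real_inner_smul_right, inner_add_right,
    real_inner_self_eq_norm_sq, hu₁]
  have h1 : 0 < 1 + ⟪u₁, u₂⟫ := by linarith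
  nlinarith [mul_pos (mul_pos hc hδ) h1]

private lemma ang_neg' {u₁ u₂ : Pt} {c δ : ℝ} (hu₁ : ‖u₁‖ = 1) (hc : 0 < c) (hδ : 0 < δ)
    (hK : -1 < ⟪u₁, u₂⟫) : ⟪-(δ • (u₁ + u₂)), c • u₁⟫ < 0 := by
  rw [real_inner_comm, inner_neg_right, real_inner_smul_left, real_inner_smul_right,
    inner_add_right, real_inner_self_eq_norm_sq, hu₁]
  have h1 : 0 < 1 + ⟪u₁, u₂⟫ := by linarith
  nlinarith [mul_pos (mul_pos hc hδ) h1]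

set_option maxHeartbeats 2000000 in
/-- Every simple polygon can be approximated arbitrarily well in Hausdorff distance
by a simple polygon all of whose interior angles lie strictly between `π/2` and
`3π/2`. -/
theorem approx_by_obtuse_polygon {n : ℕ} (v : ZMod n → Pt)
    (hP : IsSimplePolygon v) (ε : ℝ) (hε : 0 < ε) :
    ∃ (m : ℕ) (w : ZMod m → Pt), IsSimplePolygon w ∧ ObtuseAngles w ∧
      Metric.hausdorffDist (polygonSet v) (polygonSet w) < ε := by
  obtain ⟨hn3, hne, hcons, hdisj⟩ := hP
  haveI : NeZero n := ⟨by omega⟩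
  haveI : NeZero (2 * n) := ⟨by omega⟩
  haveI : Fact (1 < n) := ⟨by omega⟩
  -- injectivity of vertices
  have hvinj : Function.Injective v := by
    intro a b hab
    by_contra hab'
    rcases eq_or_ne b (a + 1) with rfl | h1
    · exact hne a hab
    rcases eq_or_ne a (b + 1) with rfl | h2
    · exact hne b hab.symm
    have h := hdisj a b hab' h2 h1
    have hmem : v a ∈ segment ℝ (v a) (v (a + 1)) ∩ segment ℝ (v b) (v (b + 1)) :=
      ⟨left_mem_segment ℝ _ _, by rw [hab]; exact left_mem_segment ℝ _ _⟩
    rw [h] at hmem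
    exact hmem
  -- a vertex does not lie on a non-adjacent edge
  have hvnot : ∀ i j : ZMod n, j ≠ i → j ≠ i + 1 → v j ∉ segment ℝ (v i) (v (i + 1)) := by
    intro i j hji hji1 hmem
    rcases eq_or_ne i (j + 1) with rfl | h2
    · have hmem2 : v j ∈ segment ℝ (v j) (v (j + 1)) ∩ segment ℝ (v (j + 1)) (v (j + 2)) :=
        ⟨left_mem_segment ℝ _ _, by rw [show j + 2 = j + 1 + 1 by ring]; exact hmem⟩
      rw [hcons j] at hmem2
      exact hne j hmem2
    · have h := hdisj i j (Ne.symm hji) h2 hji1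
      have hmem2 : v j ∈ segment ℝ (v i) (v (i + 1)) ∩ segment ℝ (v j) (v (j + 1)) :=
        ⟨hmem, left_mem_segment ℝ _ _⟩
      rw [h] at hmem2
      exact hmem2
  -- lengths and unit directions
  set L : ZMod n → ℝ := fun i => ‖v (i + 1) - v i‖ with hLdef
  have hL : ∀ i, 0 < L i := fun i => by
    simp only [hLdef]
    rw [norm_sub_pos_iff]
    exact fun h => hne i h.symm
  set u : ZMod n → Pt := fun i => (L i)⁻¹ • (v (i + 1) - v i) with hudef
  have hu : ∀ i, ‖u i‖ = 1 := fun i => by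
    simp only [hudef]
    rw [norm_smul, Real.norm_eq_abs, abs_inv, abs_of_pos (hL i)]
    exact inv_mul_cancel₀ (ne_of_gt (hL i))
  have hLu : ∀ i, v i + L i • u i = v (i + 1) := fun i => by
    simp only [hudef]
    rw [smul_smul, mul_inv_cancel₀ (ne_of_gt (hL i)), one_smul]
    exact add_sub_cancel _ _
  -- no immediate backtracking
  have hback : ∀ i, u (i + 1) ≠ -u i := by
    intro i heq
    set t := min (L i) (L (i + 1)) with ht
    have ht0 : 0 < t := lt_min (hL i) (hL (i + 1))
    have htLi : t ≤ L i := min_le_left _ _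
    have htLi1 : t ≤ L (i + 1) := min_le_right _ _
    have hx1 : v (i + 1) - t • u i ∈ segment ℝ (v i) (v (i + 1)) := by
      have he : v (i + 1) - t • u i = v i + (L i - t) • u i := by
        rw [← hLu i]; module
      rw [he, show segment ℝ (v i) (v (i + 1))
          = segment ℝ (v i + (0 : ℝ) • u i) (v i + L i • u i) by rw [hLu i]; simp]
      exact seg_param_mem _ _ (by linarith) (by linarith)
    have hx2 : v (i + 1) - t • u i ∈ segment ℝ (v (i + 1)) (v (i + 2)) := by
      have he : v (i + 1) - t • u i = v (i + 1) + t • u (i + 1) := by rw [heq]; module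
      rw [he, show segment ℝ (v (i + 1)) (v (i + 2))
          = segment ℝ (v (i + 1) + (0 : ℝ) • u (i + 1)) (v (i + 1) + L (i + 1) • u (i + 1)) by
            rw [hLu (i + 1), show i + 1 + 1 = i + 2 by ring]; simp]
      exact seg_param_mem _ _ (by linarith) (by linarith)
    have hm : v (i + 1) - t • u i ∈ segment ℝ (v i) (v (i + 1)) ∩ segment ℝ (v (i + 1)) (v (i + 2)) :=
      ⟨hx1, hx2⟩
    rw [hcons i] at hm
    have hz : t • u i = 0 := by
      have : v (i + 1) - t • u i = v (i + 1) := hm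
      have h2 := congrArg (fun z => v (i + 1) - z) this
      simpa using (sub_eq_self.1 this)
    rcases smul_eq_zero.1 hz with h' | h'
    · linarith
    · have := hu i; rw [h'] at this; simp at this
  have hK : ∀ i, -1 < ⟪u i, u (i + 1)⟫ := fun i =>
    neg_one_lt_inner_of_unit (hu i) (hu (i + 1)) (hback i)
  -- minimal quantities
  have hnen : (Finset.univ : Finset (ZMod n)).Nonempty := Finset.univ_nonempty
  set Lmin := Finset.univ.inf' hnen L with hLmin
  have hLmin0 : 0 < Lmin := (Finset.lt_inf'_iff hnen).2 fun i _ => hL i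
  have hLminle : ∀ i, Lmin ≤ L i := by
    intro i
    rw [hLmin]
    exact Finset.inf'_le (b := i) L (Finset.mem_univ i)
  have hod : (Finset.univ.offDiag : Finset (ZMod n × ZMod n)).Nonempty := by
    refine ⟨(0, 1), Finset.mem_offDiag.2 ⟨Finset.mem_univ _, Finset.mem_univ _, ?_⟩⟩
    exact zero_ne_one
  set ρ₀ := Finset.univ.offDiag.inf' hod (fun pr => dist (v pr.1) (v pr.2)) with hρ₀def
  have hρ₀0 : 0 < ρ₀ := (Finset.lt_inf'_iff hod).2 fun pr hpr =>
    dist_pos.2 fun h => (Finset.mem_offDiag.1 hpr).2.2 (hvinj h)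
  have hρ₀le : ∀ a b, a ≠ b → ρ₀ ≤ dist (v a) (v b) := by
    intro a b hab
    rw [hρ₀def]
    exact Finset.inf'_le (b := (a, b)) (fun pr : ZMod n × ZMod n => dist (v pr.1) (v pr.2))
      (Finset.mem_offDiag.2 ⟨Finset.mem_univ _, Finset.mem_univ _, hab⟩)
  set S₁ := Finset.univ.filter
    (fun pr : ZMod n × ZMod n => pr.1 ≠ pr.2 ∧ pr.1 ≠ pr.2 + 1) with hS₁def
  have hS₁ne : S₁.Nonempty := by
    refine ⟨((2 : ZMod n), 0), Finset.mem_filter.2 ⟨Finset.mem_univ _, ?_, ?_⟩⟩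
    · intro h
      have h2 := congrArg ZMod.val h
      rw [show (2 : ZMod n) = ((2 : ℕ) : ZMod n) by norm_cast,
        ZMod.val_cast_of_lt (by omega), ZMod.val_zero] at h2
      omega
    · rw [zero_add]
      intro h
      have h2 := congrArg ZMod.val h
      rw [show (2 : ZMod n) = ((2 : ℕ) : ZMod n) by norm_cast,
        ZMod.val_cast_of_lt (by omega), ZMod.val_one] at h2
      omega
  set ρ₁ := S₁.inf' hS₁ne
    (fun pr => Metric.infDist (v pr.1) (segment ℝ (v pr.2) (v (pr.2 + 1)))) with hρ₁def
  have hρ₁0 : 0 < ρ₁ := by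
    rw [hρ₁def, Finset.lt_inf'_iff]
    intro pr hpr
    obtain ⟨-, hp1, hp2⟩ := Finset.mem_filter.1 hpr
    exact ((isCompact_seg_s12 _ _).isClosed.notMem_iff_infDist_pos
      ⟨_, left_mem_segment ℝ _ _⟩).1 (hvnot _ _ hp1 hp2)
  have hρ₁le : ∀ i j, j ≠ i → j ≠ i + 1 → ∀ x ∈ segment ℝ (v i) (v (i + 1)),
      ρ₁ ≤ dist (v j) x := by
    intro i j h1 h2 x hx
    have hle : ρ₁ ≤ Metric.infDist (v j) (segment ℝ (v i) (v (i + 1))) := by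
      rw [hρ₁def]
      exact Finset.inf'_le (b := (j, i))
        (fun pr : ZMod n × ZMod n => Metric.infDist (v pr.1) (segment ℝ (v pr.2) (v (pr.2 + 1))))
        (Finset.mem_filter.2 ⟨Finset.mem_univ _, h1, h2⟩)
    exact le_trans hle (Metric.infDist_le_dist_of_mem hx)
  -- choice of δ
  set δ := min (min (Lmin / 4) (ρ₁ / 2)) (min (ρ₀ / 4) (ε / 2)) with hδdef
  have hδ0 : 0 < δ :=
    lt_min (lt_min (by linarith) (by linarith)) (lt_min (by linarith) (by linarith))
  have hδL : ∀ i, 2 * δ < L i := fun i => by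
    have h1 : δ ≤ Lmin / 4 := le_trans (min_le_left _ _) (min_le_left _ _)
    have := hLminle i
    linarith
  have hδρ₁ : δ < ρ₁ := by
    have h1 : δ ≤ min (Lmin / 4) (ρ₁ / 2) := min_le_left _ _
    have h2 : min (Lmin / 4) (ρ₁ / 2) ≤ ρ₁ / 2 := min_le_right _ _
    linarith
  have hδρ₀ : 2 * δ < ρ₀ := by
    have h1 : δ ≤ min (ρ₀ / 4) (ε / 2) := min_le_right _ _
    have h2 : min (ρ₀ / 4) (ε / 2) ≤ ρ₀ / 4 := min_le_left _ _
    linarith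
  have hδε : δ < ε := by
    have h1 : δ ≤ min (ρ₀ / 4) (ε / 2) := min_le_right _ _
    have h2 : min (ρ₀ / 4) (ε / 2) ≤ ε / 2 := min_le_right _ _
    linarith
  -- the corner-cut points
  set p : ZMod n → Pt := fun i => v i + δ • u i with hpdef
  set q : ZMod n → Pt := fun i => v i + (L i - δ) • u i with hqdef
  have hq' : ∀ i, q i = v (i + 1) - δ • u i := by
    intro i
    simp only [hqdef]
    rw [← hLu i]
    module
  have hEeq : ∀ i, segment ℝ (v i) (v (i + 1))
      = segment ℝ (v i + (0 : ℝ) • u i) (v i + L i • u i) := by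
    intro i; rw [hLu i]; simp
  have hpmem : ∀ i, p i ∈ segment ℝ (v i) (v (i + 1)) := by
    intro i
    rw [hEeq i]
    simp only [hpdef]
    exact seg_param_mem _ _ hδ0.le (by linarith [hδL i])
  have hqmem : ∀ i, q i ∈ segment ℝ (v i) (v (i + 1)) := by
    intro i
    rw [hEeq i]
    simp only [hqdef]
    exact seg_param_mem _ _ (by linarith [hδL i]) (by linarith [hδ0])
  have hAsub : ∀ i, segment ℝ (p i) (q i) ⊆ segment ℝ (v i) (v (i + 1)) :=
    fun i => (convex_segment _ _).segment_subset (hpmem i) (hqmem i)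
  have hApar : ∀ i, ∀ x ∈ segment ℝ (p i) (q i),
      ∃ s, δ ≤ s ∧ s ≤ L i - δ ∧ x = v i + s • u i := by
    intro i x hx
    simp only [hpdef, hqdef] at hx
    exact seg_param_of_mem (by linarith [hδL i]) hx
  have hBsub : ∀ i, segment ℝ (q i) (p (i + 1)) ⊆ Metric.closedBall (v (i + 1)) δ := by
    intro i
    apply (convex_closedBall _ _).segment_subset
    · rw [Metric.mem_closedBall, hq' i, dist_eq_norm]
      have he : v (i + 1) - δ • u i - v (i + 1) = -(δ • u i) := by module
      rw [he, norm_neg, norm_smul, hu i, mul_one, Real.norm_eq_abs, abs_of_pos hδ0]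
    · rw [Metric.mem_closedBall]
      simp only [hpdef]
      rw [dist_eq_norm]
      have he : v (i + 1) + δ • u (i + 1) - v (i + 1) = δ • u (i + 1) := by module
      rw [he, norm_smul, hu (i + 1), mul_one, Real.norm_eq_abs, abs_of_pos hδ0]
  -- consecutive edge intersections
  have hABc : ∀ a, segment ℝ (p a) (q a) ∩ segment ℝ (q a) (p (a + 1)) = {q a} := by
    intro a
    have h := inter_AB (A := v a) (B := v (a + 1)) (u₂ := u (a + 1))
      (hu a) (hLu a).symm hδ0 (hδL a) (hK a)
    rw [hq' a]
    simp only [hpdef]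
    exact h
  have hBAc : ∀ a, segment ℝ (q a) (p (a + 1)) ∩ segment ℝ (p (a + 1)) (q (a + 1)) = {p (a + 1)} := by
    intro a
    have h := inter_BA (B := v (a + 1)) (C := v (a + 1 + 1)) (u₁ := u a)
      (hu (a + 1)) (hLu (a + 1)).symm hδ0 (hδL (a + 1)) (hK a)
    rw [hq' a, hq' (a + 1)]
    simp only [hpdef]
    exact h
  -- disjointness of subedges
  have hAAadj : ∀ a x, x ∈ segment ℝ (p a) (q a) → x ∈ segment ℝ (p (a + 1)) (q (a + 1)) → False := by
    intro a x hxa hxb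
    have hm : x ∈ segment ℝ (v a) (v (a + 1)) ∩ segment ℝ (v (a + 1)) (v (a + 2)) :=
      ⟨hAsub a hxa, by rw [show a + 2 = a + 1 + 1 by ring]; exact hAsub (a + 1) hxb⟩
    rw [hcons a] at hm
    obtain ⟨s, hs1, hs2, hxs⟩ := hApar (a + 1) x hxb
    rw [hm] at hxs
    have hz : s • u (a + 1) = 0 := ((left_eq_add).1 hxs)
    rcases smul_eq_zero.1 hz with h' | h'
    · linarith
    · have := hu (a + 1); rw [h'] at this; simp at this
  have hAA : ∀ a b, a ≠ b →
      segment ℝ (p a) (q a) ∩ segment ℝ (p b) (q b) = ∅ := by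
    intro a b hab
    rw [Set.eq_empty_iff_forall_notMem]
    rintro x ⟨hxa, hxb⟩
    rcases eq_or_ne b (a + 1) with rfl | h1
    · exact hAAadj a x hxa hxb
    rcases eq_or_ne a (b + 1) with rfl | h2
    · exact hAAadj b x hxb hxa
    · have h := hdisj a b hab h2 h1
      have hm : x ∈ segment ℝ (v a) (v (a + 1)) ∩ segment ℝ (v b) (v (b + 1)) :=
        ⟨hAsub a hxa, hAsub b hxb⟩
      rw [h] at hm
      exact hm
  have hBB : ∀ a b, a ≠ b →
      segment ℝ (q a) (p (a + 1)) ∩ segment ℝ (q b) (p (b + 1)) = ∅ := by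
    intro a b hab
    rw [Set.eq_empty_iff_forall_notMem]
    rintro x ⟨hxa, hxb⟩
    have d1 := Metric.mem_closedBall.1 (hBsub a hxa)
    have d2 := Metric.mem_closedBall.1 (hBsub b hxb)
    have hne' : a + 1 ≠ b + 1 := by
      intro h
      apply hab
      have := congrArg (fun z => z - 1) h
      simpa using this
    have h3 := hρ₀le (a + 1) (b + 1) hne'
    have h4 := dist_triangle (v (a + 1)) x (v (b + 1))
    have h5 : dist (v (a + 1)) x = dist x (v (a + 1)) := dist_comm _ _
    linarith
  have hAB : ∀ a b, a ≠ b → a ≠ b + 1 →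
      segment ℝ (p a) (q a) ∩ segment ℝ (q b) (p (b + 1)) = ∅ := by
    intro a b h1 h2
    rw [Set.eq_empty_iff_forall_notMem]
    rintro x ⟨hxa, hxb⟩
    have hxe := hAsub a hxa
    have hb1 : b + 1 ≠ a := Ne.symm h2
    have hb2 : b + 1 ≠ a + 1 := by
      intro h
      apply h1
      have := congrArg (fun z => z - 1) h
      simpa using this.symm
    have hd := hρ₁le a (b + 1) hb1 hb2 x hxe
    have d2 := Metric.mem_closedBall.1 (hBsub b hxb)
    have h5 : dist (v (b + 1)) x = dist x (v (b + 1)) := dist_comm _ _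
    linarith
  -- angle conditions
  have hang2 : ∀ a, ⟪p a - q a, p (a + 1) - q a⟫ < 0 := by
    intro a
    have e1 : p a - q a = -((L a - 2 * δ) • u a) := by
      simp only [hpdef, hqdef]; module
    have e2 : p (a + 1) - q a = δ • (u a + u (a + 1)) := by
      rw [hq' a]; simp only [hpdef]; module
    rw [e1, e2]
    exact ang_neg (hu a) (by linarith [hδL a]) hδ0 (hK a)
  have hang1 : ∀ a, ⟪q (a - 1) - p a, q a - p a⟫ < 0 := by
    intro a
    have e1 : q (a - 1) - p a = -(δ • (u a + u (a - 1))) := by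
      rw [hq' (a - 1), show a - 1 + 1 = a by ring]
      simp only [hpdef]; module
    have e2 : q a - p a = (L a - 2 * δ) • u a := by
      simp only [hpdef, hqdef]; module
    rw [e1, e2]
    have hK' : -1 < ⟪u a, u (a - 1)⟫ := by
      have h := hK (a - 1)
      rw [show a - 1 + 1 = a by ring] at h
      rw [real_inner_comm]
      exact h
    exact ang_neg' (hu a) (by linarith [hδL a]) hδ0 hK'
  -- consecutive new vertices distinct
  have hpq : ∀ a, p a ≠ q a := by
    intro a h
    simp only [hpdef, hqdef] at h
    have h2 := add_left_cancel h
    have h3 : (L a - δ - δ) • u a = 0 := by rw [sub_smul, ← h2]; simp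
    rcases smul_eq_zero.1 h3 with h' | h'
    · linarith [hδL a]
    · have := hu a; rw [h'] at this; simp at this
  have hqp : ∀ a, q a ≠ p (a + 1) := by
    intro a h
    rw [hq' a] at h
    simp only [hpdef] at h
    apply hback a
    have h2 : -(δ • u a) = δ • u (a + 1) := by
      have := congrArg (fun z => z - v (a + 1)) h
      simpa [sub_eq_add_neg, add_comm] using this
    have h3 : δ • (u (a + 1) + u a) = 0 := by
      rw [smul_add, ← h2]; simp
    rcases smul_eq_zero.1 h3 with h' | h'
    · linarith
    · exact eq_neg_of_add_eq_zero_left h'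
  -- the doubled index map
  set ι : ZMod n → ZMod (2 * n) := fun a => ((2 * a.val : ℕ) : ZMod (2 * n)) with hιdef
  set w : ZMod (2 * n) → Pt := fun k =>
    if k.val % 2 = 0 then p ((k.val / 2 : ℕ) : ZMod n) else q ((k.val / 2 : ℕ) : ZMod n) with hwdef
  have hvallt : ∀ a : ZMod n, a.val < n := fun a => ZMod.val_lt a
  have hcastval : ∀ a : ZMod n, ((a.val : ℕ) : ZMod n) = a := fun a => by
    rw [ZMod.natCast_val, ZMod.cast_id]
  have hιval : ∀ a, (ι a).val = 2 * a.val := by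
    intro a
    simp only [hιdef]
    rw [ZMod.val_natCast]
    exact Nat.mod_eq_of_lt (by have := hvallt a; omega)
  have hι1val : ∀ a, (ι a + 1).val = 2 * a.val + 1 := by
    intro a
    have he : ι a + 1 = ((2 * a.val + 1 : ℕ) : ZMod (2 * n)) := by
      simp only [hιdef]; push_cast; ring
    rw [he, ZMod.val_natCast]
    exact Nat.mod_eq_of_lt (by have := hvallt a; omega)
  have hwp : ∀ a, w (ι a) = p a := by
    intro a
    simp only [hwdef]
    rw [hιval a]
    have h2 : 2 * a.val % 2 = 0 := by omega
    have h3 : 2 * a.val / 2 = a.val := by omega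
    rw [h2, h3]
    simp [hcastval a]
  have hwq : ∀ a, w (ι a + 1) = q a := by
    intro a
    simp only [hwdef]
    rw [hι1val a]
    have h2 : (2 * a.val + 1) % 2 = 1 := by omega
    have h3 : (2 * a.val + 1) / 2 = a.val := by omega
    rw [h2, h3]
    simp [hcastval a]
  have hι2 : ∀ a, ι a + 2 = ι (a + 1) := by
    intro a
    simp only [hιdef]
    have hv1 : (a + 1).val = (a.val + 1) % n := by
      rw [ZMod.val_add, ZMod.val_one]
    rw [hv1]
    have h2 : 2 * ((a.val + 1) % n) + (2 * n) * ((a.val + 1) / n) = 2 * a.val + 2 := by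
      have hdm := Nat.div_add_mod (a.val + 1) n
      calc 2 * ((a.val + 1) % n) + (2 * n) * ((a.val + 1) / n)
          = 2 * (n * ((a.val + 1) / n) + (a.val + 1) % n) := by ring
      _ = 2 * (a.val + 1) := by rw [hdm]
      _ = 2 * a.val + 2 := by ring
    have h3 : ((2 * ((a.val + 1) % n) : ℕ) : ZMod (2 * n))
        = ((2 * a.val + 2 : ℕ) : ZMod (2 * n)) := by
      have h4 : ((2 * ((a.val + 1) % n) + 2 * n * ((a.val + 1) / n) : ℕ) : ZMod (2 * n))
          = ((2 * ((a.val + 1) % n) : ℕ) : ZMod (2 * n)) := by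
        simp [Nat.cast_add, Nat.cast_mul, ZMod.natCast_self]
      rw [← h4, h2]
    rw [h3]
    push_cast
    ring
  have hιinj : ∀ a b, ι a = ι b → a = b := by
    intro a b h
    have h2 := congrArg ZMod.val h
    rw [hιval, hιval] at h2
    rw [← hcastval a, ← hcastval b]
    congr 1
    omega
  have hsurj : ∀ k : ZMod (2 * n), ∃ a, k = ι a ∨ k = ι a + 1 := by
    intro k
    have hk : k.val < 2 * n := ZMod.val_lt k
    refine ⟨((k.val / 2 : ℕ) : ZMod n), ?_⟩
    have hv : (((k.val / 2 : ℕ) : ZMod n)).val = k.val / 2 := ZMod.val_cast_of_lt (by omega)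
    have hbase : k = ((k.val : ℕ) : ZMod (2 * n)) := by
      rw [ZMod.natCast_val, ZMod.cast_id]
    rcases Nat.even_or_odd k.val with he | ho
    · left
      simp only [hιdef, hv]
      have h4 : k.val = 2 * (k.val / 2) := by
        obtain ⟨m, hm⟩ := he
        omega
      rw [← h4]
      exact hbase
    · right
      simp only [hιdef, hv]
      have h4 : k.val = 2 * (k.val / 2) + 1 := by
        obtain ⟨m, hm⟩ := ho
        omega
      have hc : ((2 * (k.val / 2) : ℕ) : ZMod (2 * n)) + 1
          = ((2 * (k.val / 2) + 1 : ℕ) : ZMod (2 * n)) := by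
        push_cast
        ring
      rw [hc, ← h4]
      exact hbase
  have hidx : ∀ a, ι a + 1 + 1 = ι (a + 1) := by
    intro a
    rw [← hι2 a]
    ring
  have hidxm : ∀ a, ι a - 1 = ι (a - 1) + 1 := by
    intro a
    have h := hι2 (a - 1)
    rw [show a - 1 + 1 = a by ring] at h
    rw [← h]
    ring
  -- assemble
  refine ⟨2 * n, w, ⟨by omega, ?_, ?_, ?_⟩, ?_, ?_⟩
  · -- consecutive vertices distinct
    intro k
    obtain ⟨a, rfl | rfl⟩ := hsurj k
    · rw [hwp a, hwq a]
      exact hpq a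
    · rw [hwq a, hidx a, hwp (a + 1)]
      exact hqp a
  · -- consecutive edges meet in common vertex
    intro k
    obtain ⟨a, rfl | rfl⟩ := hsurj k
    · rw [hwp a, hwq a, show ι a + 2 = ι a + 1 + 1 by ring, hidx a, hwp (a + 1)]
      exact hABc a
    · rw [hwq a, show ι a + 1 + 2 = ι (a + 1) + 1 by rw [← hidx a]; ring,
        hidx a, hwp (a + 1), hwq (a + 1)]
      exact hBAc a
  · -- non-consecutive edges disjoint
    intro k j hkj hkj1 hjk1
    obtain ⟨a, rfl | rfl⟩ := hsurj k <;> obtain ⟨b, rfl | rfl⟩ := hsurj j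
    · rw [hwp a, hwq a, hwp b, hwq b]
      exact hAA a b (fun h => hkj (by rw [h]))
    · rw [hwp a, hwq a, hwq b, hidx b, hwp (b + 1)]
      refine hAB a b (fun h => hjk1 (by rw [h])) (fun h => hkj1 ?_)
      rw [h, ← hidx b]
    · rw [hwq a, hidx a, hwp (a + 1), hwp b, hwq b, Set.inter_comm]
      refine hAB b a (fun h => hkj1 (by rw [h])) (fun h => hjk1 ?_)
      rw [h, ← hidx a]
    · rw [hwq a, hidx a, hwp (a + 1), hwq b, hidx b, hwp (b + 1)]
      exact hBB a b (fun h => hkj (by rw [h]))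
  · -- obtuse angles
    intro k
    obtain ⟨a, rfl | rfl⟩ := hsurj k
    · rw [hidxm a, hwq (a - 1), hwp a, hwq a]
      exact hang1 a
    · rw [show ι a + 1 - 1 = ι a by ring, hwp a, hwq a, hidx a, hwp (a + 1)]
      exact hang2 a
  · -- Hausdorff distance
    have hmain : Metric.hausdorffDist (polygonSet v) (polygonSet w) ≤ δ := by
      apply Metric.hausdorffDist_le_of_mem_dist hδ0.le
      · intro x hx
        simp only [polygonSet, Set.mem_iUnion] at hx
        obtain ⟨i, hxi⟩ := hx
        rw [hEeq i] at hxi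
        obtain ⟨s, hs0, hsL, rfl⟩ := seg_param_of_mem (by linarith [hL i]) hxi
        set t := max δ (min s (L i - δ)) with htdef
        have ht1 : δ ≤ t := le_max_left _ _
        have ht2 : t ≤ L i - δ := max_le (by linarith [hδL i]) (min_le_right _ _)
        refine ⟨v i + t • u i, ?_, ?_⟩
        · simp only [polygonSet, Set.mem_iUnion]
          refine ⟨ι i, ?_⟩
          rw [hwp i, hwq i]
          simp only [hpdef, hqdef]
          exact seg_param_mem _ _ ht1 ht2
        · rw [dist_param _ _ _ _ (hu i)]
          rw [abs_le]
          constructor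
          · have h1 : t ≤ max δ s := max_le (le_max_left _ _)
              (le_trans (min_le_left _ _) (le_max_right _ _))
            rcases le_total δ s with h | h
            · have : max δ s = s := max_eq_right h
              rw [this] at h1
              linarith
            · have : max δ s = δ := max_eq_left h
              rw [this] at h1
              linarith
          · have h2 : s - δ ≤ t := by
              refine le_trans ?_ (le_max_right _ _)
              exact le_min (by linarith) (by linarith)
            linarith
      · intro y hy
        simp only [polygonSet, Set.mem_iUnion] at hy
        obtain ⟨k, hyk⟩ := hy
        obtain ⟨a, rfl | rfl⟩ := hsurj k
        · rw [hwp a, hwq a] at hyk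
          refine ⟨y, ?_, by simpa using hδ0.le⟩
          simp only [polygonSet, Set.mem_iUnion]
          exact ⟨a, hAsub a hyk⟩
        · rw [hwq a, hidx a, hwp (a + 1)] at hyk
          refine ⟨v (a + 1), ?_, ?_⟩
          · simp only [polygonSet, Set.mem_iUnion]
            exact ⟨a, right_mem_segment ℝ _ _⟩
          · exact Metric.mem_closedBall.1 (hBsub a hyk)
    linarith
end
end
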